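/- arXiv:1806.01392 — 10 statements merged into one kernel-verified Lean document; each statement's English description precedes it below -/
import Mathlib

section
/- For every natural number N, the limit as c → ∞ of c^N e^{-c} ∑_{k=0}^∞ c^k / (k! (k+1)^N) equals 1. -/
set_option maxHeartbeats 1000000

open Filter Finset Nat

private lemma nat_fact_le (k N : ℕ) : k ! * (k + 1) ^ N ≤ (k + N)! := by
  induction N with
  | zero => simp
  | succ n ih =>
    have h1 : k ! * (k + 1) ^ (n + 1) = (k ! * (k + 1) ^ n) * (k + 1) := by ring
    have h2 : (k + (n + 1))! = (k + n + 1) * (k + n)! := by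
      rw [show k + (n + 1) = (k + n) + 1 by ring, Nat.factorial_succ]
    rw [h1, h2]
    calc (k ! * (k + 1) ^ n) * (k + 1) ≤ (k + n)! * (k + n + 1) :=
          Nat.mul_le_mul ih (by omega)
      _ = (k + n + 1) * (k + n)! := by ring

private lemma nat_fact_ge (k N : ℕ) : (k + N)! ≤ (k + N) ^ N * k ! := by
  induction N with
  | zero => simp
  | succ n ih =>
    have h2 : (k + (n + 1))! = (k + n + 1) * (k + n)! := by
      rw [show k + (n + 1) = (k + n) + 1 by ring, Nat.factorial_succ]
    rw [h2]
    calc (k + n + 1) * (k + n)! ≤ (k + n + 1) * ((k + n) ^ n * k !) :=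
          Nat.mul_le_mul_left _ ih
      _ ≤ (k + n + 1) * ((k + n + 1) ^ n * k !) := by
          exact Nat.mul_le_mul_left _ (Nat.mul_le_mul_right _ (Nat.pow_le_pow_left (by omega) n))
      _ = (k + (n + 1)) ^ (n + 1) * k ! := by ring_nf

private lemma denom_pos (N k : ℕ) : (0:ℝ) < (k ! : ℝ) * ((k : ℝ) + 1) ^ N := by
  positivity

private lemma summable_f (N : ℕ) {c : ℝ} (hc : 0 ≤ c) :
    Summable (fun k : ℕ => c ^ k / ((k ! : ℝ) * ((k : ℝ) + 1) ^ N)) := by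
  refine Summable.of_nonneg_of_le (fun k => by positivity)
    (fun k => ?_) (Real.summable_pow_div_factorial c)
  apply div_le_div_of_nonneg_left (by positivity) (by positivity)
  · have h1 : (1:ℝ) ≤ (k:ℝ) + 1 := le_add_of_nonneg_left (Nat.cast_nonneg k)
    have hp : (1:ℝ) ≤ ((k:ℝ) + 1) ^ N := by
      calc (1:ℝ) = 1 ^ N := (one_pow N).symm
        _ ≤ ((k:ℝ) + 1) ^ N := pow_le_pow_left₀ zero_le_one h1 N
    have hf : (0:ℝ) < (k ! : ℝ) := by exact_mod_cast k.factorial_pos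
    nlinarith

private lemma summable_g (N : ℕ) {c : ℝ} (hc : 0 ≤ c) :
    Summable (fun k : ℕ => c ^ k / ((k + N)! : ℝ)) := by
  refine Summable.of_nonneg_of_le (fun k => by positivity)
    (fun k => ?_) (Real.summable_pow_div_factorial c)
  apply div_le_div_of_nonneg_left (by positivity) (by positivity)
  exact_mod_cast Nat.factorial_le (Nat.le_add_right k N)

private lemma tsum_g (N : ℕ) {c : ℝ} (hc : 0 < c) :
    c ^ N * ∑' k : ℕ, c ^ k / ((k + N)! : ℝ)
      = Real.exp c - ∑ j ∈ range N, c ^ j / (j ! : ℝ) := by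
  have hexp : Real.exp c = ∑' k : ℕ, c ^ k / (k ! : ℝ) := by
    rw [Real.exp_eq_exp_ℝ, NormedSpace.exp_eq_tsum_div]
  have h := Summable.sum_add_tsum_nat_add N (Real.summable_pow_div_factorial c)
  have h2 : (∑' k : ℕ, c ^ (k + N) / ((k + N)! : ℝ))
      = c ^ N * ∑' k : ℕ, c ^ k / ((k + N)! : ℝ) := by
    rw [← tsum_mul_left]
    congr 1; funext k; rw [pow_add]; ring
  rw [hexp, ← h, h2]; ring

private lemma tsum_g_nonneg (N : ℕ) {c : ℝ} (hc : 0 < c) :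
    0 ≤ ∑' k : ℕ, c ^ k / ((k + N)! : ℝ) :=
  tsum_nonneg fun k => by positivity

/-- Lower bound. -/
private lemma lower_bound (N : ℕ) {c : ℝ} (hc : 0 < c) :
    1 - Real.exp (-c) * ∑ j ∈ range N, c ^ j / (j ! : ℝ)
      ≤ c ^ N * Real.exp (-c) *
        ∑' k : ℕ, c ^ k / ((k ! : ℝ) * ((k : ℝ) + 1) ^ N) := by
  have hle : ∑' k : ℕ, c ^ k / ((k + N)! : ℝ)
      ≤ ∑' k : ℕ, c ^ k / ((k ! : ℝ) * ((k : ℝ) + 1) ^ N) := by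
    refine Summable.tsum_le_tsum (fun k => ?_) (summable_g N hc.le) (summable_f N hc.le)
    apply div_le_div_of_nonneg_left (by positivity) (denom_pos N k)
    exact_mod_cast nat_fact_le k N
  have hmul : c ^ N * Real.exp (-c) * ∑' k : ℕ, c ^ k / ((k + N)! : ℝ)
      = 1 - Real.exp (-c) * ∑ j ∈ range N, c ^ j / (j ! : ℝ) := by
    have := tsum_g N hc
    have hre : Real.exp (-c) * Real.exp c = 1 := by
      rw [← Real.exp_add]; simp
    calc c ^ N * Real.exp (-c) * ∑' k : ℕ, c ^ k / ((k + N)! : ℝ)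
        = Real.exp (-c) * (c ^ N * ∑' k : ℕ, c ^ k / ((k + N)! : ℝ)) := by ring
      _ = Real.exp (-c) * (Real.exp c - ∑ j ∈ range N, c ^ j / (j ! : ℝ)) := by rw [this]
      _ = 1 - Real.exp (-c) * ∑ j ∈ range N, c ^ j / (j ! : ℝ) := by
          rw [mul_sub, hre]
  rw [← hmul]
  have : (0:ℝ) ≤ c ^ N * Real.exp (-c) := by positivity
  exact mul_le_mul_of_nonneg_left hle this

/-- Upper bound. -/
private lemma upper_bound (N : ℕ) (hN : 1 ≤ N) (K : ℕ) {c : ℝ} (hc : 0 < c) :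
    c ^ N * Real.exp (-c) *
        ∑' k : ℕ, c ^ k / ((k ! : ℝ) * ((k : ℝ) + 1) ^ N)
      ≤ c ^ N * Real.exp (-c) *
          (∑ k ∈ range K, c ^ k / ((k ! : ℝ) * ((k : ℝ) + 1) ^ N))
        + (((K : ℝ) + N) / ((K : ℝ) + 1)) ^ N := by
  set A : ℝ := (((K : ℝ) + N) / ((K : ℝ) + 1)) ^ N with hA
  have hA0 : 0 ≤ A := by positivity
  -- termwise bound for k ≥ K
  have hterm : ∀ k : ℕ, K ≤ k →
      c ^ k / ((k ! : ℝ) * ((k : ℝ) + 1) ^ N) ≤ A * (c ^ k / ((k + N)! : ℝ)) := by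
    intro k hk
    have hbase : (k : ℝ) + N ≤ (((K : ℝ) + N) / ((K : ℝ) + 1)) * ((k : ℝ) + 1) := by
      rw [div_mul_eq_mul_div, le_div_iff₀ (by positivity)]
      have hk' : (K : ℝ) ≤ (k : ℝ) := Nat.cast_le.2 hk
      have hN' : (1 : ℝ) ≤ (N : ℝ) := by exact_mod_cast hN
      nlinarith
    have hpow : ((k : ℝ) + N) ^ N ≤ A * ((k : ℝ) + 1) ^ N := by
      have := pow_le_pow_left₀ (by positivity) hbase N
      calc ((k : ℝ) + N) ^ N ≤ ((((K:ℝ)+N)/((K:ℝ)+1)) * ((k:ℝ)+1)) ^ N := this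
        _ = A * ((k : ℝ) + 1) ^ N := by rw [mul_pow]
    have hfact : ((k + N)! : ℝ) ≤ ((k : ℝ) + N) ^ N * (k ! : ℝ) := by
      have := nat_fact_ge k N
      calc ((k + N)! : ℝ) ≤ (((k + N) ^ N * k ! : ℕ) : ℝ) := by exact_mod_cast this
        _ = ((k : ℝ) + N) ^ N * (k ! : ℝ) := by push_cast; ring
    have hfk : ((k + N)! : ℝ) ≤ A * ((k ! : ℝ) * ((k : ℝ) + 1) ^ N) := by
      calc ((k + N)! : ℝ) ≤ ((k : ℝ) + N) ^ N * (k ! : ℝ) := hfact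
        _ ≤ (A * ((k : ℝ) + 1) ^ N) * (k ! : ℝ) := by
            exact mul_le_mul_of_nonneg_right hpow (by positivity)
        _ = A * ((k ! : ℝ) * ((k : ℝ) + 1) ^ N) := by ring
    have hfp : (0:ℝ) < ((k + N)! : ℝ) := by exact_mod_cast (k + N).factorial_pos
    rw [← mul_div_assoc, div_le_div_iff₀ (denom_pos N k) hfp]
    calc c ^ k * ((k + N)! : ℝ) ≤ c ^ k * (A * ((k ! : ℝ) * ((k : ℝ) + 1) ^ N)) :=
          mul_le_mul_of_nonneg_left hfk (by positivity)
      _ = A * c ^ k * ((k ! : ℝ) * ((k : ℝ) + 1) ^ N) := by ring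
  -- split the sum
  have hsplit := Summable.sum_add_tsum_nat_add K (summable_f N hc.le)
  have htail : (∑' k : ℕ, c ^ (k + K) / (((k + K)! : ℝ) * (((k + K : ℕ) : ℝ) + 1) ^ N))
      ≤ A * ∑' k : ℕ, c ^ k / ((k + N)! : ℝ) := by
    have h1 : (∑' k : ℕ, c ^ (k + K) / (((k + K)! : ℝ) * (((k + K : ℕ) : ℝ) + 1) ^ N))
        ≤ ∑' k : ℕ, A * (c ^ (k + K) / (((k + K) + N)! : ℝ)) := by
      refine Summable.tsum_le_tsum (fun k => ?_) ?_ ?_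
      · exact hterm (k + K) (Nat.le_add_left K k)
      · exact (summable_nat_add_iff K).2 (summable_f N hc.le)
      · exact (Summable.mul_left A ((summable_nat_add_iff K).2 (summable_g N hc.le)))
    have h2 : (∑' k : ℕ, A * (c ^ (k + K) / (((k + K) + N)! : ℝ)))
        = A * ∑' k : ℕ, (fun m : ℕ => c ^ m / ((m + N)! : ℝ)) (k + K) := by
      rw [tsum_mul_left]
    have h3 : (∑' k : ℕ, (fun m : ℕ => c ^ m / ((m + N)! : ℝ)) (k + K))
        ≤ ∑' m : ℕ, c ^ m / ((m + N)! : ℝ) := by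
      have hs := Summable.sum_add_tsum_nat_add K (summable_g N hc.le)
      have hhead : 0 ≤ ∑ m ∈ range K, c ^ m / ((m + N)! : ℝ) :=
        Finset.sum_nonneg fun m _ => by positivity
      linarith [hs]
    calc (∑' k : ℕ, c ^ (k + K) / (((k + K)! : ℝ) * (((k + K : ℕ) : ℝ) + 1) ^ N))
        ≤ ∑' k : ℕ, A * (c ^ (k + K) / (((k + K) + N)! : ℝ)) := h1
      _ = A * ∑' k : ℕ, (fun m : ℕ => c ^ m / ((m + N)! : ℝ)) (k + K) := h2
      _ ≤ A * ∑' m : ℕ, c ^ m / ((m + N)! : ℝ) := mul_le_mul_of_nonneg_left h3 hA0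
  have hS : (∑' k : ℕ, c ^ k / ((k ! : ℝ) * ((k : ℝ) + 1) ^ N))
      ≤ (∑ k ∈ range K, c ^ k / ((k ! : ℝ) * ((k : ℝ) + 1) ^ N))
        + A * ∑' k : ℕ, c ^ k / ((k + N)! : ℝ) := by
    rw [← hsplit]
    exact add_le_add_right htail _
  have hcN : (0:ℝ) ≤ c ^ N * Real.exp (-c) := by positivity
  have := mul_le_mul_of_nonneg_left hS hcN
  have hlast : c ^ N * Real.exp (-c) * (A * ∑' k : ℕ, c ^ k / ((k + N)! : ℝ)) ≤ A := by
    have hid := tsum_g N hc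
    have hpart : 0 ≤ ∑ j ∈ range N, c ^ j / (j ! : ℝ) :=
      Finset.sum_nonneg fun j _ => by positivity
    have hre : Real.exp (-c) * Real.exp c = 1 := by rw [← Real.exp_add]; simp
    have : c ^ N * Real.exp (-c) * (A * ∑' k : ℕ, c ^ k / ((k + N)! : ℝ))
        = A * (Real.exp (-c) * (c ^ N * ∑' k : ℕ, c ^ k / ((k + N)! : ℝ))) := by ring
    rw [this, hid]
    have hexp_pos : 0 < Real.exp (-c) := Real.exp_pos _
    calc A * (Real.exp (-c) * (Real.exp c - ∑ j ∈ range N, c ^ j / (j ! : ℝ)))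
        ≤ A * (Real.exp (-c) * Real.exp c) := by
          apply mul_le_mul_of_nonneg_left _ hA0
          apply mul_le_mul_of_nonneg_left _ hexp_pos.le
          linarith
      _ = A := by rw [hre, mul_one]
  calc c ^ N * Real.exp (-c) * ∑' k : ℕ, c ^ k / ((k ! : ℝ) * ((k : ℝ) + 1) ^ N)
      ≤ c ^ N * Real.exp (-c) *
          ((∑ k ∈ range K, c ^ k / ((k ! : ℝ) * ((k : ℝ) + 1) ^ N))
            + A * ∑' k : ℕ, c ^ k / ((k + N)! : ℝ)) := this
    _ = c ^ N * Real.exp (-c) * (∑ k ∈ range K, c ^ k / ((k ! : ℝ) * ((k : ℝ) + 1) ^ N))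
        + c ^ N * Real.exp (-c) * (A * ∑' k : ℕ, c ^ k / ((k + N)! : ℝ)) := by ring
    _ ≤ _ := by linarith [hlast]

private lemma head_tendsto (N K : ℕ) :
    Tendsto (fun c : ℝ => c ^ N * Real.exp (-c) *
      ∑ k ∈ range K, c ^ k / ((k ! : ℝ) * ((k : ℝ) + 1) ^ N)) atTop (nhds 0) := by
  have heq : ∀ c : ℝ, c ^ N * Real.exp (-c) *
      ∑ k ∈ range K, c ^ k / ((k ! : ℝ) * ((k : ℝ) + 1) ^ N)
      = ∑ k ∈ range K, (c ^ (N + k) * Real.exp (-c)) * (1 / ((k ! : ℝ) * ((k : ℝ) + 1) ^ N)) := by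
    intro c
    rw [Finset.mul_sum]
    refine Finset.sum_congr rfl fun k _ => ?_
    rw [pow_add]; ring
  have h : Tendsto (fun c : ℝ => ∑ k ∈ range K,
      (c ^ (N + k) * Real.exp (-c)) * (1 / ((k ! : ℝ) * ((k : ℝ) + 1) ^ N))) atTop
      (nhds (∑ k ∈ range K, (0:ℝ))) := by
    refine tendsto_finset_sum _ fun k _ => ?_
    simpa using (Real.tendsto_pow_mul_exp_neg_atTop_nhds_zero (N + k)).mul_const
      (1 / ((k ! : ℝ) * ((k : ℝ) + 1) ^ N))
  simp only [Finset.sum_const_zero] at h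
  exact h.congr fun c => (heq c).symm

private lemma rho_tendsto (N : ℕ) :
    Tendsto (fun c : ℝ => Real.exp (-c) * ∑ j ∈ range N, c ^ j / (j ! : ℝ))
      atTop (nhds 0) := by
  have heq : ∀ c : ℝ, Real.exp (-c) * ∑ j ∈ range N, c ^ j / (j ! : ℝ)
      = ∑ j ∈ range N, (c ^ j * Real.exp (-c)) * (1 / (j ! : ℝ)) := by
    intro c
    rw [Finset.mul_sum]
    refine Finset.sum_congr rfl fun j _ => ?_
    ring
  have h : Tendsto (fun c : ℝ => ∑ j ∈ range N,
      (c ^ j * Real.exp (-c)) * (1 / (j ! : ℝ))) atTop (nhds (∑ j ∈ range N, (0:ℝ))) := by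
    refine tendsto_finset_sum _ fun j _ => ?_
    simpa using (Real.tendsto_pow_mul_exp_neg_atTop_nhds_zero j).mul_const (1 / (j ! : ℝ))
  simp only [Finset.sum_const_zero] at h
  exact h.congr fun c => (heq c).symm

private lemma A_tendsto (N : ℕ) :
    Tendsto (fun K : ℕ => (((K : ℝ) + N) / ((K : ℝ) + 1)) ^ N) atTop (nhds 1) := by
  have hbase : Tendsto (fun K : ℕ => ((K : ℝ) + N) / ((K : ℝ) + 1)) atTop (nhds 1) := by
    have h1 : ∀ K : ℕ, ((K : ℝ) + N) / ((K : ℝ) + 1) = 1 + ((N : ℝ) - 1) / ((K : ℝ) + 1) := by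
      intro K
      have : ((K : ℝ) + 1) ≠ 0 := by positivity
      field_simp
      ring
    have h2 : Tendsto (fun K : ℕ => ((N : ℝ) - 1) / ((K : ℝ) + 1)) atTop (nhds 0) := by
      have := (tendsto_const_div_atTop_nhds_zero_nat ((N : ℝ) - 1)).comp
        (tendsto_add_atTop_nat 1)
      simpa [Function.comp_def] using this
    have := h2.const_add (1 : ℝ)
    simpa [← h1] using this
  have := hbase.pow N
  simpa using this

theorem limit_cN_exp_sum (N : ℕ) :
    Tendsto (fun c : ℝ => c ^ N * Real.exp (-c) *
      ∑' k : ℕ, c ^ k / ((Nat.factorial k : ℝ) * ((k : ℝ) + 1) ^ N))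
      atTop (nhds 1) := by
  rcases Nat.eq_zero_or_pos N with hN0 | hN
  · subst hN0
    have heq : (fun c : ℝ => c ^ 0 * Real.exp (-c) *
        (∑' k : ℕ, c ^ k / ((Nat.factorial k : ℝ) * ((k : ℝ) + 1) ^ 0)))
        =ᶠ[atTop] (fun _ => (1:ℝ)) := by
      filter_upwards [eventually_gt_atTop (0:ℝ)] with c hc
      have : (∑' k : ℕ, c ^ k / ((Nat.factorial k : ℝ) * ((k : ℝ) + 1) ^ 0)) = Real.exp c := by
        rw [Real.exp_eq_exp_ℝ, NormedSpace.exp_eq_tsum_div]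
        congr 1; funext k; simp
      rw [this]
      simp [← Real.exp_add]
    exact Tendsto.congr' heq.symm tendsto_const_nhds
  · rw [Metric.tendsto_atTop]
    intro ε hε
    -- choose K with A K < 1 + ε/2
    have hA := A_tendsto N
    have : ∀ᶠ K : ℕ in atTop, (((K : ℝ) + N) / ((K : ℝ) + 1)) ^ N < 1 + ε / 2 := by
      have := hA.eventually (eventually_lt_nhds (by linarith : (1:ℝ) < 1 + ε / 2))
      exact this
    obtain ⟨K, hK⟩ := this.exists
    -- eventual bounds in c
    have hhead := (head_tendsto N K).eventually (eventually_abs_sub_lt 0 (by linarith : (0:ℝ) < ε / 2))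
    have hrho := (rho_tendsto N).eventually (eventually_abs_sub_lt 0 hε)
    have hev : ∀ᶠ c : ℝ in atTop, |c ^ N * Real.exp (-c) *
        (∑' k : ℕ, c ^ k / ((Nat.factorial k : ℝ) * ((k : ℝ) + 1) ^ N)) - 1| < ε := by
      filter_upwards [eventually_gt_atTop (0:ℝ), hhead, hrho] with c hc hh hr
      have hlow := lower_bound N hc
      have hup := upper_bound N hN K hc
      rw [abs_lt]
      constructor
      · have : Real.exp (-c) * ∑ j ∈ range N, c ^ j / (j ! : ℝ) < ε := by
          have h0 : 0 ≤ Real.exp (-c) * ∑ j ∈ range N, c ^ j / (j ! : ℝ) := by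
            have : 0 ≤ ∑ j ∈ range N, c ^ j / (j ! : ℝ) :=
              Finset.sum_nonneg fun j _ => by positivity
            positivity
          rw [sub_zero] at hr
          calc Real.exp (-c) * ∑ j ∈ range N, c ^ j / (j ! : ℝ)
              ≤ |Real.exp (-c) * ∑ j ∈ range N, c ^ j / (j ! : ℝ)| := le_abs_self _
            _ < ε := hr
        linarith
      · have hh' : c ^ N * Real.exp (-c) *
            (∑ k ∈ range K, c ^ k / ((k ! : ℝ) * ((k : ℝ) + 1) ^ N)) < ε / 2 := by
          rw [sub_zero] at hh
          calc c ^ N * Real.exp (-c) * (∑ k ∈ range K, c ^ k / ((k ! : ℝ) * ((k : ℝ) + 1) ^ N))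
              ≤ |c ^ N * Real.exp (-c) *
                  (∑ k ∈ range K, c ^ k / ((k ! : ℝ) * ((k : ℝ) + 1) ^ N))| := le_abs_self _
            _ < ε / 2 := hh
        linarith
    obtain ⟨M, hM⟩ := hev.exists_forall_of_atTop
    exact ⟨M, fun c hc => by simpa [Real.dist_eq] using hM c hc⟩
end

section
/- If S is a Poisson random variable (representing |S|) with mean c > 0, then E[(c/(1+S) - 1)^2] → 0 as c → ∞. -/
open Filter MeasureTheory ProbabilityTheory

namespace PoissonSqAux

lemma hasSum_exp (c : ℝ) : HasSum (fun n : ℕ => c ^ n / n.factorial) (Real.exp c) := by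
  rw [Real.exp_eq_exp_ℝ]
  exact NormedSpace.expSeries_div_hasSum_exp c

lemma hasSum_poisson_w (c : NNReal) (hc : 0 < (c : ℝ)) (m : ℕ) (w : ℕ → ℝ)
    (hw : ∀ k : ℕ, (((k + m).factorial : ℝ)) * w k = (k.factorial : ℝ)) :
    HasSum (fun k : ℕ => poissonPMFReal c k * w k)
      (Real.exp (-(c : ℝ)) / (c : ℝ) ^ m *
        (Real.exp c - ∑ i ∈ Finset.range m, (c : ℝ) ^ i / i.factorial)) := by
  have h := ((hasSum_nat_add_iff' (f := fun n : ℕ => (c : ℝ) ^ n / n.factorial) m).mpr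
    (hasSum_exp (c : ℝ))).mul_left (Real.exp (-(c : ℝ)) / (c : ℝ) ^ m)
  have he : ∀ k : ℕ,
      Real.exp (-(c : ℝ)) / (c : ℝ) ^ m * ((c : ℝ) ^ (k + m) / ((k + m).factorial : ℝ)) =
        poissonPMFReal c k * w k := by
    intro k
    have hk : ((k.factorial : ℝ)) ≠ 0 := Nat.cast_ne_zero.mpr k.factorial_ne_zero
    have hkm : (((k + m).factorial : ℝ)) ≠ 0 := Nat.cast_ne_zero.mpr (k + m).factorial_ne_zero
    have hwk : w k = (k.factorial : ℝ) / ((k + m).factorial : ℝ) := by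
      rw [eq_div_iff hkm]; linarith [hw k]
    rw [poissonPMFReal, hwk, pow_add]
    field_simp
  have hfun : (fun k : ℕ => poissonPMFReal c k * w k) =
      fun k : ℕ => Real.exp (-(c : ℝ)) / (c : ℝ) ^ m *
        ((c : ℝ) ^ (k + m) / ((k + m).factorial : ℝ)) := funext fun k => (he k).symm
  rw [hfun]
  exact h

lemma integrable_poisson (c : NNReal) (f : ℕ → ℝ) (C : ℝ) (h : ∀ k, ‖f k‖ ≤ C) :
    Integrable f (poissonMeasure c) :=
  Integrable.mono' (integrable_const C) measurable_from_nat.aestronglyMeasurable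
    (Filter.Eventually.of_forall h)

lemma integral_poisson_eq_tsum (c : NNReal) (f : ℕ → ℝ) (hf : Integrable f (poissonMeasure c)) :
    ∫ k : ℕ, f k ∂(poissonMeasure c) = ∑' k : ℕ, poissonPMFReal c k * f k := by
  rw [integral_poissonMeasure' hf]
  simp only [smul_eq_mul, poissonPMFReal]

lemma key_ineq {x : ℝ} (hx : 1 ≤ x) (c : ℝ) (hc : 0 ≤ c) :
    (c / x - 1) ^ 2 ≤
      c ^ 2 * (x * (x + 1))⁻¹ + 3 * c ^ 2 * (x * (x + 1) * (x + 2))⁻¹ - 2 * c * x⁻¹ + 1 := by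
  have hx0 : (0 : ℝ) < x := by linarith
  have key : (x ^ 2)⁻¹ ≤ (x * (x + 1))⁻¹ + 3 * (x * (x + 1) * (x + 2))⁻¹ := by
    have e : (x * (x + 1))⁻¹ + 3 * (x * (x + 1) * (x + 2))⁻¹ - (x ^ 2)⁻¹ =
        (2 * x - 2) / (x ^ 2 * (x + 1) * (x + 2)) := by
      field_simp
      ring
    have h2 : (0 : ℝ) ≤ (2 * x - 2) / (x ^ 2 * (x + 1) * (x + 2)) :=
      div_nonneg (by linarith) (by positivity)
    linarith
  have expand : (c / x - 1) ^ 2 = c ^ 2 * (x ^ 2)⁻¹ - 2 * c * x⁻¹ + 1 := by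
    field_simp
    ring
  have hmul := mul_le_mul_of_nonneg_left key (sq_nonneg c)
  nlinarith [hmul]

lemma bound_integral (c : NNReal) (hc : 1 ≤ (c : ℝ)) :
    ∫ k : ℕ, ((c : ℝ) / (1 + (k : ℝ)) - 1) ^ 2 ∂(poissonMeasure c) ≤
      Real.exp (-(c : ℝ)) + 3 / (c : ℝ) := by
  have hc0 : (0 : ℝ) < (c : ℝ) := by linarith
  set w1 : ℕ → ℝ := fun k => (1 + (k : ℝ))⁻¹ with hw1def
  set w2 : ℕ → ℝ := fun k => ((1 + (k : ℝ)) * (2 + (k : ℝ)))⁻¹ with hw2def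
  set w3 : ℕ → ℝ := fun k => ((1 + (k : ℝ)) * (2 + (k : ℝ)) * (3 + (k : ℝ)))⁻¹ with hw3def
  -- HasSum facts
  have h1 : HasSum (fun k : ℕ => poissonPMFReal c k * w1 k)
      (Real.exp (-(c : ℝ)) / (c : ℝ) ^ 1 * (Real.exp c - 1)) := by
    have := hasSum_poisson_w c hc0 1 w1 ?_
    · simpa using this
    · intro k
      have hk : (0:ℝ) < 1 + (k : ℝ) := by positivity
      rw [hw1def]
      push_cast [Nat.factorial_succ]
      field_simp
      ring
  have h2 : HasSum (fun k : ℕ => poissonPMFReal c k * w2 k)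
      (Real.exp (-(c : ℝ)) / (c : ℝ) ^ 2 * (Real.exp c - (1 + (c : ℝ)))) := by
    have := hasSum_poisson_w c hc0 2 w2 ?_
    · have hs : ∑ i ∈ Finset.range 2, (c : ℝ) ^ i / i.factorial = 1 + (c : ℝ) := by
        simp [Finset.sum_range_succ]
      rwa [hs] at this
    · intro k
      have hk : (0:ℝ) < (1 + (k : ℝ)) * (2 + (k : ℝ)) := by positivity
      rw [hw2def]
      have : ((k + 2).factorial : ℝ) = (1 + (k:ℝ)) * (2 + (k:ℝ)) * (k.factorial : ℝ) := by
        push_cast [Nat.factorial_succ]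
        ring
      rw [this]
      field_simp
  have h3 : HasSum (fun k : ℕ => poissonPMFReal c k * w3 k)
      (Real.exp (-(c : ℝ)) / (c : ℝ) ^ 3 *
        (Real.exp c - (1 + (c : ℝ) + (c : ℝ) ^ 2 / 2))) := by
    have := hasSum_poisson_w c hc0 3 w3 ?_
    · have hs : ∑ i ∈ Finset.range 3, (c : ℝ) ^ i / i.factorial =
          1 + (c : ℝ) + (c : ℝ) ^ 2 / 2 := by
        simp [Finset.sum_range_succ]
      rwa [hs] at this
    · intro k
      have hk : (0:ℝ) < (1 + (k:ℝ)) * (2 + (k:ℝ)) * (3 + (k:ℝ)) := by positivity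
      rw [hw3def]
      have : ((k + 3).factorial : ℝ) =
          (1 + (k:ℝ)) * (2 + (k:ℝ)) * (3 + (k:ℝ)) * (k.factorial : ℝ) := by
        push_cast [Nat.factorial_succ]
        ring
      rw [this]
      field_simp
  have hp : HasSum (fun k : ℕ => poissonPMFReal c k) 1 := poissonPMFRealSum c
  -- the dominating function g
  set g : ℕ → ℝ := fun k =>
    (c : ℝ) ^ 2 * w2 k + 3 * (c : ℝ) ^ 2 * w3 k - 2 * (c : ℝ) * w1 k + 1 with hgdef
  -- pointwise bound
  have hpt : ∀ k : ℕ, ((c : ℝ) / (1 + (k : ℝ)) - 1) ^ 2 ≤ g k := by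
    intro k
    have hx : (1 : ℝ) ≤ 1 + (k : ℝ) := by linarith [Nat.cast_nonneg (α := ℝ) k]
    have := key_ineq hx (c : ℝ) hc0.le
    have e2 : (2 : ℝ) + (k : ℝ) = (1 + (k : ℝ)) + 1 := by ring
    have e3 : (3 : ℝ) + (k : ℝ) = (1 + (k : ℝ)) + 2 := by ring
    rw [hgdef, hw1def, hw2def, hw3def]
    simp only [e2, e3]
    exact this
  -- integrability
  have hfint : Integrable (fun k : ℕ => ((c : ℝ) / (1 + (k : ℝ)) - 1) ^ 2) (poissonMeasure c) := by
    apply integrable_poisson c _ (((c : ℝ) + 1) ^ 2)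
    intro k
    rw [Real.norm_eq_abs, abs_of_nonneg (sq_nonneg _)]
    have hx : (1 : ℝ) ≤ 1 + (k : ℝ) := by linarith [Nat.cast_nonneg (α := ℝ) k]
    have ht0 : (0 : ℝ) ≤ (c : ℝ) / (1 + (k : ℝ)) := by positivity
    have ht1 : (c : ℝ) / (1 + (k : ℝ)) ≤ (c : ℝ) := div_le_self hc0.le hx
    nlinarith
  have hw1b : ∀ k : ℕ, ‖w1 k‖ ≤ 1 := by
    intro k
    rw [hw1def, Real.norm_eq_abs, abs_of_nonneg (by positivity)]
    rw [inv_le_one_iff₀]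
    right; push_cast; linarith [Nat.cast_nonneg (α := ℝ) k]
  have hw2b : ∀ k : ℕ, ‖w2 k‖ ≤ 1 := by
    intro k
    rw [hw2def, Real.norm_eq_abs, abs_of_nonneg (by positivity)]
    rw [inv_le_one_iff₀]
    right
    have hk : (0:ℝ) ≤ (k:ℝ) := Nat.cast_nonneg k
    nlinarith [hk, mul_nonneg hk hk]
  have hw3b : ∀ k : ℕ, ‖w3 k‖ ≤ 1 := by
    intro k
    rw [hw3def, Real.norm_eq_abs, abs_of_nonneg (by positivity)]
    rw [inv_le_one_iff₀]
    right
    have hk : (0:ℝ) ≤ (k:ℝ) := Nat.cast_nonneg k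
    nlinarith [hk, mul_nonneg hk hk, mul_nonneg (mul_nonneg hk hk) hk]
  have hw1int : Integrable w1 (poissonMeasure c) := integrable_poisson c w1 1 hw1b
  have hw2int : Integrable w2 (poissonMeasure c) := integrable_poisson c w2 1 hw2b
  have hw3int : Integrable w3 (poissonMeasure c) := integrable_poisson c w3 1 hw3b
  have hgint : Integrable g (poissonMeasure c) := by
    rw [hgdef]
    exact ((((hw2int.const_mul _).add (hw3int.const_mul _)).sub
      (hw1int.const_mul _)).add (integrable_const 1))
  -- integral of g
  have hgsum : HasSum (fun k : ℕ => poissonPMFReal c k * g k)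
      ((c : ℝ) ^ 2 * (Real.exp (-(c : ℝ)) / (c : ℝ) ^ 2 * (Real.exp c - (1 + (c : ℝ)))) +
        3 * (c : ℝ) ^ 2 * (Real.exp (-(c : ℝ)) / (c : ℝ) ^ 3 *
          (Real.exp c - (1 + (c : ℝ) + (c : ℝ) ^ 2 / 2))) -
        2 * (c : ℝ) * (Real.exp (-(c : ℝ)) / (c : ℝ) ^ 1 * (Real.exp c - 1)) + 1) := by
    have hcomb := (((h2.mul_left ((c : ℝ) ^ 2)).add (h3.mul_left (3 * (c : ℝ) ^ 2))).sub
      (h1.mul_left (2 * (c : ℝ)))).add hp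
    have hfun : (fun k : ℕ => poissonPMFReal c k * g k) =
        fun k : ℕ => ((c : ℝ) ^ 2 * (poissonPMFReal c k * w2 k) +
          3 * (c : ℝ) ^ 2 * (poissonPMFReal c k * w3 k) -
          2 * (c : ℝ) * (poissonPMFReal c k * w1 k)) + poissonPMFReal c k := by
      funext k; rw [hgdef]; ring
    rw [hfun]
    exact hcomb
  have hIg : ∫ k : ℕ, g k ∂(poissonMeasure c) =
      (c : ℝ) ^ 2 * (Real.exp (-(c : ℝ)) / (c : ℝ) ^ 2 * (Real.exp c - (1 + (c : ℝ)))) +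
        3 * (c : ℝ) ^ 2 * (Real.exp (-(c : ℝ)) / (c : ℝ) ^ 3 *
          (Real.exp c - (1 + (c : ℝ) + (c : ℝ) ^ 2 / 2))) -
        2 * (c : ℝ) * (Real.exp (-(c : ℝ)) / (c : ℝ) ^ 1 * (Real.exp c - 1)) + 1 := by
    rw [integral_poisson_eq_tsum c g hgint, hgsum.tsum_eq]
  -- compare integrals
  have hle : ∫ k : ℕ, ((c : ℝ) / (1 + (k : ℝ)) - 1) ^ 2 ∂(poissonMeasure c) ≤
      ∫ k : ℕ, g k ∂(poissonMeasure c) :=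
    integral_mono hfint hgint hpt
  rw [hIg] at hle
  refine hle.trans ?_
  -- final arithmetic bound
  rw [Real.exp_neg]
  have hu : (0 : ℝ) < Real.exp (c : ℝ) := Real.exp_pos _
  set u : ℝ := Real.exp (c : ℝ) with hudef
  have hid : u⁻¹ + 3 / (c : ℝ) -
      ((c : ℝ) ^ 2 * (u⁻¹ / (c : ℝ) ^ 2 * (u - (1 + (c : ℝ)))) +
        3 * (c : ℝ) ^ 2 * (u⁻¹ / (c : ℝ) ^ 3 * (u - (1 + (c : ℝ) + (c : ℝ) ^ 2 / 2))) -
        2 * (c : ℝ) * (u⁻¹ / (c : ℝ) ^ 1 * (u - 1)) + 1) =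
      (c : ℝ) * u⁻¹ + 3 / (c : ℝ) * (u⁻¹ + (c : ℝ) * u⁻¹ + (c : ℝ) ^ 2 * u⁻¹ / 2) := by
    field_simp
    ring
  have hpos : (0 : ℝ) ≤
      (c : ℝ) * u⁻¹ + 3 / (c : ℝ) * (u⁻¹ + (c : ℝ) * u⁻¹ + (c : ℝ) ^ 2 * u⁻¹ / 2) := by
    positivity
  linarith

end PoissonSqAux

theorem poisson_expectation_sq_tendsto_zero :
    Tendsto (fun c : NNReal =>
        ∫ k : ℕ, ((c : ℝ) / (1 + (k : ℝ)) - 1) ^ 2 ∂(poissonMeasure c))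
      atTop (nhds 0) := by
  have hcoe : Tendsto (fun c : NNReal => (c : ℝ)) atTop atTop :=
    NNReal.tendsto_coe_atTop.mpr tendsto_id
  have hlim : Tendsto (fun c : NNReal => Real.exp (-(c : ℝ)) + 3 / (c : ℝ)) atTop (nhds 0) := by
    have h1 : Tendsto (fun c : NNReal => Real.exp (-(c : ℝ))) atTop (nhds 0) :=
      Real.tendsto_exp_neg_atTop_nhds_zero.comp hcoe
    have h2 : Tendsto (fun c : NNReal => 3 / (c : ℝ)) atTop (nhds 0) :=
      Tendsto.div_atTop tendsto_const_nhds hcoe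
    simpa using h1.add h2
  refine tendsto_of_tendsto_of_tendsto_of_le_of_le' tendsto_const_nhds hlim ?_ ?_
  · exact Filter.Eventually.of_forall fun c =>
      integral_nonneg fun k => sq_nonneg _
  · filter_upwards [eventually_ge_atTop (1 : NNReal)] with c hc
    exact PoissonSqAux.bound_integral c (by exact_mod_cast hc)
end

section
/- If S is a Poisson random variable with mean c > 0, then E[(c^2/(1+S)^2 - 1)^2] → 0 as c → ∞. -/
open Filter MeasureTheory ProbabilityTheory

-- integrability of bounded functions on ℕ wrt a finite measure
lemma aux_integrable_of_bdd {μ : Measure ℕ} [IsFiniteMeasure μ] {f : ℕ → ℝ} {C : ℝ}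
    (h : ∀ k, |f k| ≤ C) : Integrable f μ := by
  refine (integrable_const C).mono' ((measurable_of_countable f).aestronglyMeasurable) ?_
  exact ae_of_all _ fun k => by simpa using h k

lemma aux_hasSum (c : NNReal) (m : ℕ) :
    HasSum (fun k : ℕ => poissonPMFReal c k * ((c : ℝ) ^ m * (Nat.factorial k : ℝ) /
        (Nat.factorial (k + m) : ℝ)))
      (Real.exp (-(c : ℝ)) * (Real.exp c - ∑ j ∈ Finset.range m, (c : ℝ) ^ j / (Nat.factorial j : ℝ))) := by
  have h1 : HasSum (fun n : ℕ => (c : ℝ) ^ n / (Nat.factorial n : ℝ)) (Real.exp c) := by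
    rw [Real.exp_eq_exp_ℝ]
    exact NormedSpace.expSeries_div_hasSum_exp (c : ℝ)
  have h2 : HasSum (fun k : ℕ => (c : ℝ) ^ (k + m) / (Nat.factorial (k + m) : ℝ))
      (Real.exp c - ∑ j ∈ Finset.range m, (c : ℝ) ^ j / (Nat.factorial j : ℝ)) := by
    rw [hasSum_nat_add_iff (f := fun n : ℕ => (c : ℝ) ^ n / (Nat.factorial n : ℝ)) m]
    simpa using h1
  have h3 := h2.mul_left (Real.exp (-(c : ℝ)))
  refine h3.congr_fun fun k => ?_
  unfold poissonPMFReal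
  have hk : (Nat.factorial k : ℝ) ≠ 0 := Nat.cast_ne_zero.mpr (Nat.factorial_ne_zero k)
  have hkm : (Nat.factorial (k + m) : ℝ) ≠ 0 := Nat.cast_ne_zero.mpr (Nat.factorial_ne_zero _)
  field_simp
  ring

lemma aux_tm_bdd (c : NNReal) (m k : ℕ) :
    |(c : ℝ) ^ m * (Nat.factorial k : ℝ) / (Nat.factorial (k + m) : ℝ)| ≤ (c : ℝ) ^ m := by
  have h1 : (0:ℝ) < (Nat.factorial (k + m) : ℝ) := by positivity
  have h2 : (Nat.factorial k : ℝ) ≤ (Nat.factorial (k + m) : ℝ) := by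
    exact_mod_cast Nat.factorial_le (Nat.le_add_right k m)
  have h0 : (0:ℝ) ≤ (c : ℝ) ^ m := by positivity
  rw [abs_of_nonneg (by positivity)]
  rw [div_le_iff₀ h1]
  nlinarith [h0]

lemma aux_tm_integrable (c : NNReal) (m : ℕ) :
    Integrable (fun k : ℕ => (c : ℝ) ^ m * (Nat.factorial k : ℝ) / (Nat.factorial (k + m) : ℝ))
      (poissonMeasure c) :=
  aux_integrable_of_bdd (fun k => aux_tm_bdd c m k)

lemma aux_int_tm (c : NNReal) (m : ℕ) :
    ∫ k : ℕ, (c : ℝ) ^ m * (Nat.factorial k : ℝ) / (Nat.factorial (k + m) : ℝ) ∂(poissonMeasure c)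
      = Real.exp (-(c : ℝ)) * (Real.exp c - ∑ j ∈ Finset.range m, (c : ℝ) ^ j / (Nat.factorial j : ℝ)) := by
  rw [integral_countable (aux_tm_integrable c m)]
  rw [← (aux_hasSum c m).tsum_eq]
  congr 1 with k
  have : (poissonMeasure c).real {k} = poissonPMFReal c k := by
    rw [poissonMeasure_real_singleton]; rfl
  rw [this, smul_eq_mul]

lemma aux_pointwise (r n : ℝ) (hr : 1 ≤ r) (hn : 0 ≤ n) :
    (r ^ 2 / (1 + n) ^ 2 - 1) ^ 2 ≤
      r ^ 4 / ((n + 1) * (n + 2) * (n + 3) * (n + 4))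
        + (115 / r) * (r ^ 5 / ((n + 1) * (n + 2) * (n + 3) * (n + 4) * (n + 5)))
        - 2 * (r ^ 2 / ((n + 1) * (n + 2))) + 1 := by
  have hr0 : (0:ℝ) < r := lt_of_lt_of_le one_pos hr
  have h1 : (0:ℝ) < n + 1 := by linarith
  have h2 : (0:ℝ) < n + 2 := by linarith
  have h3 : (0:ℝ) < n + 3 := by linarith
  have h4 : (0:ℝ) < n + 4 := by linarith
  have h5 : (0:ℝ) < n + 5 := by linarith
  have hexp : (r ^ 2 / (1 + n) ^ 2 - 1) ^ 2
      = r ^ 4 / (1 + n) ^ 4 - 2 * (r ^ 2 / (1 + n) ^ 2) + 1 := by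
    have : (1 + n) ≠ 0 := by linarith
    field_simp
    ring
  have hfive : (115 / r) * (r ^ 5 / ((n + 1) * (n + 2) * (n + 3) * (n + 4) * (n + 5)))
      = 115 * (r ^ 4 / ((n + 1) * (n + 2) * (n + 3) * (n + 4) * (n + 5))) := by
    field_simp
  have hkey : 1 / ((1 + n) ^ 4) ≤ 1 / ((n + 1) * (n + 2) * (n + 3) * (n + 4))
      + 115 / ((n + 1) * (n + 2) * (n + 3) * (n + 4) * (n + 5)) := by
    have hid : 1 / ((n + 1) * (n + 2) * (n + 3) * (n + 4))
        + 115 / ((n + 1) * (n + 2) * (n + 3) * (n + 4) * (n + 5)) - 1 / ((1 + n) ^ 4)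
        = ((n + 1) ^ 3 * (n + 120) - (n + 2) * (n + 3) * (n + 4) * (n + 5))
          / ((n + 1) ^ 4 * ((n + 2) * (n + 3) * (n + 4) * (n + 5))) := by
      field_simp
      ring
    have hnum : (0:ℝ) ≤ (n + 1) ^ 3 * (n + 120) - (n + 2) * (n + 3) * (n + 4) * (n + 5) := by
      nlinarith [mul_nonneg (mul_nonneg hn hn) hn, mul_nonneg hn hn, hn]
    have := div_nonneg hnum (by positivity :
      (0:ℝ) ≤ (n + 1) ^ 4 * ((n + 2) * (n + 3) * (n + 4) * (n + 5)))
    linarith [hid ▸ this]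
  have hA : r ^ 4 / (1 + n) ^ 4 ≤ r ^ 4 / ((n + 1) * (n + 2) * (n + 3) * (n + 4))
      + 115 * (r ^ 4 / ((n + 1) * (n + 2) * (n + 3) * (n + 4) * (n + 5))) := by
    have h := mul_le_mul_of_nonneg_left hkey (by positivity : (0:ℝ) ≤ r ^ 4)
    calc r ^ 4 / (1 + n) ^ 4 = r ^ 4 * (1 / ((1 + n) ^ 4)) := by ring
    _ ≤ r ^ 4 * (1 / ((n + 1) * (n + 2) * (n + 3) * (n + 4))
        + 115 / ((n + 1) * (n + 2) * (n + 3) * (n + 4) * (n + 5))) := h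
    _ = r ^ 4 / ((n + 1) * (n + 2) * (n + 3) * (n + 4))
        + 115 * (r ^ 4 / ((n + 1) * (n + 2) * (n + 3) * (n + 4) * (n + 5))) := by ring
  have hB : r ^ 2 / ((n + 1) * (n + 2)) ≤ r ^ 2 / (1 + n) ^ 2 := by
    have hle : (1 + n) ^ 2 ≤ (n + 1) * (n + 2) := by nlinarith
    exact div_le_div_of_nonneg_left (by positivity) (by positivity) hle
  rw [hexp, hfive]
  linarith

lemma aux_fact2 (k : ℕ) : ((Nat.factorial (k + 2)) : ℝ)
    = (Nat.factorial k : ℝ) * (((k:ℝ) + 1) * ((k:ℝ) + 2)) := by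
  rw [show k + 2 = (k + 1) + 1 by omega, Nat.factorial_succ, Nat.factorial_succ]
  push_cast; ring

lemma aux_fact4 (k : ℕ) : ((Nat.factorial (k + 4)) : ℝ)
    = (Nat.factorial k : ℝ) * (((k:ℝ) + 1) * ((k:ℝ) + 2) * ((k:ℝ) + 3) * ((k:ℝ) + 4)) := by
  rw [show k + 4 = ((k + 2) + 1) + 1 by omega, Nat.factorial_succ, Nat.factorial_succ]
  push_cast
  rw [aux_fact2]
  ring

lemma aux_fact5 (k : ℕ) : ((Nat.factorial (k + 5)) : ℝ)
    = (Nat.factorial k : ℝ)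
      * (((k:ℝ) + 1) * ((k:ℝ) + 2) * ((k:ℝ) + 3) * ((k:ℝ) + 4) * ((k:ℝ) + 5)) := by
  rw [show k + 5 = (k + 4) + 1 by omega, Nat.factorial_succ]
  push_cast
  rw [aux_fact4]
  ring

lemma aux_tm_eq (c : NNReal) (k m : ℕ) (P : ℝ) (hP : ((Nat.factorial (k + m)) : ℝ)
    = (Nat.factorial k : ℝ) * P) (hP0 : P ≠ 0) :
    (c : ℝ) ^ m * (Nat.factorial k : ℝ) / (Nat.factorial (k + m) : ℝ) = (c : ℝ) ^ m / P := by
  have hk : (Nat.factorial k : ℝ) ≠ 0 := Nat.cast_ne_zero.mpr (Nat.factorial_ne_zero k)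
  rw [hP]
  field_simp

lemma aux_main_bound (c : NNReal) (hc : 1 ≤ (c : ℝ)) :
    ∫ k : ℕ, ((c : ℝ) ^ 2 / (1 + (k : ℝ)) ^ 2 - 1) ^ 2 ∂(poissonMeasure c)
      ≤ 115 / (c : ℝ) + 2 * Real.exp (-(c : ℝ)) * (1 + (c : ℝ)) := by
  set r : ℝ := (c : ℝ) with hr
  have hr0 : (0:ℝ) < r := lt_of_lt_of_le one_pos hc
  set μ := poissonMeasure c with hμ
  set t : ℕ → ℕ → ℝ := fun m k => r ^ m * (Nat.factorial k : ℝ) / (Nat.factorial (k + m) : ℝ)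
    with ht
  -- integrability of the main integrand
  have hint_g : Integrable (fun k : ℕ => (r ^ 2 / (1 + (k : ℝ)) ^ 2 - 1) ^ 2) μ := by
    apply aux_integrable_of_bdd (C := (r ^ 2 + 1) ^ 2)
    intro k
    have hkp : (1:ℝ) ≤ (1 + (k : ℝ)) ^ 2 := by nlinarith [Nat.cast_nonneg (α := ℝ) k]
    have ha0 : (0:ℝ) ≤ r ^ 2 / (1 + (k : ℝ)) ^ 2 := by positivity
    have ha1 : r ^ 2 / (1 + (k : ℝ)) ^ 2 ≤ r ^ 2 := by
      rw [div_le_iff₀ (by linarith)]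
      nlinarith [sq_nonneg r]
    rw [abs_of_nonneg (sq_nonneg _)]
    nlinarith
  have hint_h : Integrable (fun k : ℕ => t 4 k + (115 / r) * t 5 k - 2 * t 2 k + 1) μ := by
    exact ((((aux_tm_integrable c 4).add ((aux_tm_integrable c 5).const_mul _)).sub
      ((aux_tm_integrable c 2).const_mul 2)).add (integrable_const 1))
  have step1 : ∫ k : ℕ, (r ^ 2 / (1 + (k : ℝ)) ^ 2 - 1) ^ 2 ∂μ
      ≤ ∫ k : ℕ, (t 4 k + (115 / r) * t 5 k - 2 * t 2 k + 1) ∂μ := by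
    apply integral_mono hint_g hint_h
    intro k
    have n0 : (0:ℝ) ≤ (k : ℝ) := Nat.cast_nonneg k
    have e2 : t 2 k = r ^ 2 / (((k:ℝ) + 1) * ((k:ℝ) + 2)) :=
      aux_tm_eq c k 2 _ (aux_fact2 k) (by positivity)
    have e4 : t 4 k = r ^ 4 / (((k:ℝ) + 1) * ((k:ℝ) + 2) * ((k:ℝ) + 3) * ((k:ℝ) + 4)) :=
      aux_tm_eq c k 4 _ (aux_fact4 k) (by positivity)
    have e5 : t 5 k = r ^ 5 / (((k:ℝ) + 1) * ((k:ℝ) + 2) * ((k:ℝ) + 3) * ((k:ℝ) + 4) * ((k:ℝ) + 5)) :=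
      aux_tm_eq c k 5 _ (aux_fact5 k) (by positivity)
    simp only [e2, e4, e5]
    exact aux_pointwise r (k : ℝ) hc n0
  have hsplit : ∫ k : ℕ, (t 4 k + (115 / r) * t 5 k - 2 * t 2 k + 1) ∂μ
      = (∫ k : ℕ, t 4 k ∂μ) + (115 / r) * (∫ k : ℕ, t 5 k ∂μ)
        - 2 * (∫ k : ℕ, t 2 k ∂μ) + 1 := by
    have hI4 := aux_tm_integrable c 4
    have hI5 := (aux_tm_integrable c 5).const_mul (115 / r)
    have hI2 := (aux_tm_integrable c 2).const_mul (2:ℝ)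
    have e1 : ∫ k : ℕ, (t 4 k + (115 / r) * t 5 k - 2 * t 2 k + 1) ∂μ
        = (∫ k : ℕ, (t 4 k + (115 / r) * t 5 k - 2 * t 2 k) ∂μ) + ∫ _k : ℕ, (1:ℝ) ∂μ :=
      integral_add ((hI4.add hI5).sub hI2) (integrable_const 1)
    have e2 : ∫ k : ℕ, (t 4 k + (115 / r) * t 5 k - 2 * t 2 k) ∂μ
        = (∫ k : ℕ, (t 4 k + (115 / r) * t 5 k) ∂μ) - ∫ k : ℕ, 2 * t 2 k ∂μ :=
      integral_sub (hI4.add hI5) hI2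
    have e3 : ∫ k : ℕ, (t 4 k + (115 / r) * t 5 k) ∂μ
        = (∫ k : ℕ, t 4 k ∂μ) + ∫ k : ℕ, (115 / r) * t 5 k ∂μ := integral_add hI4 hI5
    have e4 : ∫ k : ℕ, (115 / r) * t 5 k ∂μ = (115 / r) * ∫ k : ℕ, t 5 k ∂μ :=
      integral_const_mul _ _
    have e5 : ∫ k : ℕ, 2 * t 2 k ∂μ = 2 * ∫ k : ℕ, t 2 k ∂μ := integral_const_mul _ _
    have e6 : ∫ _k : ℕ, (1:ℝ) ∂μ = 1 := by simp [hμ]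
    rw [e1, e2, e3, e4, e5, e6]
  have hexpinv : Real.exp (-r) * Real.exp r = 1 := by
    rw [← Real.exp_add]; simp
  have hle1 : ∀ m : ℕ, (∫ k : ℕ, t m k ∂μ) ≤ 1 := by
    intro m
    rw [ht, hμ, aux_int_tm c m]
    have hS : (0:ℝ) ≤ ∑ j ∈ Finset.range m, r ^ j / (Nat.factorial j : ℝ) :=
      Finset.sum_nonneg fun j _ => by positivity
    nlinarith [Real.exp_pos (-r), hexpinv]
  have h2eq : (∫ k : ℕ, t 2 k ∂μ) = 1 - Real.exp (-r) * (1 + r) := by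
    rw [ht, hμ, aux_int_tm c 2]
    simp only [Finset.sum_range_succ, Finset.sum_range_zero, Nat.factorial]
    push_cast
    rw [mul_sub]
    rw [hexpinv]
    ring_nf
    rfl
  have h115 : (115 / r) * (∫ k : ℕ, t 5 k ∂μ) ≤ 115 / r := by
    have := mul_le_mul_of_nonneg_left (hle1 5) (by positivity : (0:ℝ) ≤ 115 / r)
    linarith
  calc ∫ k : ℕ, (r ^ 2 / (1 + (k : ℝ)) ^ 2 - 1) ^ 2 ∂μ
      ≤ (∫ k : ℕ, t 4 k ∂μ) + (115 / r) * (∫ k : ℕ, t 5 k ∂μ)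
        - 2 * (∫ k : ℕ, t 2 k ∂μ) + 1 := by rw [← hsplit]; exact step1
    _ ≤ 1 + (115 / r) - 2 * (1 - Real.exp (-r) * (1 + r)) + 1 := by
        rw [h2eq]; linarith [hle1 4, h115]
    _ = 115 / r + 2 * Real.exp (-r) * (1 + r) := by ring

theorem poisson_expectation_sq2_tendsto_zero :
    Tendsto (fun c : NNReal =>
        ∫ k : ℕ, ((c : ℝ) ^ 2 / (1 + (k : ℝ)) ^ 2 - 1) ^ 2 ∂(poissonMeasure c))
      atTop (nhds 0) := by
  have hcoe : Tendsto (fun c : NNReal => (c : ℝ)) atTop atTop :=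
    NNReal.tendsto_coe_atTop.mpr tendsto_id
  have hF : Tendsto (fun x : ℝ => 115 / x + 2 * Real.exp (-x) * (1 + x)) atTop (nhds 0) := by
    have h1 : Tendsto (fun x : ℝ => (115:ℝ) / x) atTop (nhds 0) :=
      tendsto_const_nhds.div_atTop tendsto_id
    have h2 : Tendsto (fun x : ℝ => Real.exp (-x)) atTop (nhds 0) :=
      Real.tendsto_exp_neg_atTop_nhds_zero
    have h3 : Tendsto (fun x : ℝ => x * Real.exp (-x)) atTop (nhds 0) := by
      simpa using Real.tendsto_pow_mul_exp_neg_atTop_nhds_zero 1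
    have h4 := h1.add ((h2.const_mul 2).add (h3.const_mul 2))
    norm_num at h4
    refine h4.congr fun x => ?_
    ring
  have hupper : Tendsto (fun c : NNReal =>
      115 / (c : ℝ) + 2 * Real.exp (-(c : ℝ)) * (1 + (c : ℝ))) atTop (nhds 0) := hF.comp hcoe
  apply tendsto_of_tendsto_of_tendsto_of_le_of_le' tendsto_const_nhds hupper
  · filter_upwards with c
    exact integral_nonneg fun k => sq_nonneg _
  · filter_upwards [eventually_ge_atTop (1 : NNReal)] with c hc
    exact aux_main_bound c (by exact_mod_cast hc)
end

section
/- If S is a Poisson random variable with mean c > 0, then E[(c^2/(1+S)^2 - 1)^4] → 0 as c → ∞. -/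
open Filter MeasureTheory ProbabilityTheory Finset

namespace PoissonAux


noncomputable def p (c : ℝ) (k : ℕ) : ℝ := Real.exp (-c) * c ^ k / (k.factorial : ℝ)

lemma p_nonneg {c : ℝ} (hc : 0 ≤ c) (k : ℕ) : 0 ≤ p c k := by
  unfold p; positivity

lemma hasSum_expSeries (c : ℝ) :
    HasSum (fun k : ℕ => c ^ k / (k.factorial : ℝ)) (Real.exp c) := by
  rw [Real.exp_eq_exp_ℝ]
  exact NormedSpace.expSeries_div_hasSum_exp c

lemma hasSum_p (c : ℝ) : HasSum (fun k => p c k) 1 := by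
  have h := (hasSum_expSeries c).mul_left (Real.exp (-c))
  have he : (fun k : ℕ => p c k) = fun k : ℕ => Real.exp (-c) * (c ^ k / (k.factorial : ℝ)) := by
    funext k; simp [p, mul_div_assoc]
  rw [he]
  simpa [← Real.exp_add] using h

/-- shifted exponential series -/
lemma hasSum_shift (c : ℝ) (n : ℕ) :
    HasSum (fun k : ℕ => c ^ (k + n) / ((k + n).factorial : ℝ))
      (Real.exp c - ∑ j ∈ range n, c ^ j / (j.factorial : ℝ)) :=
  (hasSum_nat_add_iff' n).mpr (hasSum_expSeries c)

noncomputable def Sval (n : ℕ) (c : ℝ) : ℝ :=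
  Real.exp (-c) * (Real.exp c - ∑ j ∈ range n, c ^ j / (j.factorial : ℝ))

lemma hasSum_S (c : ℝ) (n : ℕ) :
    HasSum (fun k : ℕ => Real.exp (-c) * (c ^ (k + n) / ((k + n).factorial : ℝ)))
      (Sval n c) :=
  (hasSum_shift c n).mul_left _

lemma Sval_le_one {n : ℕ} {c : ℝ} (hc : 0 ≤ c) : Sval n c ≤ 1 := by
  have h1 : 0 ≤ ∑ j ∈ range n, c ^ j / (j.factorial : ℝ) := by positivity
  have : Sval n c ≤ Real.exp (-c) * Real.exp c := by
    unfold Sval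
    have := Real.exp_pos (-c)
    nlinarith
  simpa [← Real.exp_add] using this

lemma Sval_tendsto (n : ℕ) : Tendsto (fun c : ℝ => Sval n c) atTop (nhds 1) := by
  have h : ∀ c : ℝ, Sval n c = 1 - ∑ j ∈ range n, (c ^ j * Real.exp (-c)) / (j.factorial : ℝ) := by
    intro c
    unfold Sval
    rw [mul_sub, ← Real.exp_add, neg_add_cancel, Real.exp_zero, Finset.mul_sum]
    congr 1
    apply Finset.sum_congr rfl
    intro j _
    ring
  simp only [h]
  have : Tendsto (fun c : ℝ => ∑ j ∈ range n, (c ^ j * Real.exp (-c)) / (j.factorial : ℝ))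
      atTop (nhds 0) := by
    have := tendsto_finset_sum (range n)
      (fun j _ => ((Real.tendsto_pow_mul_exp_neg_atTop_nhds_zero j).div_const (j.factorial : ℝ)))
    simpa using this
  simpa using tendsto_const_nhds.sub this

/-- the constants -/
def K : ℕ → ℕ
  | 0 => 0
  | n + 1 => n + (n + 1) * K n

lemma key_nat (n k : ℕ) :
    (k + n).factorial * (k + 1) ≤ k.factorial * (k + 1) ^ n * (k + 1 + K n) := by
  induction n with
  | zero => simp [K]
  | succ n ih =>
    have h1 : (k + (n+1)).factorial * (k+1) = (k + n + 1) * ((k + n).factorial * (k+1)) := by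
      rw [show k + (n+1) = (k+n) + 1 by ring, Nat.factorial_succ]; ring
    rw [h1]
    calc (k + n + 1) * ((k + n).factorial * (k+1))
        ≤ (k + n + 1) * (k.factorial * (k + 1) ^ n * (k + 1 + K n)) :=
          Nat.mul_le_mul_left _ ih
      _ ≤ k.factorial * (k + 1) ^ (n+1) * (k + 1 + K (n+1)) := by
          have : (k + n + 1) * (k + 1 + K n) ≤ (k+1) * (k + 1 + K (n+1)) := by
            simp only [K]
            zify
            nlinarith [(show (0:ℤ) ≤ (n:ℤ)*(k:ℤ)*((K n : ℕ):ℤ) by positivity)]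
          calc (k + n + 1) * (k.factorial * (k + 1) ^ n * (k + 1 + K n))
              = k.factorial * (k + 1) ^ n * ((k + n + 1) * (k + 1 + K n)) := by ring
            _ ≤ k.factorial * (k + 1) ^ n * ((k+1) * (k + 1 + K (n+1))) :=
                Nat.mul_le_mul_left _ this
            _ = k.factorial * (k + 1) ^ (n+1) * (k + 1 + K (n+1)) := by ring

lemma fact_upper (n k : ℕ) :
    (k + n + 1).factorial ≤ k.factorial * (k + 1) ^ n * (k + n + 1 + K n * (n + 1)) := by
  have hpos : 0 < k + 1 := Nat.succ_pos k
  apply Nat.le_of_mul_le_mul_right _ hpos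
  have h1 : (k + n + 1).factorial * (k+1) = (k + n + 1) * ((k + n).factorial * (k+1)) := by
    rw [Nat.factorial_succ]; ring
  rw [h1]
  calc (k + n + 1) * ((k + n).factorial * (k+1))
      ≤ (k + n + 1) * (k.factorial * (k + 1) ^ n * (k + 1 + K n)) := Nat.mul_le_mul_left _ (key_nat n k)
    _ ≤ k.factorial * (k + 1) ^ n * (k + n + 1 + K n * (n + 1)) * (k+1) := by
        zify
        nlinarith [(show (0:ℤ) ≤ ((k.factorial:ℕ):ℤ)*((k:ℤ)+1)^n*((K n : ℕ):ℤ)*(n:ℤ)*(k:ℤ) by positivity)]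


lemma lower_ptwise {c : ℝ} (hc : 0 ≤ c) (n k : ℕ) :
    Real.exp (-c) * (c ^ (k + n) / ((k + n).factorial : ℝ))
      ≤ p c k * (c ^ n / (1 + (k : ℝ)) ^ n) := by
  have hk : (0:ℝ) < (k.factorial : ℝ) := by exact_mod_cast k.factorial_pos
  have hk1 : (0:ℝ) < (1 + (k:ℝ)) ^ n := by positivity
  have heq : p c k * (c ^ n / (1 + (k : ℝ)) ^ n)
      = Real.exp (-c) * (c ^ (k + n) / ((k.factorial : ℝ) * (1 + (k:ℝ)) ^ n)) := by
    unfold p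
    rw [pow_add]
    field_simp
  rw [heq]
  have harr : (k.factorial : ℝ) * (1 + (k:ℝ)) ^ n ≤ ((k + n).factorial : ℝ) := by
    have := Nat.factorial_mul_pow_le_factorial (m := k) (n := n)
    have h2 : ((k.factorial * (k+1) ^ n : ℕ) : ℝ) ≤ (((k + n).factorial : ℕ) : ℝ) := by
      exact_mod_cast this
    push_cast at h2
    calc (k.factorial : ℝ) * (1 + (k:ℝ)) ^ n = (k.factorial : ℝ) * ((k:ℝ) + 1) ^ n := by ring
      _ ≤ _ := h2
  gcongr

lemma upper_ptwise {c : ℝ} (hc : 0 < c) (n k : ℕ) :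
    p c k * (c ^ n / (1 + (k : ℝ)) ^ n)
      ≤ Real.exp (-c) * (c ^ (k + n) / ((k + n).factorial : ℝ))
        + ((K n * (n+1) : ℕ) / c) *
          (Real.exp (-c) * (c ^ (k + (n+1)) / ((k + (n+1)).factorial : ℝ))) := by
  have hk : (0:ℝ) < (k.factorial : ℝ) := by exact_mod_cast k.factorial_pos
  have hkn : (0:ℝ) < ((k+n).factorial : ℝ) := by exact_mod_cast (k+n).factorial_pos
  have hkn1 : (0:ℝ) < ((k+n+1).factorial : ℝ) := by exact_mod_cast (k+n+1).factorial_pos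
  have hk1 : (0:ℝ) < (1 + (k:ℝ)) ^ n := by positivity
  have hfe : ((k+n+1).factorial : ℝ) = ((k+n).factorial : ℝ) * ((k:ℝ) + n + 1) := by
    rw [Nat.factorial_succ]; push_cast; ring
  have hfu : ((k+n+1).factorial : ℝ)
      ≤ (k.factorial : ℝ) * (1 + (k:ℝ)) ^ n * ((k:ℝ) + n + 1 + (K n : ℝ) * (n + 1)) := by
    have := fact_upper n k
    have h2 : (((k+n+1).factorial : ℕ) : ℝ)
        ≤ ((k.factorial * (k + 1) ^ n * (k + n + 1 + K n * (n + 1)) : ℕ) : ℝ) := by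
      exact_mod_cast this
    push_cast at h2
    calc ((k+n+1).factorial : ℝ) ≤ (k.factorial : ℝ) * ((k:ℝ)+1) ^ n * ((k:ℝ) + n + 1 + (K n : ℝ) * ((n:ℝ) + 1)) := h2
      _ = (k.factorial : ℝ) * (1 + (k:ℝ)) ^ n * ((k:ℝ) + n + 1 + (K n : ℝ) * (n + 1)) := by ring
  -- key scalar inequality
  have key : (1:ℝ) / ((k.factorial : ℝ) * (1 + (k:ℝ)) ^ n)
      ≤ 1 / ((k+n).factorial : ℝ) + ((K n : ℝ) * (n+1)) / ((k+n+1).factorial : ℝ) := by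
    have hrhs : 1 / ((k+n).factorial : ℝ) + ((K n : ℝ) * (n+1)) / ((k+n+1).factorial : ℝ)
        = ((k:ℝ) + n + 1 + (K n : ℝ) * (n+1)) / ((k+n+1).factorial : ℝ) := by
      rw [hfe]
      field_simp
    rw [hrhs, div_le_div_iff₀ (by positivity) hkn1]
    nlinarith [hfu]
  have hE : (0:ℝ) ≤ Real.exp (-c) * c ^ (k + n) := by positivity
  have heq : p c k * (c ^ n / (1 + (k : ℝ)) ^ n)
      = (Real.exp (-c) * c ^ (k + n)) * (1 / ((k.factorial : ℝ) * (1 + (k:ℝ)) ^ n)) := by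
    unfold p; rw [pow_add]; field_simp
  have heq2 : Real.exp (-c) * (c ^ (k + n) / ((k + n).factorial : ℝ))
        + ((K n * (n+1) : ℕ) / c) *
          (Real.exp (-c) * (c ^ (k + (n+1)) / ((k + (n+1)).factorial : ℝ)))
      = (Real.exp (-c) * c ^ (k + n)) *
          (1 / ((k+n).factorial : ℝ) + ((K n : ℝ) * (n+1)) / ((k+n+1).factorial : ℝ)) := by
    have hix : k + (n+1) = (k+n)+1 := by omega
    rw [hix, pow_succ]
    push_cast
    field_simp
  rw [heq, heq2]
  exact mul_le_mul_of_nonneg_left key hE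

noncomputable def M (n : ℕ) (c : ℝ) : ℝ := ∑' k : ℕ, p c k * (c ^ n / (1 + (k:ℝ)) ^ n)

lemma summable_f {c : ℝ} (hc : 0 ≤ c) (n : ℕ) :
    Summable (fun k : ℕ => p c k * (c ^ n / (1 + (k:ℝ)) ^ n)) := by
  apply Summable.of_nonneg_of_le (fun k => ?_) (fun k => ?_)
      (((hasSum_p c).summable).mul_right (c ^ n))
  · have := p_nonneg hc k
    positivity
  · apply mul_le_mul_of_nonneg_left _ (p_nonneg hc k)
    have h1 : (1:ℝ) ≤ (1 + (k:ℝ)) ^ n := by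
      have := pow_le_pow_left₀ (zero_le_one (α := ℝ))
        (by linarith [Nat.cast_nonneg (α := ℝ) k] : (1:ℝ) ≤ 1 + (k:ℝ)) n
      simpa using this
    calc c ^ n / (1 + (k:ℝ)) ^ n ≤ c ^ n / 1 := by
          apply div_le_div_of_nonneg_left (by positivity) one_pos h1
      _ = c ^ n := div_one _

lemma M_lower {c : ℝ} (hc : 0 < c) (n : ℕ) : Sval n c ≤ M n c := by
  rw [← (hasSum_S c n).tsum_eq]
  exact Summable.tsum_le_tsum (fun k => lower_ptwise hc.le n k) (hasSum_S c n).summable (summable_f hc.le n)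

lemma M_upper {c : ℝ} (hc : 0 < c) (n : ℕ) :
    M n c ≤ Sval n c + ((K n * (n+1) : ℕ) / c) * Sval (n+1) c := by
  have hup : HasSum (fun k : ℕ =>
      Real.exp (-c) * (c ^ (k + n) / ((k + n).factorial : ℝ))
        + ((K n * (n+1) : ℕ) / c) *
          (Real.exp (-c) * (c ^ (k + (n+1)) / ((k + (n+1)).factorial : ℝ))))
      (Sval n c + ((K n * (n+1) : ℕ) / c) * Sval (n+1) c) :=
    (hasSum_S c n).add ((hasSum_S c (n+1)).mul_left _)
  rw [← hup.tsum_eq]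
  exact Summable.tsum_le_tsum (fun k => upper_ptwise hc n k) (summable_f hc.le n) hup.summable

lemma tendsto_M (n : ℕ) : Tendsto (fun c : ℝ => M n c) atTop (nhds 1) := by
  have hupper : Tendsto (fun c : ℝ => Sval n c + ((K n * (n+1) : ℕ) : ℝ) / c) atTop (nhds 1) := by
    have h2 : Tendsto (fun c : ℝ => ((K n * (n+1) : ℕ) : ℝ) / c) atTop (nhds 0) :=
      tendsto_const_nhds.div_atTop tendsto_id
    simpa using (Sval_tendsto n).add h2
  apply tendsto_of_tendsto_of_tendsto_of_le_of_le' (Sval_tendsto n) hupper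
  · filter_upwards [eventually_gt_atTop (0:ℝ)] with c hc
    exact M_lower hc n
  · filter_upwards [eventually_gt_atTop (0:ℝ)] with c hc
    calc M n c ≤ Sval n c + ((K n * (n+1) : ℕ) / c) * Sval (n+1) c := M_upper hc n
      _ ≤ Sval n c + ((K n * (n+1) : ℕ) / c) * 1 := by
          gcongr
          · exact Sval_le_one hc.le
      _ = Sval n c + ((K n * (n+1) : ℕ) : ℝ) / c := by ring

lemma integral_eq (c : NNReal) :
    ∫ k : ℕ, ((c : ℝ) ^ 2 / (1 + (k : ℝ)) ^ 2 - 1) ^ 4 ∂(poissonMeasure c)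
      = M 8 (c:ℝ) - 4 * M 6 (c:ℝ) + 6 * M 4 (c:ℝ) - 4 * M 2 (c:ℝ) + 1 := by
  have hc : (0:ℝ) ≤ (c:ℝ) := c.coe_nonneg
  have hbound : ∀ k : ℕ, ‖((c : ℝ) ^ 2 / (1 + (k : ℝ)) ^ 2 - 1) ^ 4‖ ≤ ((c:ℝ)^2 + 1)^4 := by
    intro k
    have hk0 : (0:ℝ) ≤ (k:ℝ) := Nat.cast_nonneg k
    have h1 : (1:ℝ) ≤ (1 + (k:ℝ)) ^ 2 := by nlinarith
    have h0 : (0:ℝ) ≤ (c:ℝ)^2 / (1 + (k:ℝ))^2 := by positivity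
    have h2 : (c:ℝ)^2 / (1 + (k:ℝ))^2 ≤ (c:ℝ)^2 := by
      calc (c:ℝ)^2 / (1 + (k:ℝ))^2 ≤ (c:ℝ)^2 / 1 :=
            div_le_div_of_nonneg_left (by positivity) one_pos h1
        _ = (c:ℝ)^2 := div_one _
    calc ‖((c : ℝ) ^ 2 / (1 + (k : ℝ)) ^ 2 - 1) ^ 4‖
        = |(c : ℝ) ^ 2 / (1 + (k : ℝ)) ^ 2 - 1| ^ 4 := by
          rw [Real.norm_eq_abs, abs_pow]
      _ ≤ ((c:ℝ)^2 + 1)^4 := by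
          apply pow_le_pow_left₀ (abs_nonneg _)
          rw [abs_le]; constructor <;> nlinarith
  have hint : Integrable (fun k : ℕ => ((c : ℝ) ^ 2 / (1 + (k : ℝ)) ^ 2 - 1) ^ 4)
      (poissonMeasure c) := by
    apply Integrable.mono' (integrable_const (((c:ℝ)^2 + 1)^4))
    · exact (measurable_of_countable _).aestronglyMeasurable
    · exact ae_of_all _ hbound
  rw [integral_poissonMeasure' hint]
  have hpmf : ∀ k : ℕ, Real.exp (-(c:ℝ)) * (c:ℝ) ^ k / (k.factorial : ℝ) = p (c:ℝ) k := by
    intro k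
    rfl
  have hsum : ∀ k : ℕ, p (c:ℝ) k * ((c : ℝ) ^ 2 / (1 + (k : ℝ)) ^ 2 - 1) ^ 4
      = p (c:ℝ) k * ((c:ℝ)^8 / (1+(k:ℝ))^8) - 4 * (p (c:ℝ) k * ((c:ℝ)^6/(1+(k:ℝ))^6))
        + 6 * (p (c:ℝ) k * ((c:ℝ)^4/(1+(k:ℝ))^4)) - 4 * (p (c:ℝ) k * ((c:ℝ)^2/(1+(k:ℝ))^2))
        + p (c:ℝ) k := by
    intro k
    have hk : (1 + (k:ℝ)) ≠ 0 := by positivity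
    field_simp
    ring
  simp only [smul_eq_mul, hpmf, hsum]
  have h8 : HasSum (fun k : ℕ => p (c:ℝ) k * ((c:ℝ)^8/(1+(k:ℝ))^8)) (M 8 (c:ℝ)) :=
    (summable_f hc 8).hasSum
  have h6 : HasSum (fun k : ℕ => p (c:ℝ) k * ((c:ℝ)^6/(1+(k:ℝ))^6)) (M 6 (c:ℝ)) :=
    (summable_f hc 6).hasSum
  have h4 : HasSum (fun k : ℕ => p (c:ℝ) k * ((c:ℝ)^4/(1+(k:ℝ))^4)) (M 4 (c:ℝ)) :=
    (summable_f hc 4).hasSum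
  have h2 : HasSum (fun k : ℕ => p (c:ℝ) k * ((c:ℝ)^2/(1+(k:ℝ))^2)) (M 2 (c:ℝ)) :=
    (summable_f hc 2).hasSum
  exact ((((h8.sub (h6.mul_left 4)).add (h4.mul_left 6)).sub (h2.mul_left 4)).add
    (hasSum_p (c:ℝ))).tsum_eq

end PoissonAux

open PoissonAux in
theorem poisson_expectation_pow4_tendsto_zero :
    Tendsto (fun c : NNReal =>
        ∫ k : ℕ, ((c : ℝ) ^ 2 / (1 + (k : ℝ)) ^ 2 - 1) ^ 4 ∂(poissonMeasure c))
      atTop (nhds 0) := by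
  simp only [integral_eq]
  have hco : Tendsto (fun c : NNReal => (c:ℝ)) atTop atTop :=
    NNReal.tendsto_coe_atTop.mpr tendsto_id
  have t8 : Tendsto (fun c : NNReal => M 8 (c:ℝ)) atTop (nhds 1) := (tendsto_M 8).comp hco
  have t6 : Tendsto (fun c : NNReal => M 6 (c:ℝ)) atTop (nhds 1) := (tendsto_M 6).comp hco
  have t4 : Tendsto (fun c : NNReal => M 4 (c:ℝ)) atTop (nhds 1) := (tendsto_M 4).comp hco
  have t2 : Tendsto (fun c : NNReal => M 2 (c:ℝ)) atTop (nhds 1) := (tendsto_M 2).comp hco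
  have h := ((((t8.sub (t6.const_mul 4)).add (t4.const_mul 6)).sub (t2.const_mul 4)).add
    (tendsto_const_nhds (x := (1:ℝ))))
  norm_num at h
  exact h
end

section
/- If S is a Poisson random variable with mean c, then for every natural number N ≥ 1, c^N E[1/(1+S)^N] → 1 as c → ∞. -/
open Filter MeasureTheory ProbabilityTheory

open scoped NNReal

private lemma fact_lb (N k : ℕ) : k.factorial * (k+1)^N ≤ (k+N).factorial := by
  induction N with
  | zero => simp
  | succ n ih =>
    calc k.factorial * (k+1)^(n+1) = (k.factorial * (k+1)^n) * (k+1) := by ring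
    _ ≤ (k+n).factorial * (k+n+1) := Nat.mul_le_mul ih (by omega)
    _ = (k+(n+1)).factorial := by
        rw [show k+(n+1) = (k+n)+1 by ring, Nat.factorial_succ]; ring

private lemma fact_ub (N k : ℕ) : (k+N).factorial ≤ k.factorial * (k+N)^N := by
  induction N with
  | zero => simp
  | succ n ih =>
    calc (k+(n+1)).factorial = (k+n).factorial * (k+n+1) := by
          rw [show k+(n+1) = (k+n)+1 by ring, Nat.factorial_succ]; ring
    _ ≤ (k.factorial * (k+n)^n) * (k+n+1) := Nat.mul_le_mul ih le_rfl
    _ ≤ k.factorial * (k+(n+1))^(n+1) := by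
          have : (k+n)^n ≤ (k+n+1)^n := Nat.pow_le_pow_left (by omega) n
          calc (k.factorial * (k+n)^n) * (k+n+1) ≤ (k.factorial * (k+n+1)^n) * (k+n+1) :=
                Nat.mul_le_mul (Nat.mul_le_mul le_rfl this) le_rfl
          _ = k.factorial * (k+(n+1))^(n+1) := by ring

private lemma key_term (N : ℕ) (c : ℝ≥0) (k : ℕ) :
    (c:ℝ)^N * (poissonPMFReal c k * (1/(1+(k:ℝ))^N))
      = poissonPMFReal c (k+N) * (((k+N).factorial : ℝ) / (k.factorial * ((k:ℝ)+1)^N)) := by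
  unfold poissonPMFReal
  have h1 : ((k.factorial : ℝ)) ≠ 0 := Nat.cast_ne_zero.2 k.factorial_ne_zero
  have h2 : (((k+N).factorial : ℝ)) ≠ 0 := Nat.cast_ne_zero.2 (k+N).factorial_ne_zero
  have h3 : ((k:ℝ)+1) ≠ 0 := by positivity
  rw [show (1:ℝ)+(k:ℝ) = (k:ℝ)+1 by ring]
  field_simp
  ring

private lemma integral_poisson_eq (N : ℕ) (c : ℝ≥0) :
    ∫ k : ℕ, 1 / (1 + (k : ℝ)) ^ N ∂(poissonMeasure c)
      = ∑' k : ℕ, poissonPMFReal c k * (1 / (1 + (k : ℝ)) ^ N) := by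
  have hint : Integrable (fun k : ℕ => 1 / (1 + (k : ℝ)) ^ N) (poissonMeasure c) := by
    apply Integrable.mono' (integrable_const (1:ℝ))
    · exact measurable_from_top.aestronglyMeasurable
    · refine ae_of_all _ fun k => ?_
      have h0 : (0:ℝ) < (1+(k:ℝ))^N := by positivity
      rw [Real.norm_eq_abs, abs_of_nonneg (by positivity), div_le_one h0]
      exact one_le_pow₀ (by simp [le_add_of_nonneg_right])
  rw [integral_poissonMeasure' hint]
  refine tsum_congr fun k => ?_
  rw [smul_eq_mul]
  rfl

theorem poisson_inv_moment_tendsto_one (N : ℕ) (hN : 1 ≤ N) :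
    Tendsto (fun c : NNReal =>
        (c : ℝ) ^ N * ∫ k : ℕ, 1 / (1 + (k : ℝ)) ^ N ∂(poissonMeasure c))
      atTop (nhds 1) := by
  classical
  set p : ℝ≥0 → ℕ → ℝ := fun c k => poissonPMFReal c k with hp
  set w : ℕ → ℝ := fun k => ((k+N).factorial : ℝ) / (k.factorial * ((k:ℝ)+1)^N) with hwdef
  have hp_nonneg : ∀ (c : ℝ≥0) (k : ℕ), 0 ≤ p c k := fun c k => poissonPMFReal_nonneg
  have hp_sum : ∀ c : ℝ≥0, HasSum (p c) 1 := fun c => poissonPMFRealSum c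
  have hden_pos : ∀ k : ℕ, (0:ℝ) < (k.factorial : ℝ) * ((k:ℝ)+1)^N := by
    intro k; positivity
  have hw_ge1 : ∀ k, 1 ≤ w k := by
    intro k
    rw [hwdef, le_div_iff₀ (hden_pos k), one_mul]
    exact_mod_cast fact_lb N k
  have hw_le : ∀ k, w k ≤ (((k:ℝ)+N)/((k:ℝ)+1))^N := by
    intro k
    rw [hwdef, div_pow, div_le_div_iff₀ (hden_pos k) (by positivity)]
    have hcast : (((k+N).factorial : ℝ)) ≤ (k.factorial : ℝ) * ((k:ℝ)+(N:ℝ))^N := by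
      exact_mod_cast fact_ub N k
    calc (((k+N).factorial : ℝ)) * ((k:ℝ)+1)^N
        ≤ ((k.factorial : ℝ) * ((k:ℝ)+(N:ℝ))^N) * ((k:ℝ)+1)^N := by
          exact mul_le_mul_of_nonneg_right hcast (by positivity)
      _ = ((k:ℝ)+(N:ℝ))^N * ((k.factorial : ℝ) * ((k:ℝ)+1)^N) := by ring
  have hNR : (1:ℝ) ≤ (N:ℝ) := by exact_mod_cast hN
  have hwN : ∀ k, w k ≤ (N:ℝ)^N := by
    intro k
    refine (hw_le k).trans (pow_le_pow_left₀ (by positivity) ?_ N)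
    rw [div_le_iff₀ (by positivity)]
    nlinarith [Nat.cast_nonneg (α := ℝ) k]
  have hsum_shift : ∀ c : ℝ≥0, Summable (fun k => p c (k+N)) :=
    fun c => (summable_nat_add_iff N).2 (hp_sum c).summable
  have hsumT : ∀ c : ℝ≥0, Summable (fun k => p c (k+N) * w k) := by
    intro c
    refine Summable.of_nonneg_of_le
      (fun k => mul_nonneg (hp_nonneg _ _) ((zero_le_one.trans (hw_ge1 k))))
      (fun k => mul_le_mul_of_nonneg_left (hwN k) (hp_nonneg _ _))
      ((hsum_shift c).mul_right _)
  have hkey : ∀ c : ℝ≥0,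
      (c : ℝ) ^ N * ∫ k : ℕ, 1 / (1 + (k : ℝ)) ^ N ∂(poissonMeasure c)
        = ∑' k, p c (k+N) * w k := by
    intro c
    rw [integral_poisson_eq, ← tsum_mul_left]
    exact tsum_congr fun k => key_term N c k
  have hlow : ∀ c : ℝ≥0, 1 - ∑ m ∈ Finset.range N, p c m ≤ ∑' k, p c (k+N) * w k := by
    intro c
    have h1 : (∑ m ∈ Finset.range N, p c m) + ∑' k, p c (k+N) = 1 :=
      (Summable.sum_add_tsum_nat_add N (hp_sum c).summable).trans (hp_sum c).tsum_eq
    have h2 : ∑' k, p c (k+N) ≤ ∑' k, p c (k+N) * w k :=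
      Summable.tsum_le_tsum (fun k => le_mul_of_one_le_right (hp_nonneg _ _) (hw_ge1 k))
        (hsum_shift c) (hsumT c)
    linarith
  have htend0 : ∀ m : ℕ, Tendsto (fun c : ℝ≥0 => p c m) atTop (nhds 0) := by
    intro m
    have h := (Real.tendsto_pow_mul_exp_neg_atTop_nhds_zero m).comp
      (NNReal.tendsto_coe_atTop.2 (tendsto_id (α := ℝ≥0)))
    have h2 := h.div_const (m.factorial : ℝ)
    have he : (fun c : ℝ≥0 => p c m)
        = fun c : ℝ≥0 => ((c:ℝ)^m * Real.exp (-(c:ℝ))) / (m.factorial : ℝ) := by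
      funext c; simp [hp, poissonPMFReal]; ring
    rw [he]
    simpa using h2
  have hlow_tend : Tendsto (fun c : ℝ≥0 => 1 - ∑ m ∈ Finset.range N, p c m) atTop (nhds 1) := by
    have hsum0 : Tendsto (fun c : ℝ≥0 => ∑ m ∈ Finset.range N, p c m) atTop (nhds 0) := by
      have := tendsto_finset_sum (Finset.range N) (fun m _ => htend0 m)
      simpa using this
    simpa using tendsto_const_nhds.sub hsum0
  have hwM : ∀ (M k : ℕ), w (k+M) ≤ (1 + (N:ℝ)/((M:ℝ)+1))^N := by
    intro M k
    refine (hw_le (k+M)).trans (pow_le_pow_left₀ (by positivity) ?_ N)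
    push_cast
    rw [div_le_iff₀ (by positivity)]
    have hMk : ((M:ℝ)+1) ≤ ((k:ℝ)+(M:ℝ)+1) := by
      have := Nat.cast_nonneg (α := ℝ) k; linarith
    have hge : (N:ℝ) ≤ (N:ℝ)/((M:ℝ)+1) * ((k:ℝ)+(M:ℝ)+1) := by
      calc (N:ℝ) = (N:ℝ)/((M:ℝ)+1) * ((M:ℝ)+1) := by field_simp
        _ ≤ _ := mul_le_mul_of_nonneg_left hMk (by positivity)
    nlinarith
  have hup : ∀ (M : ℕ) (c : ℝ≥0), ∑' k, p c (k+N) * w k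
      ≤ (N:ℝ)^N * (∑ k ∈ Finset.range M, p c (k+N)) + (1 + (N:ℝ)/((M:ℝ)+1))^N := by
    intro M c
    have hsplit : (∑ k ∈ Finset.range M, p c (k+N) * w k)
        + ∑' k, p c (k+M+N) * w (k+M) = ∑' k, p c (k+N) * w k :=
      Summable.sum_add_tsum_nat_add M (hsumT c)
    have hhead : ∑ k ∈ Finset.range M, p c (k+N) * w k
        ≤ (N:ℝ)^N * (∑ k ∈ Finset.range M, p c (k+N)) := by
      rw [Finset.mul_sum]
      refine Finset.sum_le_sum fun k _ => ?_
      calc p c (k+N) * w k ≤ p c (k+N) * (N:ℝ)^N :=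
            mul_le_mul_of_nonneg_left (hwN k) (hp_nonneg _ _)
        _ = (N:ℝ)^N * p c (k+N) := by ring
    have htail_sum : Summable (fun k => p c (k+M+N) * w (k+M)) :=
      (summable_nat_add_iff (f := fun k => p c (k+N) * w k) M).2 (hsumT c)
    have htail_sum2 : Summable (fun k => p c (k+M+N)) := by
      have := (summable_nat_add_iff (f := fun k => p c k) (M+N)).2 (hp_sum c).summable
      simpa [← add_assoc] using this
    have htail : ∑' k, p c (k+M+N) * w (k+M)
        ≤ (1 + (N:ℝ)/((M:ℝ)+1))^N := by
      have h1 : ∑' k, p c (k+M+N) * w (k+M)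
          ≤ ∑' k, p c (k+M+N) * (1 + (N:ℝ)/((M:ℝ)+1))^N :=
        Summable.tsum_le_tsum (fun k => mul_le_mul_of_nonneg_left (hwM M k) (hp_nonneg _ _))
          htail_sum (htail_sum2.mul_right _)
      have h2 : ∑' k, p c (k+M+N) * (1 + (N:ℝ)/((M:ℝ)+1))^N
          = (∑' k, p c (k+M+N)) * (1 + (N:ℝ)/((M:ℝ)+1))^N := tsum_mul_right
      have h3 : ∑' k, p c (k+M+N) ≤ 1 := by
        have hsplit2 : (∑ m ∈ Finset.range (M+N), p c m) + ∑' k, p c (k+(M+N)) = 1 :=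
          (Summable.sum_add_tsum_nat_add (M+N) (hp_sum c).summable).trans (hp_sum c).tsum_eq
        have hnn : 0 ≤ ∑ m ∈ Finset.range (M+N), p c m :=
          Finset.sum_nonneg fun m _ => hp_nonneg _ _
        have : ∑' k, p c (k+M+N) = ∑' k, p c (k+(M+N)) := by
          exact tsum_congr fun k => by rw [add_assoc]
        linarith
      have hb : (0:ℝ) ≤ (1 + (N:ℝ)/((M:ℝ)+1))^N := by positivity
      calc ∑' k, p c (k+M+N) * w (k+M)
          ≤ (∑' k, p c (k+M+N)) * (1 + (N:ℝ)/((M:ℝ)+1))^N := h1.trans_eq h2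
        _ ≤ 1 * (1 + (N:ℝ)/((M:ℝ)+1))^N := mul_le_mul_of_nonneg_right h3 hb
        _ = (1 + (N:ℝ)/((M:ℝ)+1))^N := one_mul _
    linarith
  rw [Metric.tendsto_nhds]
  intro ε hε
  obtain ⟨M, hM⟩ : ∃ M : ℕ, ((1:ℝ) + (N:ℝ)/((M:ℝ)+1))^N < 1 + ε/2 := by
    have h1 : Tendsto (fun M : ℕ => (N:ℝ)/((M:ℝ)+1)) atTop (nhds 0) :=
      Tendsto.div_atTop tendsto_const_nhds
        (tendsto_atTop_add_const_right _ 1 tendsto_natCast_atTop_atTop)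
    have h2 : Tendsto (fun M : ℕ => ((1:ℝ)+(N:ℝ)/((M:ℝ)+1))^N) atTop (nhds 1) := by
      have := ((tendsto_const_nhds (x := (1:ℝ)) (f := atTop (α := ℕ))).add h1).pow N
      simpa using this
    exact (h2.eventually_lt_const (by linarith)).exists
  have hheadt : Tendsto (fun c : ℝ≥0 => (N:ℝ)^N * ∑ k ∈ Finset.range M, p c (k+N))
      atTop (nhds 0) := by
    have hs := tendsto_finset_sum (Finset.range M) (fun k (_ : k ∈ Finset.range M) => htend0 (k+N))
    have := tendsto_const_nhds (x := (N:ℝ)^N) (f := atTop (α := ℝ≥0)) |>.mul hs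
    simpa using this
  have hev1 := hlow_tend.eventually_const_lt (show (1:ℝ) - ε < 1 by linarith)
  have hev2 := hheadt.eventually_lt_const (show (0:ℝ) < ε/2 by linarith)
  filter_upwards [hev1, hev2] with c h1 h2
  rw [Real.dist_eq, abs_sub_lt_iff, hkey c]
  have hl := hlow c
  have hu := hup M c
  constructor <;> linarith
end

section
/- Let W and B be correlated standard Brownian motions with correlation coefficient ρ, and μ a memory kernel with cumulative M. Then E[∫_0^t B(s)^2 μ(s) ds · ∫_0^t W(s)^2 μ(s) ds] = (∫_0^t M(s)ds)^2 - 2 t M(t) ∫_0^t M(s)ds + (1+2ρ^2) t^2 M(t)^2 - 8ρ^2 M(t) ∫_0^t s M(s) ds + 4ρ^2 ∫_0^t s M(s)^2 ds. -/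
open Filter MeasureTheory ProbabilityTheory intervalIntegral

/-- A (one-dimensional) standard Brownian motion on a probability space `Ω`:
continuous paths starting from `0`, Gaussian increments `W t - W s ~ N(0, t - s)`,
and independent increments. -/
structure IsStdBrownian {Ω : Type*} [MeasureSpace Ω]
    [IsProbabilityMeasure (ℙ : Measure Ω)] (W : ℝ → Ω → ℝ) : Prop where
  measurable : ∀ t : ℝ, Measurable (W t)
  init : ∀ ω, W 0 ω = 0
  cont_paths : ∀ ω, Continuous fun t => W t ω
  gauss_incr : ∀ s t : ℝ, 0 ≤ s → s ≤ t →
    Measure.map (fun ω => W t ω - W s ω) ℙ = gaussianReal 0 (Real.toNNReal (t - s))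
  indep_incr : ∀ (n : ℕ) (t : ℕ → ℝ), Monotone t → 0 ≤ t 0 →
    iIndepFun
      (fun i : Fin n => fun ω => W (t (i + 1)) ω - W (t i) ω) ℙ

/-- Two processes are jointly Gaussian (and centred) if every finite linear combination
of their values at nonnegative times has a centred Gaussian distribution. -/
def JointlyGaussianPair {Ω : Type*} [MeasureSpace Ω]
    [IsProbabilityMeasure (ℙ : Measure Ω)] (W B : ℝ → Ω → ℝ) : Prop :=
  ∀ (n : ℕ) (a b t s : Fin n → ℝ), (∀ i, 0 ≤ t i) → (∀ i, 0 ≤ s i) →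
    ∃ v : NNReal, Measure.map
      (fun ω => ∑ i, (a i * W (t i) ω + b i * B (s i) ω)) ℙ = gaussianReal 0 v


section Gauss
open Real Filter MeasureTheory Set intervalIntegral

lemma integrable_pow_mul_exp_neg_mul_sq {b : ℝ} (hb : 0 < b) (n : ℕ) :
    Integrable fun x : ℝ => x ^ n * Real.exp (-b * x ^ 2) := by
  have := integrable_rpow_mul_exp_neg_mul_sq hb (s := (n:ℝ)) (by
    have : (0:ℝ) ≤ n := Nat.cast_nonneg n
    linarith)
  refine this.congr (Filter.EventuallyEq.of_eq ?_)
  funext x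
  rw [Real.rpow_natCast]

lemma tendsto_pow_mul_exp_neg_mul_sq_atTop {b : ℝ} (hb : 0 < b) (n : ℕ) :
    Tendsto (fun x : ℝ => x ^ n * Real.exp (-b * x ^ 2)) atTop (nhds 0) := by
  have h2 : Tendsto (fun x : ℝ => Real.exp (-(1/2) * x)) atTop (nhds 0) := by
    have : Tendsto (fun x : ℝ => -(1/2) * x) atTop atBot := by
      apply Tendsto.const_mul_atTop_of_neg (by norm_num) tendsto_id
    exact Real.tendsto_exp_atBot.comp this
  have h := (rpow_mul_exp_neg_mul_sq_isLittleO_exp_neg hb (n : ℝ)).tendsto_zero_of_tendsto h2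
  refine h.congr' ?_
  filter_upwards [eventually_ge_atTop (0:ℝ)] with x hx
  rw [Real.rpow_natCast]

lemma integral_eq_zero_of_deriv (f f' : ℝ → ℝ) (hd : ∀ x, HasDerivAt f (f' x) x)
    (hint : Integrable f') (h0 : Tendsto f atTop (nhds 0)) (h0' : Tendsto f atBot (nhds 0)) :
    ∫ x : ℝ, f' x = 0 := by
  rw [← integral_Iic_add_Ioi (b := 0) hint.integrableOn hint.integrableOn]
  rw [integral_Iic_of_hasDerivAt_of_tendsto' (fun x _ => hd x) hint.integrableOn h0',
    integral_Ioi_of_hasDerivAt_of_tendsto' (fun x _ => hd x) hint.integrableOn h0]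
  ring

lemma tendsto_pow_mul_exp_neg_mul_sq_atBot {b : ℝ} (hb : 0 < b) (n : ℕ) :
    Tendsto (fun x : ℝ => x ^ n * Real.exp (-b * x ^ 2)) atBot (nhds 0) := by
  have h := ((tendsto_pow_mul_exp_neg_mul_sq_atTop hb n).const_mul ((-1:ℝ)^n)).comp
    tendsto_neg_atBot_atTop
  simp only [mul_zero] at h
  refine h.congr (fun x => ?_)
  simp only [Function.comp]
  rw [← mul_assoc, ← mul_pow]
  ring_nf

lemma integral_pow_mul_exp_step {b : ℝ} (hb : 0 < b) (m : ℕ) :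
    ∫ x : ℝ, x ^ (m+2) * Real.exp (-b * x ^ 2)
      = ((m+1:ℝ)/(2*b)) * ∫ x : ℝ, x ^ m * Real.exp (-b * x ^ 2) := by
  set g : ℝ → ℝ := fun x => -(2*b)⁻¹ * (x^(m+1) * Real.exp (-b*x^2)) with hg
  set φ : ℝ → ℝ := fun x => x^(m+2) * Real.exp (-b*x^2)
    - ((m+1:ℝ)/(2*b)) * (x^m * Real.exp (-b*x^2)) with hφ
  have hd : ∀ x, HasDerivAt g (φ x) x := by
    intro x
    have h1 : HasDerivAt (fun x : ℝ => x ^ (m+1)) ((m+1) * x ^ m) x := by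
      simpa using hasDerivAt_pow (m+1) x
    have h2 : HasDerivAt (fun x : ℝ => Real.exp (-b*x^2))
        (Real.exp (-b*x^2) * (-b * (2*x))) x := by
      have := ((hasDerivAt_pow 2 x).const_mul (-b)).exp
      simpa using this
    have := (h1.mul h2).const_mul (-(2*b)⁻¹)
    refine this.congr_deriv ?_
    have hb' : (2*b) ≠ 0 := by positivity
    rw [hφ]
    field_simp
    ring
  have hint : Integrable φ := by
    exact (integrable_pow_mul_exp_neg_mul_sq hb (m+2)).sub
      ((integrable_pow_mul_exp_neg_mul_sq hb m).const_mul _)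
  have htop : Tendsto g atTop (nhds 0) := by
    have := (tendsto_pow_mul_exp_neg_mul_sq_atTop hb (m+1)).const_mul (-(2*b)⁻¹)
    rw [mul_zero] at this
    exact this
  have hbot : Tendsto g atBot (nhds 0) := by
    have := (tendsto_pow_mul_exp_neg_mul_sq_atBot hb (m+1)).const_mul (-(2*b)⁻¹)
    rw [mul_zero] at this
    exact this
  have h0 := integral_eq_zero_of_deriv g φ hd hint htop hbot
  rw [hφ] at h0
  rw [integral_sub (integrable_pow_mul_exp_neg_mul_sq hb (m+2))
    ((integrable_pow_mul_exp_neg_mul_sq hb m).const_mul _),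
    MeasureTheory.integral_const_mul] at h0
  linarith

lemma integral_sq_mul_exp {b : ℝ} (hb : 0 < b) :
    ∫ x : ℝ, x ^ 2 * Real.exp (-b * x ^ 2) = (1/(2*b)) * Real.sqrt (Real.pi / b) := by
  have := integral_pow_mul_exp_step hb 0
  simp only [pow_zero, one_mul, zero_add] at this
  rw [this, integral_gaussian]
  norm_num

lemma integral_pow4_mul_exp {b : ℝ} (hb : 0 < b) :
    ∫ x : ℝ, x ^ 4 * Real.exp (-b * x ^ 2)
      = (3/(4*b^2)) * Real.sqrt (Real.pi / b) := by
  have h2 := integral_pow_mul_exp_step hb 2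
  rw [integral_sq_mul_exp hb] at h2
  norm_num at h2
  rw [show (fun x:ℝ => x ^ 4 * Real.exp (-b * x ^ 2)) = fun x:ℝ => x ^ 4 * Real.exp (-(b * x ^ 2)) by funext x; ring_nf]
  rw [h2]
  field_simp
  ring

open ProbabilityTheory

lemma gaussianReal_withDensity {v : NNReal} (hv : v ≠ 0) :
    gaussianReal 0 v
      = volume.withDensity (fun x => ((gaussianPDFReal 0 v x).toNNReal : ENNReal)) := by
  rw [gaussianReal_of_var_ne_zero 0 hv]
  rfl

lemma pdf_eq {v : NNReal} (hv : v ≠ 0) (x : ℝ) :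
    gaussianPDFReal 0 v x = (Real.sqrt (2 * Real.pi * v))⁻¹ * Real.exp (-(2*(v:ℝ))⁻¹ * x ^ 2) := by
  rw [gaussianPDFReal]
  congr 1
  rw [sub_zero]
  congr 1
  have hv' : (v:ℝ) ≠ 0 := by exact_mod_cast hv
  field_simp

lemma integral_pow_gaussianReal {v : NNReal} (hv : v ≠ 0) (n : ℕ) :
    ∫ x, x ^ n ∂(gaussianReal 0 v)
      = (Real.sqrt (2 * Real.pi * v))⁻¹ * ∫ x : ℝ, x ^ n * Real.exp (-(2*(v:ℝ))⁻¹ * x ^ 2) := by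
  rw [gaussianReal_withDensity hv,
    integral_withDensity_eq_integral_smul ((measurable_gaussianPDFReal 0 v).real_toNNReal) (fun x => x ^ n)]
  rw [← MeasureTheory.integral_const_mul]
  congr 1
  funext x
  rw [NNReal.smul_def, smul_eq_mul, Real.coe_toNNReal _ (gaussianPDFReal_nonneg 0 v x),
    pdf_eq hv]
  ring

lemma integrable_pow_gaussianReal (v : NNReal) (n : ℕ) :
    Integrable (fun x => x ^ n) (gaussianReal 0 v) := by
  by_cases hv : v = 0
  · subst hv
    simp only [gaussianReal_zero_var]
    constructor
    · exact (measurable_id.pow_const n).aestronglyMeasurable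
    · rw [HasFiniteIntegral,
        lintegral_dirac' _ (Measurable.enorm (by measurability : Measurable fun x : ℝ => x ^ n))]
      exact enorm_lt_top
  · have hb : (0:ℝ) < (2*(v:ℝ))⁻¹ := by
      have : 0 < (v:ℝ) := by positivity
      positivity
    rw [gaussianReal_withDensity hv]
    rw [integrable_withDensity_iff ((measurable_gaussianPDFReal 0 v).real_toNNReal.coe_nnreal_ennreal) (Filter.Eventually.of_forall fun x => ENNReal.coe_lt_top)]
    refine ((integrable_pow_mul_exp_neg_mul_sq hb n).const_mul ((Real.sqrt (2 * Real.pi * v))⁻¹)).congr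
      (Filter.EventuallyEq.of_eq ?_)
    funext x
    rw [ENNReal.coe_toReal, Real.coe_toNNReal _ (gaussianPDFReal_nonneg 0 v x), pdf_eq hv]
    ring

lemma gaussianReal_moment_two (v : NNReal) :
    ∫ x, x ^ 2 ∂(gaussianReal 0 v) = (v : ℝ) := by
  by_cases hv : v = 0
  · subst hv; simp
  · have hv' : (0:ℝ) < (v:ℝ) := by positivity
    have hb : (0:ℝ) < (2*(v:ℝ))⁻¹ := by positivity
    rw [integral_pow_gaussianReal hv 2, integral_sq_mul_exp hb]
    have h1 : Real.pi / (2*(v:ℝ))⁻¹ = 2 * Real.pi * v := by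
      field_simp
    have h2 : (1:ℝ)/(2*(2*(v:ℝ))⁻¹) = v := by field_simp
    rw [h1, h2]
    have h3 : Real.sqrt (2 * Real.pi * v) ≠ 0 := by
      refine ne_of_gt (Real.sqrt_pos.mpr ?_)
      have := Real.pi_pos
      positivity
    field_simp

lemma gaussianReal_moment_four (v : NNReal) :
    ∫ x, x ^ 4 ∂(gaussianReal 0 v) = 3 * (v : ℝ) ^ 2 := by
  by_cases hv : v = 0
  · subst hv; simp
  · have hv' : (0:ℝ) < (v:ℝ) := by positivity
    have hb : (0:ℝ) < (2*(v:ℝ))⁻¹ := by positivity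
    rw [integral_pow_gaussianReal hv 4, integral_pow4_mul_exp hb]
    have h1 : Real.pi / (2*(v:ℝ))⁻¹ = 2 * Real.pi * v := by
      field_simp
    have h2 : (3:ℝ)/(4*((2*(v:ℝ))⁻¹)^2) = 3 * v^2 := by
      rw [div_eq_iff (by positivity)]
      field_simp
      ring
    rw [h1, h2]
    have h3 : Real.sqrt (2 * Real.pi * v) ≠ 0 := by
      refine ne_of_gt (Real.sqrt_pos.mpr ?_)
      have := Real.pi_pos
      positivity
    field_simp

variable {Ω : Type*} [MeasureSpace Ω] [IsProbabilityMeasure (ℙ : Measure Ω)]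

lemma integrable_pow_of_gaussian {Z : Ω → ℝ} (hZ : Measurable Z) {v : NNReal}
    (h : Measure.map Z ℙ = gaussianReal 0 v) (n : ℕ) :
    Integrable (fun ω => Z ω ^ n) ℙ := by
  have := integrable_pow_gaussianReal v n
  rw [← h, integrable_map_measure (by measurability) hZ.aemeasurable] at this
  exact this

lemma integral_pow_of_gaussian {Z : Ω → ℝ} (hZ : Measurable Z) {v : NNReal}
    (h : Measure.map Z ℙ = gaussianReal 0 v) (n : ℕ) :
    ∫ ω, Z ω ^ n ∂ℙ = ∫ x, x ^ n ∂(gaussianReal 0 v) := by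
  rw [← h, integral_map hZ.aemeasurable (by measurability)]

/-- key: fourth moment is 3 times square of second moment -/
lemma fourth_eq_of_gaussian {Z : Ω → ℝ} (hZ : Measurable Z) {v : NNReal}
    (h : Measure.map Z ℙ = gaussianReal 0 v) :
    ∫ ω, Z ω ^ 4 ∂ℙ = 3 * (∫ ω, Z ω ^ 2 ∂ℙ) ^ 2 := by
  rw [integral_pow_of_gaussian hZ h 4, integral_pow_of_gaussian hZ h 2,
    gaussianReal_moment_four, gaussianReal_moment_two]

end Gauss

section Cross

open ProbabilityTheory MeasureTheory

variable {Ω : Type*} [MeasureSpace Ω] [IsProbabilityMeasure (ℙ : Measure Ω)]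

lemma IsStdBrownian.law {W : ℝ → Ω → ℝ} (hW : IsStdBrownian W) {s : ℝ} (hs : 0 ≤ s) :
    Measure.map (W s) ℙ = gaussianReal 0 s.toNNReal := by
  have h := hW.gauss_incr 0 s le_rfl hs
  have he : (fun ω => W s ω - W 0 ω) = W s := by
    funext ω; rw [hW.init]; ring
  rw [he, sub_zero] at h
  exact h

lemma cross_moment (W B : ℝ → Ω → ℝ) (hW : IsStdBrownian W) (hB : IsStdBrownian B)
    (hjoint : JointlyGaussianPair W B) (ρ : ℝ)
    (hcov : ∀ s u : ℝ, 0 ≤ s → 0 ≤ u → ∫ ω, W s ω * B u ω ∂ℙ = ρ * min s u)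
    (s u : ℝ) (hs : 0 ≤ s) (hu : 0 ≤ u) :
    Integrable (fun ω => B s ω ^ 2 * W u ω ^ 2) ℙ ∧
      ∫ ω, B s ω ^ 2 * W u ω ^ 2 ∂ℙ = s * u + 2 * ρ ^ 2 * (min s u) ^ 2 := by
  set X : Ω → ℝ := B s with hX
  set Y : Ω → ℝ := W u with hY
  have hXm : Measurable X := hB.measurable s
  have hYm : Measurable Y := hW.measurable u
  have hXlaw := hB.law hs
  have hYlaw := hW.law hu
  -- second and fourth moments of marginals
  have hIX2 : Integrable (fun ω => X ω ^ 2) ℙ := integrable_pow_of_gaussian hXm hXlaw 2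
  have hIY2 : Integrable (fun ω => Y ω ^ 2) ℙ := integrable_pow_of_gaussian hYm hYlaw 2
  have hIX4 : Integrable (fun ω => X ω ^ 4) ℙ := integrable_pow_of_gaussian hXm hXlaw 4
  have hIY4 : Integrable (fun ω => Y ω ^ 4) ℙ := integrable_pow_of_gaussian hYm hYlaw 4
  have hEX2 : ∫ ω, X ω ^ 2 ∂ℙ = s := by
    rw [integral_pow_of_gaussian hXm hXlaw 2, gaussianReal_moment_two, Real.coe_toNNReal _ hs]
  have hEY2 : ∫ ω, Y ω ^ 2 ∂ℙ = u := by
    rw [integral_pow_of_gaussian hYm hYlaw 2, gaussianReal_moment_two, Real.coe_toNNReal _ hu]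
  have hEX4 : ∫ ω, X ω ^ 4 ∂ℙ = 3 * s ^ 2 := by
    rw [integral_pow_of_gaussian hXm hXlaw 4, gaussianReal_moment_four, Real.coe_toNNReal _ hs]
  have hEY4 : ∫ ω, Y ω ^ 4 ∂ℙ = 3 * u ^ 2 := by
    rw [integral_pow_of_gaussian hYm hYlaw 4, gaussianReal_moment_four, Real.coe_toNNReal _ hu]
  -- the sum and difference are Gaussian
  have hsum : ∀ a : ℝ, ∃ v : NNReal,
      Measure.map (fun ω => a * Y ω + X ω) ℙ = gaussianReal 0 v := by
    intro a
    obtain ⟨v, hv⟩ := hjoint 1 (fun _ => a) (fun _ => 1) (fun _ => u) (fun _ => s)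
      (fun _ => hu) (fun _ => hs)
    refine ⟨v, ?_⟩
    rw [← hv]
    congr 1
    funext ω
    simp [Fin.sum_univ_one]
    rfl
  obtain ⟨v1, h1⟩ := hsum 1
  obtain ⟨v2, h2⟩ := hsum (-1)
  set S : Ω → ℝ := fun ω => (1:ℝ) * Y ω + X ω with hS
  set D : Ω → ℝ := fun ω => (-1:ℝ) * Y ω + X ω with hD
  have hSm : Measurable S := (measurable_const.mul hYm).add hXm
  have hDm : Measurable D := (measurable_const.mul hYm).add hXm
  have hIS2 : Integrable (fun ω => S ω ^ 2) ℙ := integrable_pow_of_gaussian hSm h1 2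
  have hID2 : Integrable (fun ω => D ω ^ 2) ℙ := integrable_pow_of_gaussian hDm h2 2
  have hIS4 : Integrable (fun ω => S ω ^ 4) ℙ := integrable_pow_of_gaussian hSm h1 4
  have hID4 : Integrable (fun ω => D ω ^ 4) ℙ := integrable_pow_of_gaussian hDm h2 4
  have hES4 : ∫ ω, S ω ^ 4 ∂ℙ = 3 * (∫ ω, S ω ^ 2 ∂ℙ) ^ 2 := fourth_eq_of_gaussian hSm h1
  have hED4 : ∫ ω, D ω ^ 4 ∂ℙ = 3 * (∫ ω, D ω ^ 2 ∂ℙ) ^ 2 := fourth_eq_of_gaussian hDm h2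
  -- integrability of the cross products
  have hIXY : Integrable (fun ω => X ω * Y ω) ℙ := by
    have h : Integrable (fun ω => (S ω ^ 2 - X ω ^ 2 - Y ω ^ 2) / 2) ℙ :=
      ((hIS2.sub hIX2).sub hIY2).div_const 2
    refine h.congr (Filter.EventuallyEq.of_eq ?_)
    funext ω
    simp only [hS]
    ring
  have hEXY : ∫ ω, X ω * Y ω ∂ℙ = ρ * min s u := by
    have h := hcov u s hu hs
    rw [min_comm] at h
    rw [← h]
    congr 1
    funext ω
    rw [mul_comm]
  -- second moments of S and D
  have hES2 : ∫ ω, S ω ^ 2 ∂ℙ = s + u + 2 * (ρ * min s u) := by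
    have he : (fun ω => S ω ^ 2)
        = fun ω => X ω ^ 2 + (2 * (X ω * Y ω) + Y ω ^ 2) := by
      funext ω; simp only [hS]; ring
    have hg : Integrable (fun ω => 2 * (X ω * Y ω) + Y ω ^ 2) ℙ := (hIXY.const_mul 2).add hIY2
    rw [he, integral_add hIX2 hg, integral_add (hIXY.const_mul 2) hIY2,
      MeasureTheory.integral_const_mul, hEX2, hEY2, hEXY]
    ring
  have hED2 : ∫ ω, D ω ^ 2 ∂ℙ = s + u - 2 * (ρ * min s u) := by
    have he : (fun ω => D ω ^ 2)
        = fun ω => X ω ^ 2 + ((-2) * (X ω * Y ω) + Y ω ^ 2) := by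
      funext ω; simp only [hD]; ring
    have hg : Integrable (fun ω => (-2) * (X ω * Y ω) + Y ω ^ 2) ℙ := (hIXY.const_mul (-2)).add hIY2
    rw [he, integral_add hIX2 hg, integral_add (hIXY.const_mul (-2)) hIY2,
      MeasureTheory.integral_const_mul, hEX2, hEY2, hEXY]
    ring
  -- the key pointwise identity
  have hpt : (fun ω => X ω ^ 2 * Y ω ^ 2)
      = fun ω => (S ω ^ 4 + D ω ^ 4 - 2 * X ω ^ 4 - 2 * Y ω ^ 4) / 12 := by
    funext ω; simp only [hS, hD]; ring
  have hint : Integrable (fun ω => X ω ^ 2 * Y ω ^ 2) ℙ := by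
    rw [hpt]
    have ha : Integrable (fun ω => S ω ^ 4 + D ω ^ 4) ℙ := hIS4.add hID4
    have hb' : Integrable (fun ω => S ω ^ 4 + D ω ^ 4 - 2 * X ω ^ 4) ℙ := ha.sub (hIX4.const_mul 2)
    exact (hb'.sub (hIY4.const_mul 2)).div_const 12
  constructor
  · refine hint.congr (Filter.EventuallyEq.of_eq ?_)
    funext ω; ring
  · have : ∫ ω, B s ω ^ 2 * W u ω ^ 2 ∂ℙ = ∫ ω, X ω ^ 2 * Y ω ^ 2 ∂ℙ := rfl
    rw [this, hpt]
    have ha : Integrable (fun ω => S ω ^ 4 + D ω ^ 4) ℙ := hIS4.add hID4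
    have hb' : Integrable (fun ω => S ω ^ 4 + D ω ^ 4 - 2 * X ω ^ 4) ℙ := ha.sub (hIX4.const_mul 2)
    rw [MeasureTheory.integral_div, integral_sub hb' (hIY4.const_mul 2),
      integral_sub ha (hIX4.const_mul 2), integral_add hIS4 hID4,
      MeasureTheory.integral_const_mul, MeasureTheory.integral_const_mul, hES4, hED4, hES2, hED2, hEX4, hEY4]
    have hm : min s u ≤ max s u := min_le_max
    ring

end Cross

section Det

open MeasureTheory Set intervalIntegral

variable {μ' Mf : ℝ → ℝ} {t c0 : ℝ}

lemma det_ind1 (hii : ∀ a b : ℝ, IntervalIntegrable μ' volume a b)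
    (hMf : ∀ x, Mf x = ∫ y in (0:ℝ)..x, μ' y)
    {x : ℝ} (hx : x ∈ Set.Ioc 0 t) :
    ∫ y in Set.Ioc 0 t, (if x ≤ y then μ' y else 0) = Mf t - Mf x := by
  have h1 : (fun y => if x ≤ y then μ' y else 0) = Set.indicator (Set.Ici x) μ' := by
    funext y; simp [Set.indicator_apply, Set.mem_Ici]
  have h2 : Set.Ioc 0 t ∩ Set.Ici x = Set.Icc x t := by
    ext y
    constructor
    · rintro ⟨⟨_, h2⟩, h3⟩; exact ⟨h3, h2⟩
    · rintro ⟨h1', h2'⟩; exact ⟨⟨lt_of_lt_of_le hx.1 h1', h2'⟩, h1'⟩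
  rw [h1, setIntegral_indicator measurableSet_Ici, h2, integral_Icc_eq_integral_Ioc,
    ← intervalIntegral.integral_of_le hx.2, hMf, hMf]
  exact (intervalIntegral.integral_interval_sub_left (hii 0 t) (hii 0 x)).symm

lemma det_ind2 {m : ℝ} (hm0 : 0 ≤ m) (hmt : m ≤ t) :
    ∫ x in Set.Ioc 0 t, (if x ≤ m then 2 * x else 0) = m ^ 2 := by
  have h1 : (fun x : ℝ => if x ≤ m then 2 * x else 0)
      = Set.indicator (Set.Iic m) (fun x => 2 * x) := by
    funext x; simp [Set.indicator_apply, Set.mem_Iic]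
  have h2 : Set.Ioc 0 t ∩ Set.Iic m = Set.Ioc 0 m := by
    ext y
    constructor
    · rintro ⟨⟨h1', _⟩, h3⟩; exact ⟨h1', h3⟩
    · rintro ⟨h1', h2'⟩; exact ⟨⟨h1', le_trans h2' hmt⟩, h2'⟩
  rw [h1, setIntegral_indicator measurableSet_Iic, h2, ← intervalIntegral.integral_of_le hm0,
    intervalIntegral.integral_const_mul, integral_id]
  ring

lemma det_ind3 {s : ℝ} (hs : s ∈ Set.Ioc 0 t) (ht : 0 ≤ t) (c : ℝ) :
    ∫ x in Set.Ioc 0 t, (if x ≤ s then c else 0) = c * s := by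
  have h1 : (fun x : ℝ => if x ≤ s then c else 0)
      = Set.indicator (Set.Iic s) (fun _ => c) := by
    funext x; simp [Set.indicator_apply, Set.mem_Iic]
  have h2 : Set.Ioc 0 t ∩ Set.Iic s = Set.Ioc 0 s := by
    ext y
    constructor
    · rintro ⟨⟨h1', _⟩, h3⟩; exact ⟨h1', h3⟩
    · rintro ⟨h1', h2'⟩; exact ⟨⟨h1', le_trans h2' hs.2⟩, h2'⟩
  rw [h1, setIntegral_indicator measurableSet_Iic, h2, setIntegral_const]
  rw [Real.volume_real_Ioc_of_le hs.1.le, smul_eq_mul]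
  ring

lemma det_a (hm : Measurable μ') (h0 : ∀ x, 0 ≤ μ' x) (hb : ∀ x, μ' x ≤ c0)
    (hii : ∀ a b : ℝ, IntervalIntegrable μ' volume a b)
    (hMf : ∀ x, Mf x = ∫ y in (0:ℝ)..x, μ' y)
    (hMint : IntegrableOn Mf (Set.Ioc 0 t))
    (ht : 0 ≤ t) :
    ∫ s in Set.Ioc 0 t, s * μ' s = t * Mf t - ∫ x in Set.Ioc 0 t, Mf x := by
  have hc0 : 0 ≤ c0 := le_trans (h0 0) (hb 0)
  set ν := volume.restrict (Set.Ioc (0:ℝ) t) with hν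
  have hfin : IsFiniteMeasure ν := by
    constructor
    rw [hν, Measure.restrict_apply_univ, Real.volume_Ioc]
    exact ENNReal.ofReal_lt_top
  set G : ℝ → ℝ → ℝ := fun s x => if x ≤ s then μ' s else 0 with hG
  have hGm : Measurable (Function.uncurry G) := by
    have : Function.uncurry G = Set.indicator {p : ℝ × ℝ | p.2 ≤ p.1} (fun p => μ' p.1) := by
      funext p
      simp only [Function.uncurry, hG, Set.indicator_apply, Set.mem_setOf_eq]
    rw [this]
    exact (hm.comp measurable_fst).indicator (measurableSet_le measurable_snd measurable_fst)
  have hGint : Integrable (Function.uncurry G) (ν.prod ν) := by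
    refine Integrable.mono' (integrable_const c0) hGm.aestronglyMeasurable ?_
    refine Filter.Eventually.of_forall fun p => ?_
    simp only [Function.uncurry, hG]
    by_cases h : p.2 ≤ p.1
    · simp only [h, if_true, Real.norm_eq_abs]
      rw [abs_of_nonneg (h0 p.1)]
      exact hb p.1
    · simp [h, hc0]
  have hswap := MeasureTheory.integral_integral_swap (f := G) (μ := ν) (ν := ν) hGint
  have hleft : ∫ s, ∫ x, G s x ∂ν ∂ν = ∫ s in Set.Ioc 0 t, s * μ' s := by
    refine integral_congr_ae ?_
    filter_upwards [ae_restrict_mem measurableSet_Ioc] with s hs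
    rw [hν, det_ind3 hs ht (μ' s)]
    ring
  have hright : ∫ x, ∫ s, G s x ∂ν ∂ν = ∫ x in Set.Ioc 0 t, (Mf t - Mf x) := by
    refine integral_congr_ae ?_
    filter_upwards [ae_restrict_mem measurableSet_Ioc] with x hx
    rw [hν, det_ind1 hii hMf hx]
  rw [← hleft, hswap, hright, integral_sub (integrable_const _) hMint, setIntegral_const,
    Real.volume_real_Ioc_of_le ht, smul_eq_mul]
  ring

lemma det_b (hm : Measurable μ') (h0 : ∀ x, 0 ≤ μ' x) (hb : ∀ x, μ' x ≤ c0)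
    (hii : ∀ a b : ℝ, IntervalIntegrable μ' volume a b)
    (hMf : ∀ x, Mf x = ∫ y in (0:ℝ)..x, μ' y)
    (ht : 0 ≤ t) :
    ∫ p in (Set.Ioc 0 t) ×ˢ (Set.Ioc 0 t), μ' p.1 * μ' p.2 * (min p.1 p.2) ^ 2
        ∂(volume.prod volume)
      = ∫ x in Set.Ioc 0 t, (Mf t - Mf x) ^ 2 * (2 * x) := by
  have hc0 : 0 ≤ c0 := le_trans (h0 0) (hb 0)
  set ν := volume.restrict (Set.Ioc (0:ℝ) t) with hν
  have hfin : IsFiniteMeasure ν := by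
    constructor
    rw [hν, Measure.restrict_apply_univ, Real.volume_Ioc]
    exact ENNReal.ofReal_lt_top
  set A : ℝ → ℝ → ℝ := fun x s => if x ≤ s then μ' s else 0 with hA
  set H : ℝ × ℝ → ℝ → ℝ := fun p x => A x p.1 * (A x p.2 * (2 * x)) with hH
  have hAm : Measurable (fun q : ℝ × ℝ => A q.2 q.1) := by
    have : (fun q : ℝ × ℝ => A q.2 q.1)
        = Set.indicator {p : ℝ × ℝ | p.2 ≤ p.1} (fun p => μ' p.1) := by
      funext p
      simp only [hA, Set.indicator_apply, Set.mem_setOf_eq]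
    rw [this]
    exact (hm.comp measurable_fst).indicator (measurableSet_le measurable_snd measurable_fst)
  have hHm : Measurable (Function.uncurry H) := by
    have h1 : Measurable fun q : (ℝ × ℝ) × ℝ => A q.2 q.1.1 :=
      hAm.comp ((measurable_fst.comp measurable_fst).prodMk measurable_snd)
    have h2 : Measurable fun q : (ℝ × ℝ) × ℝ => A q.2 q.1.2 :=
      hAm.comp ((measurable_snd.comp measurable_fst).prodMk measurable_snd)
    exact h1.mul (h2.mul (measurable_const.mul measurable_snd))
  have hbound : ∀ (p : ℝ × ℝ) (x : ℝ), x ∈ Set.Ioc 0 t → ‖H p x‖ ≤ c0 * (c0 * (2 * t)) := by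
    intro p x hx
    have hb1 : ∀ s, |A x s| ≤ c0 := by
      intro s
      simp only [hA]
      by_cases h : x ≤ s
      · simp only [h, if_true]
        rw [abs_of_nonneg (h0 s)]; exact hb s
      · simp [h, hc0]
    have hb2 : |2 * x| ≤ 2 * t := by
      rw [abs_of_nonneg (by linarith [hx.1.le] : (0:ℝ) ≤ 2 * x)]
      linarith [hx.2]
    calc ‖H p x‖ = |A x p.1| * (|A x p.2| * |2 * x|) := by
          simp [hH, abs_mul]
      _ ≤ c0 * (c0 * (2 * t)) :=
          mul_le_mul (hb1 p.1)
            (mul_le_mul (hb1 p.2) hb2 (abs_nonneg _) hc0)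
            (by positivity) hc0
  have hHint : Integrable (Function.uncurry H) ((ν.prod ν).prod ν) := by
    refine Integrable.mono' (integrable_const (c0 * (c0 * (2 * t))))
      hHm.aestronglyMeasurable ?_
    have hrw : (ν.prod ν).prod ν
        = ((volume.prod volume).prod volume).restrict
            (((Set.Ioc 0 t) ×ˢ (Set.Ioc 0 t)) ×ˢ (Set.Ioc 0 t)) := by
      rw [hν, Measure.prod_restrict, Measure.prod_restrict]
    rw [hrw]
    filter_upwards [ae_restrict_mem ((measurableSet_Ioc.prod measurableSet_Ioc).prod
      measurableSet_Ioc)] with q hq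
    exact hbound q.1 q.2 hq.2
  have hswap := MeasureTheory.integral_integral_swap (f := H) (μ := ν.prod ν) (ν := ν) hHint
  have hleft : ∫ p, ∫ x, H p x ∂ν ∂(ν.prod ν)
      = ∫ p in (Set.Ioc 0 t) ×ˢ (Set.Ioc 0 t), μ' p.1 * μ' p.2 * (min p.1 p.2) ^ 2
          ∂(volume.prod volume) := by
    rw [← Measure.prod_restrict]
    refine integral_congr_ae ?_
    have hae : ∀ᵐ p ∂(ν.prod ν), p ∈ (Set.Ioc 0 t) ×ˢ (Set.Ioc 0 t) := by
      rw [hν, Measure.prod_restrict]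
      exact ae_restrict_mem (measurableSet_Ioc.prod measurableSet_Ioc)
    filter_upwards [hae] with p hp
    have hp1 := hp.1
    have hp2 := hp.2
    have hptw : (fun x => H p x)
        = fun x => (μ' p.1 * μ' p.2) * (if x ≤ min p.1 p.2 then 2 * x else 0) := by
      funext x
      simp only [hH, hA, le_min_iff]
      by_cases h1 : x ≤ p.1 <;> by_cases h2 : x ≤ p.2 <;>
        simp [h1, h2] <;> ring
    rw [hptw, MeasureTheory.integral_const_mul, hν,
      det_ind2 (le_min hp1.1.le hp2.1.le) (min_le_of_left_le hp1.2)]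
  have hright : ∫ x, ∫ p, H p x ∂(ν.prod ν) ∂ν
      = ∫ x in Set.Ioc 0 t, (Mf t - Mf x) ^ 2 * (2 * x) := by
    refine integral_congr_ae ?_
    filter_upwards [ae_restrict_mem measurableSet_Ioc] with x hx
    have : ∫ p, H p x ∂(ν.prod ν) = (∫ s, A x s ∂ν) * ((∫ s, A x s ∂ν) * (2 * x)) := by
      have h1 : ∫ p, H p x ∂(ν.prod ν) = (∫ p, A x p.1 * (A x p.2) ∂(ν.prod ν)) * (2 * x) := by
        rw [← MeasureTheory.integral_mul_const]
        congr 1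
        funext p
        simp only [hH]; ring
      rw [h1, MeasureTheory.integral_prod_mul (μ := ν) (ν := ν) (f := A x) (g := A x)]
      ring
    rw [this, hν]
    have hA1 : ∫ s, A x s ∂(volume.restrict (Set.Ioc 0 t)) = Mf t - Mf x :=
      det_ind1 hii hMf hx
    rw [hA1]
    ring
  rw [← hleft, hswap, hright]

end Det

set_option maxHeartbeats 2000000 in
/-- Cross moment of the memorised squares of two correlated Brownian motions. -/
theorem correlated_bm_memorised_cross_moment {Ω : Type*} [MeasureSpace Ω]
    [IsProbabilityMeasure (ℙ : Measure Ω)] (W B : ℝ → Ω → ℝ)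
    (hW : IsStdBrownian W) (hB : IsStdBrownian B)
    (hjoint : JointlyGaussianPair W B)
    (ρ : ℝ) (hρ : ρ ∈ Set.Icc (-1 : ℝ) 1)
    (hcov : ∀ s u : ℝ, 0 ≤ s → 0 ≤ u → ∫ ω, W s ω * B u ω ∂ℙ = ρ * min s u)
    (μ M : ℝ → ℝ) (hμ_nonneg : ∀ t, 0 ≤ t → 0 ≤ μ t)
    (hμ_anti : AntitoneOn μ (Set.Ici 0))
    (hμ_density : ∫ t in Set.Ioi (0:ℝ), μ t = 1)
    (hμ_moment : IntegrableOn (fun t => t * μ t) (Set.Ioi 0))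
    (hM : ∀ t, M t = ∫ s in (0:ℝ)..t, μ s)
    (t : ℝ) (ht : 0 ≤ t) :
    (∫ ω, (∫ s in (0:ℝ)..t, (B s ω) ^ 2 * μ s) * (∫ s in (0:ℝ)..t, (W s ω) ^ 2 * μ s) ∂ℙ) =
      (∫ s in (0:ℝ)..t, M s) ^ 2 - 2 * t * M t * (∫ s in (0:ℝ)..t, M s)
        + (1 + 2 * ρ ^ 2) * t ^ 2 * (M t) ^ 2
        - 8 * ρ ^ 2 * M t * (∫ s in (0:ℝ)..t, s * M s)
        + 4 * ρ ^ 2 * (∫ s in (0:ℝ)..t, s * (M s) ^ 2) := by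
  classical
  -- measurable modification of μ
  set μ' : ℝ → ℝ := fun x => μ (max x 0) with hμ'def
  have hμ'anti : Antitone μ' := fun x y hxy =>
    hμ_anti (Set.mem_Ici.mpr (le_max_right x 0)) (Set.mem_Ici.mpr (le_max_right y 0))
      (max_le_max hxy le_rfl)
  have hμ'm : Measurable μ' := hμ'anti.measurable
  have hμ'0 : ∀ x, 0 ≤ μ' x := fun x => hμ_nonneg _ (le_max_right x 0)
  have hμ'b : ∀ x, μ' x ≤ μ 0 := fun x =>
    hμ_anti (Set.mem_Ici.mpr le_rfl) (Set.mem_Ici.mpr (le_max_right x 0)) (le_max_right x 0)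
  have hμ'eq : ∀ x, 0 ≤ x → μ' x = μ x := by
    intro x hx
    rw [hμ'def]
    simp [max_eq_left hx]
  have hii : ∀ a b : ℝ, IntervalIntegrable μ' volume a b := fun a b =>
    hμ'anti.intervalIntegrable
  set Mf : ℝ → ℝ := fun x => ∫ y in (0:ℝ)..x, μ' y with hMfdef
  have hMfdef' : ∀ x, Mf x = ∫ y in (0:ℝ)..x, μ' y := fun x => rfl
  have hMfeq : ∀ x, 0 ≤ x → Mf x = M x := by
    intro x hx
    rw [hMfdef, hM x]
    refine intervalIntegral.integral_congr fun y hy => ?_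
    rw [Set.uIcc_of_le hx] at hy
    exact hμ'eq y hy.1
  have hMfcont : Continuous Mf := intervalIntegral.continuous_primitive hii 0
  -- measures
  set ν : Measure ℝ := volume.restrict (Set.Ioc (0:ℝ) t) with hνdef
  have hfin : IsFiniteMeasure ν := by
    constructor
    rw [hνdef, Measure.restrict_apply_univ, Real.volume_Ioc]
    exact ENNReal.ofReal_lt_top
  set P : Measure (ℝ × ℝ) := ν.prod ν with hPdef
  have hPbox : P = (volume.prod volume).restrict
      ((Set.Ioc (0:ℝ) t) ×ˢ (Set.Ioc (0:ℝ) t)) := by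
    rw [hPdef, hνdef, Measure.prod_restrict]
  have hboxm : MeasurableSet ((Set.Ioc (0:ℝ) t) ×ˢ (Set.Ioc (0:ℝ) t)) :=
    measurableSet_Ioc.prod measurableSet_Ioc
  have hbox : ∀ᵐ p ∂P, p ∈ (Set.Ioc (0:ℝ) t) ×ˢ (Set.Ioc (0:ℝ) t) := by
    rw [hPbox]
    exact ae_restrict_mem hboxm
  -- the integrand
  set F : Ω → ℝ × ℝ → ℝ :=
    fun ω p => (B p.1 ω ^ 2 * μ' p.1) * (W p.2 ω ^ 2 * μ' p.2) with hFdef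
  have hBj : Measurable (Function.uncurry B) :=
    measurable_uncurry_of_continuous_of_measurable hB.cont_paths hB.measurable
  have hWj : Measurable (Function.uncurry W) :=
    measurable_uncurry_of_continuous_of_measurable hW.cont_paths hW.measurable
  have hFm : Measurable (Function.uncurry F) := by
    have m1 : Measurable fun q : Ω × (ℝ × ℝ) => B q.2.1 q.1 :=
      hBj.comp ((measurable_fst.comp measurable_snd).prodMk measurable_fst)
    have m2 : Measurable fun q : Ω × (ℝ × ℝ) => W q.2.2 q.1 :=
      hWj.comp ((measurable_snd.comp measurable_snd).prodMk measurable_fst)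
    exact (((m1.pow_const 2).mul (hμ'm.comp (measurable_fst.comp measurable_snd))).mul
      ((m2.pow_const 2).mul (hμ'm.comp (measurable_snd.comp measurable_snd))))
  have hFnn : ∀ ω p, 0 ≤ F ω p := by
    intro ω p
    have := hμ'0 p.1
    have := hμ'0 p.2
    positivity
  -- cross moments
  have hcross := cross_moment W B hW hB hjoint ρ hcov
  set K : ℝ × ℝ → ℝ :=
    fun p => (μ' p.1 * μ' p.2) * (p.1 * p.2 + 2 * ρ ^ 2 * (min p.1 p.2) ^ 2) with hKdef
  have h_int_sec : ∀ p ∈ (Set.Ioc (0:ℝ) t) ×ˢ (Set.Ioc (0:ℝ) t),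
      Integrable (fun ω => F ω p) ℙ := by
    intro p hp
    have h := ((hcross p.1 p.2 hp.1.1.le hp.2.1.le).1).const_mul (μ' p.1 * μ' p.2)
    refine h.congr (Filter.EventuallyEq.of_eq ?_)
    funext ω
    simp only [hFdef]
    ring
  have h_int_val : ∀ p ∈ (Set.Ioc (0:ℝ) t) ×ˢ (Set.Ioc (0:ℝ) t),
      ∫ ω, F ω p ∂ℙ = K p := by
    intro p hp
    have he : (fun ω => F ω p)
        = fun ω => (μ' p.1 * μ' p.2) * (B p.1 ω ^ 2 * W p.2 ω ^ 2) := by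
      funext ω
      simp only [hFdef]
      ring
    rw [he, MeasureTheory.integral_const_mul, (hcross p.1 p.2 hp.1.1.le hp.2.1.le).2, hKdef]
  -- integrability on the box for bounded measurable functions
  have hbnd : ∀ (g : ℝ × ℝ → ℝ) (c : ℝ), Measurable g →
      (∀ p ∈ (Set.Ioc (0:ℝ) t) ×ˢ (Set.Ioc (0:ℝ) t), ‖g p‖ ≤ c) → Integrable g P := by
    intro g c hg hgb
    refine Integrable.mono' (integrable_const c) hg.aestronglyMeasurable ?_
    filter_upwards [hbox] with p hp
    exact hgb p hp
  have hKm : Measurable K := by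
    refine ((hμ'm.comp measurable_fst).mul (hμ'm.comp measurable_snd)).mul ?_
    exact ((measurable_fst.mul measurable_snd)).add
      (measurable_const.mul ((measurable_fst.min measurable_snd).pow_const 2))
  set CK : ℝ := (μ 0 * μ 0) * (t * t + 2 * ρ ^ 2 * t ^ 2) with hCK
  have hKb : ∀ p ∈ (Set.Ioc (0:ℝ) t) ×ˢ (Set.Ioc (0:ℝ) t), ‖K p‖ ≤ CK := by
    intro p hp
    have h1 : (0:ℝ) < p.1 := hp.1.1
    have h2 : (0:ℝ) < p.2 := hp.2.1
    have h3 : p.1 ≤ t := hp.1.2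
    have h4 : p.2 ≤ t := hp.2.2
    have hmin1 : (0:ℝ) ≤ min p.1 p.2 := le_min h1.le h2.le
    have hmin2 : min p.1 p.2 ≤ t := min_le_of_left_le h3
    have hμ1 := hμ'0 p.1
    have hμ2 := hμ'0 p.2
    have hμ3 := hμ'b p.1
    have hμ4 := hμ'b p.2
    have hnn : (0:ℝ) ≤ μ' p.1 * μ' p.2 * (p.1 * p.2 + 2 * ρ ^ 2 * (min p.1 p.2) ^ 2) := by
      refine mul_nonneg (mul_nonneg hμ1 hμ2) ?_
      nlinarith [mul_nonneg (sq_nonneg ρ) (sq_nonneg (min p.1 p.2)), mul_nonneg h1.le h2.le]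
    rw [Real.norm_eq_abs, hKdef, abs_of_nonneg hnn]
    refine mul_le_mul (mul_le_mul hμ3 hμ4 hμ2 (le_trans hμ1 hμ3)) ?_
      (by nlinarith [mul_nonneg (sq_nonneg ρ) (sq_nonneg (min p.1 p.2)), mul_nonneg h1.le h2.le])
      (by nlinarith [sq_nonneg t, mul_nonneg (sq_nonneg ρ) (sq_nonneg t), sq_nonneg (μ 0)])
    have : min p.1 p.2 ^ 2 ≤ t ^ 2 := by nlinarith
    nlinarith
  have hKint : Integrable K P := hbnd K CK hKm hKb
  -- Fubini swap for the main integral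
  have hFint : Integrable (Function.uncurry F) (Measure.prod (ℙ : Measure Ω) P) := by
    rw [MeasureTheory.integrable_prod_iff' hFm.aestronglyMeasurable]
    constructor
    · filter_upwards [hbox] with p hp
      exact h_int_sec p hp
    · refine hKint.congr ?_
      filter_upwards [hbox] with p hp
      rw [← h_int_val p hp]
      refine integral_congr_ae (Filter.Eventually.of_forall fun ω => ?_)
      simp only [Function.uncurry_apply_pair]
      rw [Real.norm_of_nonneg (hFnn ω p)]
  have hswap := MeasureTheory.integral_integral_swap (f := F) hFint
  -- rewrite the left-hand side
  have hLHS : (∫ ω, (∫ s in (0:ℝ)..t, (B s ω) ^ 2 * μ s)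
        * (∫ s in (0:ℝ)..t, (W s ω) ^ 2 * μ s) ∂ℙ)
      = ∫ ω, ∫ p, F ω p ∂P ∂ℙ := by
    refine integral_congr_ae (Filter.Eventually.of_forall fun ω => ?_)
    beta_reduce
    have e1 : ∫ s in (0:ℝ)..t, (B s ω) ^ 2 * μ s = ∫ s, B s ω ^ 2 * μ' s ∂ν := by
      rw [intervalIntegral.integral_of_le ht, hνdef]
      refine setIntegral_congr_fun measurableSet_Ioc fun s hs => ?_
      rw [hμ'eq s hs.1.le]
    have e2 : ∫ s in (0:ℝ)..t, (W s ω) ^ 2 * μ s = ∫ s, W s ω ^ 2 * μ' s ∂ν := by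
      rw [intervalIntegral.integral_of_le ht, hνdef]
      refine setIntegral_congr_fun measurableSet_Ioc fun s hs => ?_
      rw [hμ'eq s hs.1.le]
    rw [e1, e2, hPdef, ← MeasureTheory.integral_prod_mul (μ := ν) (ν := ν)
      (f := fun s => B s ω ^ 2 * μ' s) (g := fun s => W s ω ^ 2 * μ' s)]
  -- the kernel integral
  have hmid : ∫ p, ∫ ω, F ω p ∂ℙ ∂P = ∫ p, K p ∂P := by
    refine integral_congr_ae ?_
    filter_upwards [hbox] with p hp
    exact h_int_val p hp
  -- split K
  set K1 : ℝ × ℝ → ℝ := fun p => (fun s => s * μ' s) p.1 * (fun s => s * μ' s) p.2 with hK1def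
  set K2 : ℝ × ℝ → ℝ := fun p => μ' p.1 * μ' p.2 * (min p.1 p.2) ^ 2 with hK2def
  have hK1m : Measurable K1 :=
    (measurable_fst.mul (hμ'm.comp measurable_fst)).mul
      (measurable_snd.mul (hμ'm.comp measurable_snd))
  have hK2m : Measurable K2 :=
    ((hμ'm.comp measurable_fst).mul (hμ'm.comp measurable_snd)).mul
      ((measurable_fst.min measurable_snd).pow_const 2)
  have hK1b : ∀ p ∈ (Set.Ioc (0:ℝ) t) ×ˢ (Set.Ioc (0:ℝ) t), ‖K1 p‖ ≤ (t * μ 0) * (t * μ 0) := by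
    intro p hp
    rw [Real.norm_eq_abs, hK1def, abs_of_nonneg
      (by have := hμ'0 p.1; have := hμ'0 p.2; have := hp.1.1.le; have := hp.2.1.le; positivity)]
    exact mul_le_mul (mul_le_mul hp.1.2 (hμ'b p.1) (hμ'0 p.1) ht)
      (mul_le_mul hp.2.2 (hμ'b p.2) (hμ'0 p.2) ht)
      (by have := hμ'0 p.2; have := hp.2.1.le; positivity)
      (by have h0 := le_trans (hμ'0 0) (hμ'b 0); positivity)
  have hK2b : ∀ p ∈ (Set.Ioc (0:ℝ) t) ×ˢ (Set.Ioc (0:ℝ) t), ‖K2 p‖ ≤ (μ 0 * μ 0) * t ^ 2 := by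
    intro p hp
    have hmin1 : (0:ℝ) ≤ min p.1 p.2 := le_min hp.1.1.le hp.2.1.le
    have hmin2 : min p.1 p.2 ≤ t := min_le_of_left_le hp.1.2
    rw [Real.norm_eq_abs, hK2def, abs_of_nonneg
      (by have := hμ'0 p.1; have := hμ'0 p.2; positivity)]
    refine mul_le_mul (mul_le_mul (hμ'b p.1) (hμ'b p.2) (hμ'0 p.2)
      (le_trans (hμ'0 p.1) (hμ'b p.1))) (by nlinarith) (by positivity) ?_
    have h0 := le_trans (hμ'0 0) (hμ'b 0)
    positivity
  have hK1int : Integrable K1 P := hbnd K1 _ hK1m hK1b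
  have hK2int : Integrable K2 P := hbnd K2 _ hK2m hK2b
  have hKsplit : ∫ p, K p ∂P = ∫ p, K1 p ∂P + 2 * ρ ^ 2 * ∫ p, K2 p ∂P := by
    have he : K = fun p => K1 p + (2 * ρ ^ 2) * K2 p := by
      funext p
      simp only [hKdef, hK1def, hK2def]
      ring
    rw [he, integral_add hK1int (hK2int.const_mul _), MeasureTheory.integral_const_mul]
  -- evaluate the two pieces
  have hK1val : ∫ p, K1 p ∂P = (t * Mf t - ∫ x, Mf x ∂ν) ^ 2 := by
    rw [hK1def, hPdef, MeasureTheory.integral_prod_mul (μ := ν) (ν := ν)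
      (f := fun s => s * μ' s) (g := fun s => s * μ' s)]
    rw [hνdef, det_a hμ'm hμ'0 hμ'b hii hMfdef' (hMfcont.integrableOn_Ioc) ht]
    rw [← hνdef]
    ring
  have hK2val : ∫ p, K2 p ∂P = ∫ x, (Mf t - Mf x) ^ 2 * (2 * x) ∂ν := by
    rw [hPbox, hK2def, hνdef]
    exact det_b hμ'm hμ'0 hμ'b hii hMfdef' ht
  -- expand the last integral
  have hIx : ∫ x, x ∂ν = t ^ 2 / 2 := by
    rw [hνdef, ← intervalIntegral.integral_of_le ht, integral_id]
    ring
  have hIMf : IntegrableOn Mf (Set.Ioc 0 t) := hMfcont.integrableOn_Ioc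
  have hIxMf : IntegrableOn (fun x => x * Mf x) (Set.Ioc 0 t) :=
    (continuous_id.mul hMfcont).integrableOn_Ioc
  have hIxMf2 : IntegrableOn (fun x => x * Mf x ^ 2) (Set.Ioc 0 t) :=
    (continuous_id.mul (hMfcont.pow 2)).integrableOn_Ioc
  have hIxc : IntegrableOn (fun x : ℝ => x) (Set.Ioc 0 t) := continuous_id.integrableOn_Ioc
  have hK2exp : ∫ x, (Mf t - Mf x) ^ 2 * (2 * x) ∂ν
      = Mf t ^ 2 * t ^ 2 - 4 * Mf t * (∫ x, x * Mf x ∂ν) + 2 * ∫ x, x * Mf x ^ 2 ∂ν := by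
    have he : (fun x => (Mf t - Mf x) ^ 2 * (2 * x))
        = fun x => (2 * Mf t ^ 2) * x - (4 * Mf t) * (x * Mf x) + 2 * (x * Mf x ^ 2) := by
      funext x
      ring
    have i1 : Integrable (fun x => (2 * Mf t ^ 2) * x) ν := hIxc.const_mul _
    have i2 : Integrable (fun x => (4 * Mf t) * (x * Mf x)) ν := hIxMf.const_mul _
    have i3 : Integrable (fun x => 2 * (x * Mf x ^ 2)) ν := hIxMf2.const_mul _
    have i12 : Integrable (fun x => (2 * Mf t ^ 2) * x - (4 * Mf t) * (x * Mf x)) ν := i1.sub i2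
    rw [he]
    rw [integral_add i12 i3, integral_sub i1 i2,
      MeasureTheory.integral_const_mul, MeasureTheory.integral_const_mul,
      MeasureTheory.integral_const_mul, hIx]
    ring
  -- convert target integrals
  have hconv0 : ∫ s in (0:ℝ)..t, M s = ∫ x, Mf x ∂ν := by
    rw [intervalIntegral.integral_of_le ht, hνdef]
    refine setIntegral_congr_fun measurableSet_Ioc fun s hs => (hMfeq s hs.1.le).symm
  have hconv1 : ∫ s in (0:ℝ)..t, s * M s = ∫ x, x * Mf x ∂ν := by
    rw [intervalIntegral.integral_of_le ht, hνdef]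
    refine setIntegral_congr_fun measurableSet_Ioc fun s hs => ?_
    rw [hMfeq s hs.1.le]
  have hconv2 : ∫ s in (0:ℝ)..t, s * (M s) ^ 2 = ∫ x, x * Mf x ^ 2 ∂ν := by
    rw [intervalIntegral.integral_of_le ht, hνdef]
    refine setIntegral_congr_fun measurableSet_Ioc fun s hs => ?_
    rw [hMfeq s hs.1.le]
  have hMt : M t = Mf t := (hMfeq t ht).symm
  -- assemble
  rw [hLHS, hswap, hmid, hKsplit, hK1val, hK2val, hK2exp, hconv0, hconv1, hconv2, hMt]
  ring
end

section
/- For the uniform memory kernel μ(t) = (1/r)·1_{t<r} with r > 0, the functions α(τ) and β(τ) satisfy α(τ) = r²/12 and β(τ) = 5r²/3 for all τ > r; consequently the asphericity A₂ = 1 - 4 lim_{τ→∞} α(τ)/β(τ) equals 4/5. -/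
open Filter intervalIntegral

/-- Cumulative of the memory kernel: `M(t) = ∫_0^t μ(s) ds`. -/
noncomputable def cumul (μ : ℝ → ℝ) (t : ℝ) : ℝ := ∫ s in (0:ℝ)..t, μ s

/-- The function `α(τ)` from the Asphericity Theorem. -/
noncomputable def alphaFn (μ : ℝ → ℝ) (τ : ℝ) : ℝ :=
  (1/2) * ((∫ s in (0:ℝ)..τ, s * μ s) ^ 2 + (∫ s in (0:ℝ)..τ, cumul μ s) ^ 2
      - τ ^ 2 * (cumul μ τ) ^ 2)
  + ∫ s in (0:ℝ)..τ, ((4 * s - τ) * cumul μ τ - 2 * s * cumul μ s) * cumul μ s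

/-- The function `β(τ)` from the Asphericity Theorem. -/
noncomputable def betaFn (μ : ℝ → ℝ) (τ : ℝ) : ℝ :=
  2 * ((∫ s in (0:ℝ)..τ, s * μ s) ^ 2 + (∫ s in (0:ℝ)..τ, cumul μ s) ^ 2
      + 3 * τ ^ 2 * (cumul μ τ) ^ 2)
  - 4 * ∫ s in (0:ℝ)..τ, ((4 * s + τ) * cumul μ τ - 2 * s * cumul μ s) * cumul μ s

/-- Integral of a cubic polynomial. -/
lemma integral_cubic (a b c0 c1 c2 c3 : ℝ) :
    ∫ s in a..b, (c0 + c1 * s + c2 * s ^ 2 + c3 * s ^ 3) =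
      c0 * (b - a) + c1 * (b ^ 2 - a ^ 2) / 2 + c2 * (b ^ 3 - a ^ 3) / 3
        + c3 * (b ^ 4 - a ^ 4) / 4 := by
  have key : ∫ s in a..b, (c0 + c1 * s + c2 * s ^ 2 + c3 * s ^ 3) =
      (c0 * b + c1 * b ^ 2 / 2 + c2 * b ^ 3 / 3 + c3 * b ^ 4 / 4)
      - (c0 * a + c1 * a ^ 2 / 2 + c2 * a ^ 3 / 3 + c3 * a ^ 4 / 4) := by
    apply intervalIntegral.integral_eq_sub_of_hasDerivAt
    · intro x _
      have h1 : HasDerivAt (fun s : ℝ => c0 * s) c0 x := by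
        simpa using (hasDerivAt_id x).const_mul c0
      have h2 : HasDerivAt (fun s : ℝ => c1 * s ^ 2 / 2) (c1 * x) x := by
        have := ((hasDerivAt_pow 2 x).const_mul c1).div_const 2
        refine this.congr_deriv ?_
        push_cast
        ring
      have h3 : HasDerivAt (fun s : ℝ => c2 * s ^ 3 / 3) (c2 * x ^ 2) x := by
        have := ((hasDerivAt_pow 3 x).const_mul c2).div_const 3
        refine this.congr_deriv ?_
        push_cast
        ring
      have h4 : HasDerivAt (fun s : ℝ => c3 * s ^ 4 / 4) (c3 * x ^ 3) x := by
        have := ((hasDerivAt_pow 4 x).const_mul c3).div_const 4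
        refine this.congr_deriv ?_
        push_cast
        ring
      exact ((h1.add h2).add h3).add h4
    · apply Continuous.intervalIntegrable
      fun_prop
  rw [key]; ring

theorem asphericity_uniform_kernel (r : ℝ) (hr : 0 < r) :
    (∀ τ : ℝ, r < τ →
        alphaFn (fun t => if t < r then 1 / r else 0) τ = r ^ 2 / 12 ∧
        betaFn (fun t => if t < r then 1 / r else 0) τ = 5 / 3 * r ^ 2) ∧
    Tendsto (fun τ : ℝ =>
        1 - 4 * (alphaFn (fun t => if t < r then 1 / r else 0) τ /
          betaFn (fun t => if t < r then 1 / r else 0) τ))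
      atTop (nhds (4 / 5)) := by
  have hr' : r ≠ 0 := ne_of_gt hr
  set f : ℝ → ℝ := fun t => if t < r then 1 / r else 0 with hf
  set g : ℝ → ℝ := fun s => if s ≤ r then s / r else 1 with hg
  -- a.e. avoid the point r
  have hae : ∀ᵐ x : ℝ, x ≠ r := by
    refine MeasureTheory.ae_iff.mpr ?_
    simpa using measure_singleton r
  -- integrability of f
  have hfind : f = Set.indicator (Set.Iio r) (fun _ => 1 / r) := by
    funext x
    simp [hf, Set.indicator_apply, Set.mem_Iio]
  have hint : ∀ a b : ℝ, IntervalIntegrable f MeasureTheory.volume a b := by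
    intro a b
    rw [intervalIntegrable_iff, hfind]
    have hc : MeasureTheory.IntegrableOn (fun _ : ℝ => (1 / r : ℝ)) (Set.uIoc a b) := by
      apply (MeasureTheory.integrableOn_const_iff (C := (1 / r : ℝ))).mpr
      right
      rw [Set.uIoc]
      exact measure_Ioc_lt_top
    exact hc.indicator measurableSet_Iio
  -- cumulative of f is g
  have hM : cumul f = g := by
    funext s
    by_cases hs : s ≤ r
    · have : (∫ t in (0:ℝ)..s, f t) = ∫ t in (0:ℝ)..s, (1 / r : ℝ) := by
        apply intervalIntegral.integral_congr_ae
        filter_upwards [hae] with x hx hmem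
        have hxle : x ≤ r := by
          rcases Set.mem_uIoc.mp hmem with h | h
          · exact h.2.trans hs
          · exact h.2.trans hr.le
        have : x < r := lt_of_le_of_ne hxle hx
        simp [hf, this]
      simp only [cumul, this, intervalIntegral.integral_const, smul_eq_mul, hg]
      rw [if_pos hs]
      ring
    · push_neg at hs
      have h1 : (∫ t in (0:ℝ)..r, f t) = 1 := by
        have : (∫ t in (0:ℝ)..r, f t) = ∫ t in (0:ℝ)..r, (1 / r : ℝ) := by
          apply intervalIntegral.integral_congr_ae
          filter_upwards [hae] with x hx hmem
          have hxle : x ≤ r := by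
            rcases Set.mem_uIoc.mp hmem with h | h
            · exact h.2
            · exact h.2.trans hr.le
          have : x < r := lt_of_le_of_ne hxle hx
          simp [hf, this]
        rw [this, intervalIntegral.integral_const, smul_eq_mul]
        field_simp
        ring
      have h2 : (∫ t in r..s, f t) = 0 := by
        have : Set.EqOn f (fun _ => (0:ℝ)) (Set.uIcc r s) := by
          intro x hx
          have : r ≤ x := by
            rcases Set.mem_uIcc.mp hx with h | h
            · exact h.1
            · exact hs.le.trans h.1
          simp [hf, not_lt.mpr this]
        rw [intervalIntegral.integral_congr this]
        simp
      have := intervalIntegral.integral_add_adjacent_intervals (hint 0 r) (hint r s)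
      simp only [cumul, hg, ← this, h1, h2, if_neg (not_le.mpr hs)]
      ring
  have hgcont : Continuous g := by
    apply Continuous.if_le (continuous_id.div_const r) continuous_const continuous_id
      continuous_const
    intro x hx
    simp only [id_eq] at hx
    show x / r = 1
    rw [hx]
    field_simp
  have hgτ : ∀ τ : ℝ, r < τ → g τ = 1 := by
    intro τ hτ
    simp [hg, not_le.mpr hτ]
  -- the three integrals
  have hI1 : ∀ τ : ℝ, r < τ → (∫ s in (0:ℝ)..τ, s * f s) = r / 2 := by
    intro τ hτ
    have p1 : (∫ s in (0:ℝ)..r, s * f s) = r / 2 := by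
      have : (∫ s in (0:ℝ)..r, s * f s) = ∫ s in (0:ℝ)..r, (0 + (1/r) * s + 0 * s ^ 2 + 0 * s ^ 3) := by
        apply intervalIntegral.integral_congr_ae
        filter_upwards [hae] with x hx hmem
        have hxle : x ≤ r := by
          rcases Set.mem_uIoc.mp hmem with h | h
          · exact h.2
          · exact h.2.trans hr.le
        have : x < r := lt_of_le_of_ne hxle hx
        simp [hf, this]
        ring
      rw [this, integral_cubic]
      field_simp
      ring
    have p2 : (∫ s in r..τ, s * f s) = 0 := by
      have : Set.EqOn (fun s => s * f s) (fun _ => (0:ℝ)) (Set.uIcc r τ) := by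
        intro x hx
        have : r ≤ x := by
          rcases Set.mem_uIcc.mp hx with h | h
          · exact h.1
          · exact hτ.le.trans h.1
        simp [hf, not_lt.mpr this]
      rw [intervalIntegral.integral_congr this]
      simp
    have hint1 : ∀ a b : ℝ, IntervalIntegrable (fun s => s * f s) MeasureTheory.volume a b :=
      fun a b => (hint a b).continuousOn_mul continuous_id.continuousOn
    rw [← intervalIntegral.integral_add_adjacent_intervals (hint1 0 r) (hint1 r τ), p1, p2,
      add_zero]
  have hI2 : ∀ τ : ℝ, r < τ → (∫ s in (0:ℝ)..τ, g s) = τ - r / 2 := by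
    intro τ hτ
    have p1 : (∫ s in (0:ℝ)..r, g s) = r / 2 := by
      have : Set.EqOn g (fun s => 0 + (1/r) * s + 0 * s ^ 2 + 0 * s ^ 3) (Set.uIcc 0 r) := by
        intro x hx
        rw [Set.uIcc_of_le hr.le] at hx
        simp only [hg]
        rw [if_pos hx.2]
        ring
      rw [intervalIntegral.integral_congr this, integral_cubic]
      field_simp
      ring
    have p2 : (∫ s in r..τ, g s) = τ - r := by
      have : Set.EqOn g (fun _ => (1:ℝ)) (Set.uIcc r τ) := by
        intro x hx
        rw [Set.uIcc_of_le hτ.le] at hx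
        simp only [hg]
        rcases eq_or_lt_of_le hx.1 with h | h
        · rw [if_pos h.symm.le, ← h]; field_simp
        · rw [if_neg (not_le.mpr h)]
      rw [intervalIntegral.integral_congr this, intervalIntegral.integral_const, smul_eq_mul,
        mul_one]
    have hgi : ∀ a b : ℝ, IntervalIntegrable g MeasureTheory.volume a b :=
      fun a b => hgcont.intervalIntegrable a b
    rw [← intervalIntegral.integral_add_adjacent_intervals (hgi 0 r) (hgi r τ), p1, p2]
    ring
  -- generic big integral : ∫ ((4s + ε τ) - 2 s g s) * g s for ε = ±1
  have hbig : ∀ (ε τ : ℝ), r < τ →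
      (∫ s in (0:ℝ)..τ, ((4 * s + ε * τ) * 1 - 2 * s * g s) * g s)
        = 4 * r ^ 2 / 3 + ε * τ * r / 2 - r ^ 2 / 2 + (τ ^ 2 - r ^ 2) + ε * τ * (τ - r) := by
    intro ε τ hτ
    have hcont : Continuous fun s => ((4 * s + ε * τ) * 1 - 2 * s * g s) * g s := by
      have h1 : Continuous fun s : ℝ => (4 * s + ε * τ) * 1 - 2 * s * g s :=
        (((continuous_const.mul continuous_id).add continuous_const).mul continuous_const).sub
          ((continuous_const.mul continuous_id).mul hgcont)
      exact h1.mul hgcont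
    have p1 : (∫ s in (0:ℝ)..r, ((4 * s + ε * τ) * 1 - 2 * s * g s) * g s)
        = 4 * r ^ 2 / 3 + ε * τ * r / 2 - r ^ 2 / 2 := by
      have : Set.EqOn (fun s => ((4 * s + ε * τ) * 1 - 2 * s * g s) * g s)
          (fun s => 0 + (ε * τ / r) * s + (4 / r) * s ^ 2 + (-2 / r ^ 2) * s ^ 3)
          (Set.uIcc 0 r) := by
        intro x hx
        rw [Set.uIcc_of_le hr.le] at hx
        simp only [hg]
        rw [if_pos hx.2]
        field_simp
        ring
      rw [intervalIntegral.integral_congr this, integral_cubic]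
      field_simp
      ring
    have p2 : (∫ s in r..τ, ((4 * s + ε * τ) * 1 - 2 * s * g s) * g s)
        = (τ ^ 2 - r ^ 2) + ε * τ * (τ - r) := by
      have : Set.EqOn (fun s => ((4 * s + ε * τ) * 1 - 2 * s * g s) * g s)
          (fun s => (ε * τ) + 2 * s + 0 * s ^ 2 + 0 * s ^ 3) (Set.uIcc r τ) := by
        intro x hx
        rw [Set.uIcc_of_le hτ.le] at hx
        have hgx : g x = 1 := by
          simp only [hg]
          rcases eq_or_lt_of_le hx.1 with h | h
          · rw [if_pos h.symm.le, ← h]; field_simp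
          · rw [if_neg (not_le.mpr h)]
        simp only [hgx]
        ring
      rw [intervalIntegral.integral_congr this, integral_cubic]
      ring
    rw [← intervalIntegral.integral_add_adjacent_intervals
      (hcont.intervalIntegrable 0 r) (hcont.intervalIntegrable r τ), p1, p2]
    ring
  have main : ∀ τ : ℝ, r < τ →
      alphaFn f τ = r ^ 2 / 12 ∧ betaFn f τ = 5 / 3 * r ^ 2 := by
    intro τ hτ
    have hIα := hbig (-1) τ hτ
    have hIβ := hbig 1 τ hτ
    have hcτ : cumul f τ = 1 := by rw [hM]; exact hgτ τ hτ
    constructor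
    · rw [alphaFn, hM, hgτ τ hτ, hI1 τ hτ, hI2 τ hτ]
      have : (∫ s in (0:ℝ)..τ, ((4 * s - τ) * 1 - 2 * s * g s) * g s)
          = ∫ s in (0:ℝ)..τ, ((4 * s + (-1) * τ) * 1 - 2 * s * g s) * g s := by
        congr 1; funext s; ring
      rw [this, hIα]
      ring
    · rw [betaFn, hM, hgτ τ hτ, hI1 τ hτ, hI2 τ hτ]
      have : (∫ s in (0:ℝ)..τ, ((4 * s + τ) * 1 - 2 * s * g s) * g s)
          = ∫ s in (0:ℝ)..τ, ((4 * s + 1 * τ) * 1 - 2 * s * g s) * g s := by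
        congr 1; funext s; ring
      rw [this, hIβ]
      ring
  refine ⟨main, ?_⟩
  have hev : (fun τ : ℝ => 1 - 4 * (alphaFn f τ / betaFn f τ))
      =ᶠ[atTop] fun _ => (4 / 5 : ℝ) := by
    filter_upwards [eventually_gt_atTop r] with τ hτ
    obtain ⟨ha, hb⟩ := main τ hτ
    rw [ha, hb,
      show (r ^ 2 / 12) / (5 / 3 * r ^ 2) = 1 / 20 by field_simp; ring]
    norm_num
  exact Tendsto.congr' hev.symm tendsto_const_nhds
end

section
/- For the exponential memory kernel μ(t) = e^{-t}, the asphericity A₂ = 1 - 4 lim_{τ→∞} α(τ)/β(τ) equals 2/3. -/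
open Filter intervalIntegral

lemma hasDerivAt_expneg (s : ℝ) :
    HasDerivAt (fun x : ℝ => Real.exp (-x)) (-Real.exp (-s)) s := by
  exact ((Real.hasDerivAt_exp (-s)).comp s ((hasDerivAt_id' (𝕜 := ℝ) (x := s)).neg)).congr_deriv (by ring)

lemma cumul_exp (t : ℝ) : cumul (fun t => Real.exp (-t)) t = 1 - Real.exp (-t) := by
  unfold cumul
  have h : ∀ s ∈ Set.uIcc (0:ℝ) t, HasDerivAt (fun x : ℝ => -Real.exp (-x)) (Real.exp (-s)) s :=
    fun s _ => by exact (hasDerivAt_expneg s).neg.congr_deriv (by ring)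
  rw [integral_eq_sub_of_hasDerivAt h (Continuous.intervalIntegrable (by fun_prop) 0 t)]
  simp [Real.exp_zero]
  ring

lemma int_s_exp (τ : ℝ) : (∫ s in (0:ℝ)..τ, s * Real.exp (-s)) = 1 - (τ+1)*Real.exp (-τ) := by
  have h : ∀ s ∈ Set.uIcc (0:ℝ) τ,
      HasDerivAt (fun x : ℝ => -(x+1)*Real.exp (-x)) (s * Real.exp (-s)) s := fun s _ => by
    have := (((hasDerivAt_id' (𝕜 := ℝ) (x := s)).add_const (1:ℝ)).neg).mul (hasDerivAt_expneg s)
    exact this.congr_deriv (by simp only [Pi.neg_apply]; ring)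
  rw [integral_eq_sub_of_hasDerivAt h (Continuous.intervalIntegrable (by fun_prop) 0 τ)]
  simp only [neg_zero, Real.exp_zero]; ring

lemma int_cumul (τ : ℝ) :
    (∫ s in (0:ℝ)..τ, cumul (fun t => Real.exp (-t)) s) = τ - 1 + Real.exp (-τ) := by
  simp only [cumul_exp]
  have h : ∀ s ∈ Set.uIcc (0:ℝ) τ,
      HasDerivAt (fun x : ℝ => x + Real.exp (-x)) (1 - Real.exp (-s)) s := fun s _ => by
    have := (hasDerivAt_id' (𝕜 := ℝ) (x := s)).add (hasDerivAt_expneg s)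
    exact this.congr_deriv (by ring)
  rw [integral_eq_sub_of_hasDerivAt h (Continuous.intervalIntegrable (by fun_prop) 0 τ)]
  simp only [neg_zero, Real.exp_zero]; ring

lemma hasDerivAt_F (A c s : ℝ) :
    HasDerivAt (fun x : ℝ => A*(2*x^2 + c*x + (4*x + c + 4) * Real.exp (-x))
        - x^2 - 4*(x+1)*Real.exp (-x) + (x+1/2)*Real.exp (-x)^2)
      (((4*s + c)*A - 2*s*(1 - Real.exp (-s)))*(1 - Real.exp (-s))) s := by
  have he := hasDerivAt_expneg s
  have h1 : HasDerivAt (fun x : ℝ => 2*x^2 + c*x + (4*x + c + 4) * Real.exp (-x))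
      ((4*s + c) + (4*Real.exp (-s) + (4*s + c + 4)*(-Real.exp (-s)))) s := by
    have := (((hasDerivAt_pow 2 s).const_mul (2:ℝ)).add ((hasDerivAt_id' (𝕜 := ℝ) (x := s)).const_mul c)).add
      (((((hasDerivAt_id' (𝕜 := ℝ) (x := s)).const_mul (4:ℝ)).add_const c).add_const (4:ℝ)).mul he)
    exact this.congr_deriv (by push_cast; ring)
  have h2 : HasDerivAt (fun x : ℝ => 4*(x+1)*Real.exp (-x))
      (4*Real.exp (-s) + 4*(s+1)*(-Real.exp (-s))) s := by
    have := ((((hasDerivAt_id' (𝕜 := ℝ) (x := s)).add_const (1:ℝ)).const_mul (4:ℝ)).mul he)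
    exact this.congr_deriv (by ring)
  have h3 : HasDerivAt (fun x : ℝ => (x+1/2)*Real.exp (-x)^2)
      (Real.exp (-s)^2 + (s+1/2)*(2*Real.exp (-s)*(-Real.exp (-s)))) s := by
    have hp : HasDerivAt (fun x : ℝ => Real.exp (-x)^2)
        (2*Real.exp (-s)*(-Real.exp (-s))) s := by
      have := he.pow 2
      exact this.congr_deriv (by push_cast; ring)
    have := ((hasDerivAt_id' (𝕜 := ℝ) (x := s)).add_const (1/2:ℝ)).mul hp
    exact this.congr_deriv (by ring)
  have := (((h1.const_mul A).sub (hasDerivAt_pow 2 s)).sub h2).add h3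
  exact this.congr_deriv (by push_cast; ring)

lemma intJ (τ c : ℝ) :
    (∫ s in (0:ℝ)..τ, ((4*s + c)*(1 - Real.exp (-τ)) - 2*s*(1 - Real.exp (-s)))*(1 - Real.exp (-s)))
    = (1 - Real.exp (-τ))*(2*τ^2 + c*τ + (4*τ + c + 4)*Real.exp (-τ) - (c + 4))
      - τ^2 - 4*(τ+1)*Real.exp (-τ) + (τ+1/2)*Real.exp (-τ)^2 + 7/2 := by
  rw [integral_eq_sub_of_hasDerivAt
      (fun s _ => hasDerivAt_F (1 - Real.exp (-τ)) c s)
      (Continuous.intervalIntegrable (by fun_prop) 0 τ)]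
  simp only [neg_zero, Real.exp_zero]
  ring

lemma alpha_closed (τ : ℝ) : alphaFn (fun t => Real.exp (-t)) τ
    = 1/2 + 2*Real.exp (-τ) - 5/2*(Real.exp (-τ))^2 - 2*(τ*Real.exp (-τ))
      - (τ*Real.exp (-τ))*Real.exp (-τ) := by
  unfold alphaFn
  rw [int_cumul]
  simp only [cumul_exp]
  have h1 : (∫ s in (0:ℝ)..τ,
        ((4*s - τ)*(1 - Real.exp (-τ)) - 2*s*(1 - Real.exp (-s)))*(1 - Real.exp (-s)))
      = (∫ s in (0:ℝ)..τ,
        ((4*s + (-τ))*(1 - Real.exp (-τ)) - 2*s*(1 - Real.exp (-s)))*(1 - Real.exp (-s))) :=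
    intervalIntegral.integral_congr (fun s _ => by ring)
  rw [int_s_exp, h1, intJ τ (-τ)]
  ring

lemma beta_closed (τ : ℝ) : betaFn (fun t => Real.exp (-t)) τ
    = 6 - 24*Real.exp (-τ) + 18*(Real.exp (-τ))^2 - 8*(τ*Real.exp (-τ))
      + 20*((τ*Real.exp (-τ))*Real.exp (-τ)) + 8*((τ^2*Real.exp (-τ))*Real.exp (-τ)) := by
  unfold betaFn
  rw [int_cumul]
  simp only [cumul_exp]
  rw [int_s_exp, intJ τ τ]
  ring

theorem asphericity_exponential_kernel :
    Tendsto (fun τ : ℝ =>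
        1 - 4 * (alphaFn (fun t => Real.exp (-t)) τ / betaFn (fun t => Real.exp (-t)) τ))
      atTop (nhds (2 / 3)) := by
  have hE : Tendsto (fun τ : ℝ => Real.exp (-τ)) atTop (nhds 0) :=
    Real.tendsto_exp_neg_atTop_nhds_zero
  have hτE : Tendsto (fun τ : ℝ => τ * Real.exp (-τ)) atTop (nhds 0) := by
    simpa using Real.tendsto_pow_mul_exp_neg_atTop_nhds_zero 1
  have hτ2E : Tendsto (fun τ : ℝ => τ^2 * Real.exp (-τ)) atTop (nhds 0) :=
    Real.tendsto_pow_mul_exp_neg_atTop_nhds_zero 2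
  have hα : Tendsto (fun τ : ℝ => alphaFn (fun t => Real.exp (-t)) τ) atTop (nhds (1/2)) := by
    have h := ((((tendsto_const_nhds (x := (1/2:ℝ)) (f := atTop)).add
        (hE.const_mul 2)).sub ((hE.pow 2).const_mul (5/2))).sub
        (hτE.const_mul 2)).sub (hτE.mul hE)
    have h2 : Tendsto (fun τ : ℝ => alphaFn (fun t => Real.exp (-t)) τ) atTop
        (nhds (1/2 + 2*0 - 5/2*0^2 - 2*0 - 0*0)) := by
      refine Tendsto.congr (fun τ => (alpha_closed τ).symm) ?_
      convert h using 2 <;> ring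
    simpa using h2
  have hβ : Tendsto (fun τ : ℝ => betaFn (fun t => Real.exp (-t)) τ) atTop (nhds 6) := by
    have h := (((((tendsto_const_nhds (x := (6:ℝ)) (f := atTop)).sub
        (hE.const_mul 24)).add ((hE.pow 2).const_mul 18)).sub
        (hτE.const_mul 8)).add ((hτE.mul hE).const_mul 20)).add ((hτ2E.mul hE).const_mul 8)
    have h2 : Tendsto (fun τ : ℝ => betaFn (fun t => Real.exp (-t)) τ) atTop
        (nhds (6 - 24*0 + 18*0^2 - 8*0 + 20*(0*0) + 8*(0*0))) := by
      refine Tendsto.congr (fun τ => (beta_closed τ).symm) ?_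
      convert h using 2 <;> ring
    simpa using h2
  have h := (tendsto_const_nhds (x := (1:ℝ)) (f := atTop)).sub
    ((hα.div hβ (by norm_num)).const_mul 4)
  convert h using 2
  norm_num
  norm_num
end

section
/- For the Lomax memory kernel μ(t) = a(1+t)^{-(a+1)} with shape a > 1, the asphericity A₂ = 1 - 4 lim_{τ→∞} α(τ)/β(τ) equals 2(a-1)/(3a-2); in particular A₂ → 0 as a → 1⁺. -/
open Filter intervalIntegral

/-! ### Auxiliary lemmas for the Lomax kernel -/

lemma lomax_contOn (c τ : ℝ) (hτ : 0 ≤ τ) :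
    ContinuousOn (fun s : ℝ => (1+s) ^ c) (Set.uIcc 0 τ) := by
  apply ContinuousOn.rpow_const (continuous_const.add continuous_id).continuousOn
  intro x hx
  rw [Set.uIcc_of_le hτ] at hx
  left; intro h; simp only [Pi.add_apply, id_eq] at h; linarith [hx.1]

lemma lomax_intble (c τ : ℝ) (hτ : 0 ≤ τ) :
    IntervalIntegrable (fun s : ℝ => (1+s) ^ c) MeasureTheory.volume 0 τ :=
  (lomax_contOn c τ hτ).intervalIntegrable

lemma lomax_hasDeriv (c s : ℝ) (hs : 0 ≤ s) :
    HasDerivAt (fun x : ℝ => (1+x) ^ c) (c * (1+s) ^ (c-1)) s := by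
  have h1 : HasDerivAt (fun x : ℝ => 1 + x) 1 s := (hasDerivAt_id s).const_add 1
  have h2 := (Real.hasDerivAt_rpow_const (x := 1+s) (p := c)
    (Or.inl (by intro h; linarith))).comp s h1
  simpa [Function.comp_def] using h2

lemma cumul_lomax (a τ : ℝ) (hτ : 0 ≤ τ) :
    cumul (fun t => a * (1 + t) ^ (-(a + 1))) τ = 1 - (1+τ) ^ (-a) := by
  have key : ∀ s ∈ Set.uIcc (0:ℝ) τ,
      HasDerivAt (fun x : ℝ => -((1+x) ^ (-a))) (a * (1+s) ^ (-(a+1))) s := by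
    intro s hs
    rw [Set.uIcc_of_le hτ] at hs
    have h := (lomax_hasDeriv (-a) s hs.1).neg
    have he : -a - 1 = -(a+1) := by ring
    rw [he] at h
    refine h.congr_deriv ?_
    ring
  have hint : IntervalIntegrable (fun s : ℝ => a * (1+s) ^ (-(a+1)))
      MeasureTheory.volume 0 τ := (lomax_intble (-(a+1)) τ hτ).const_mul a
  rw [cumul, intervalIntegral.integral_eq_sub_of_hasDerivAt key hint]
  simp [Real.one_rpow]
  ring

lemma g1_eq (a : ℝ) (ha : 1 < a) (τ : ℝ) (hτ : 0 ≤ τ) :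
    ∫ s in (0:ℝ)..τ, (1+s) ^ (-a) = (1 - (1+τ) ^ (1-a)) / (a-1) := by
  have ha' : (1:ℝ) - a ≠ 0 := by intro h; linarith
  have ha'' : a - 1 ≠ 0 := by intro h; linarith
  have key : ∀ s ∈ Set.uIcc (0:ℝ) τ,
      HasDerivAt (fun x : ℝ => (1+x) ^ (1-a) / (1-a)) ((1+s) ^ (-a)) s := by
    intro s hs
    rw [Set.uIcc_of_le hτ] at hs
    have h := (lomax_hasDeriv (1-a) s hs.1).div_const (1-a)
    refine h.congr_deriv ?_
    rw [mul_div_cancel_left₀ _ ha']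
    congr 1; ring
  rw [intervalIntegral.integral_eq_sub_of_hasDerivAt key (lomax_intble (-a) τ hτ)]
  norm_num [Real.one_rpow]
  field_simp
  ring

lemma I_eq (a : ℝ) (ha : 1 < a) (τ : ℝ) (hτ : 0 ≤ τ) :
    ∫ s in (0:ℝ)..τ, s * (a * (1+s) ^ (-(a+1))) =
      a / (1-a) * ((1+τ) ^ (1-a) - 1) + ((1+τ) ^ (-a) - 1) := by
  have ha' : (1:ℝ) - a ≠ 0 := by intro h; linarith
  have key : ∀ s ∈ Set.uIcc (0:ℝ) τ,
      HasDerivAt (fun x : ℝ => a/(1-a) * (1+x) ^ (1-a) + (1+x) ^ (-a))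
        (s * (a * (1+s) ^ (-(a+1)))) s := by
    intro s hs
    rw [Set.uIcc_of_le hτ] at hs
    have h := ((lomax_hasDeriv (1-a) s hs.1).const_mul (a/(1-a))).add
      (lomax_hasDeriv (-a) s hs.1)
    refine h.congr_deriv ?_
    have h1 : (0:ℝ) < 1 + s := by linarith [hs.1]
    have e1 : (1+s) ^ (1-a-1) = (1+s) ^ (-(a+1)) * (1+s) := by
      rw [← Real.rpow_add_one (ne_of_gt h1)]; congr 1; ring
    have e2 : (1+s) ^ (-a-1) = (1+s) ^ (-(a+1)) := by congr 1; ring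
    rw [e1, e2]
    field_simp
    ring
  have hint : IntervalIntegrable (fun s : ℝ => s * (a * (1+s) ^ (-(a+1))))
      MeasureTheory.volume 0 τ := by
    apply ContinuousOn.intervalIntegrable
    exact continuousOn_id.mul ((lomax_contOn (-(a+1)) τ hτ).const_smul a)
  rw [intervalIntegral.integral_eq_sub_of_hasDerivAt key hint]
  norm_num [Real.one_rpow]
  ring

lemma g3_eq (a : ℝ) (ha : 1 < a) (τ : ℝ) (hτ : 0 ≤ τ) :
    ∫ s in (0:ℝ)..τ, s * ((1+s) ^ (-a))^2 =
      ((1+τ) ^ (2-2*a) - 1) / (2-2*a) - ((1+τ) ^ (1-2*a) - 1) / (1-2*a) := by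
  have h2 : (2:ℝ) - 2*a ≠ 0 := by intro h; linarith
  have h3 : (1:ℝ) - 2*a ≠ 0 := by intro h; linarith
  have key : ∀ s ∈ Set.uIcc (0:ℝ) τ,
      HasDerivAt (fun x : ℝ => (1+x) ^ (2-2*a) / (2-2*a) - (1+x) ^ (1-2*a) / (1-2*a))
        (s * ((1+s) ^ (-a))^2) s := by
    intro s hs
    rw [Set.uIcc_of_le hτ] at hs
    have h := ((lomax_hasDeriv (2-2*a) s hs.1).div_const (2-2*a)).sub
      ((lomax_hasDeriv (1-2*a) s hs.1).div_const (1-2*a))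
    refine h.congr_deriv ?_
    have h1 : (0:ℝ) < 1 + s := by linarith [hs.1]
    have e0 : ((1+s) ^ (-a))^2 = (1+s) ^ (-(2*a)) := by
      rw [← Real.rpow_natCast ((1+s) ^ (-a)) 2, ← Real.rpow_mul (le_of_lt h1)]
      congr 1; push_cast; ring
    have e1 : (1+s) ^ (2-2*a-1) = (1+s) ^ (-(2*a)) * (1+s) := by
      rw [← Real.rpow_add_one (ne_of_gt h1)]; congr 1; ring
    have e2 : (1+s) ^ (1-2*a-1) = (1+s) ^ (-(2*a)) := by congr 1; ring
    rw [e0, e1, e2]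
    rw [mul_div_cancel_left₀ _ h2, mul_div_cancel_left₀ _ h3]
    ring
  have hint : IntervalIntegrable (fun s : ℝ => s * ((1+s) ^ (-a))^2)
      MeasureTheory.volume 0 τ := by
    apply ContinuousOn.intervalIntegrable
    exact continuousOn_id.mul ((lomax_contOn (-a) τ hτ).pow 2)
  rw [intervalIntegral.integral_eq_sub_of_hasDerivAt key hint]
  norm_num [Real.one_rpow]
  field_simp
  ring

lemma sG_intble (a τ : ℝ) (hτ : 0 ≤ τ) :
    IntervalIntegrable (fun s : ℝ => s * (1+s) ^ (-a)) MeasureTheory.volume 0 τ :=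
  (continuousOn_id.mul (lomax_contOn (-a) τ hτ)).intervalIntegrable

lemma sG2_intble (a τ : ℝ) (hτ : 0 ≤ τ) :
    IntervalIntegrable (fun s : ℝ => s * ((1+s) ^ (-a))^2) MeasureTheory.volume 0 τ :=
  (continuousOn_id.mul ((lomax_contOn (-a) τ hτ).pow 2)).intervalIntegrable

lemma Q_eq (a τ : ℝ) (hτ : 0 ≤ τ) :
    ∫ s in (0:ℝ)..τ, cumul (fun t => a * (1 + t) ^ (-(a + 1))) s
      = τ - ∫ s in (0:ℝ)..τ, (1+s) ^ (-a) := by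
  rw [intervalIntegral.integral_congr (g := fun s => 1 - (1+s) ^ (-a))
    (fun s hs => by
      rw [Set.uIcc_of_le hτ] at hs
      exact cumul_lomax a s hs.1)]
  rw [intervalIntegral.integral_sub intervalIntegrable_const (lomax_intble (-a) τ hτ)]
  simp

lemma big_eq (a τ c : ℝ) (hτ : 0 ≤ τ) :
    ∫ s in (0:ℝ)..τ, ((4 * s + c) * cumul (fun t => a * (1 + t) ^ (-(a + 1))) τ
        - 2 * s * cumul (fun t => a * (1 + t) ^ (-(a + 1))) s)
        * cumul (fun t => a * (1 + t) ^ (-(a + 1))) s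
      = (4 * (1 - (1+τ) ^ (-a)) - 2) * (τ^2/2) + c * (1 - (1+τ) ^ (-a)) * τ
        + (-(c * (1 - (1+τ) ^ (-a)))) * (∫ s in (0:ℝ)..τ, (1+s) ^ (-a))
        + 4 * ((1+τ) ^ (-a)) * (∫ s in (0:ℝ)..τ, s * (1+s) ^ (-a))
        - 2 * (∫ s in (0:ℝ)..τ, s * ((1+s) ^ (-a))^2) := by
  set G : ℝ := (1+τ) ^ (-a) with hG
  have hcongr : Set.EqOn
      (fun s => ((4 * s + c) * cumul (fun t => a * (1 + t) ^ (-(a + 1))) τ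
        - 2 * s * cumul (fun t => a * (1 + t) ^ (-(a + 1))) s)
        * cumul (fun t => a * (1 + t) ^ (-(a + 1))) s)
      (fun s => ((4 * (1 - G) - 2) * s + c * (1 - G))
        + ((-(c * (1 - G))) * (1+s) ^ (-a)
        + (4 * G) * (s * (1+s) ^ (-a))
        - 2 * (s * ((1+s) ^ (-a))^2)))
      (Set.uIcc 0 τ) := by
    intro s hs
    rw [Set.uIcc_of_le hτ] at hs
    simp only [cumul_lomax a τ hτ, cumul_lomax a s hs.1]
    ring
  rw [intervalIntegral.integral_congr hcongr]
  have i1 : IntervalIntegrable (fun s : ℝ => (4 * (1 - G) - 2) * s + c * (1 - G))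
      MeasureTheory.volume 0 τ :=
    Continuous.intervalIntegrable (by continuity) 0 τ
  have i2 := (lomax_intble (-a) τ hτ).const_mul (-(c * (1 - G)))
  have i3 := (sG_intble a τ hτ).const_mul (4 * G)
  have i4 := (sG2_intble a τ hτ).const_mul 2
  rw [intervalIntegral.integral_add i1 ((i2.add i3).sub i4),
    intervalIntegral.integral_sub (i2.add i3) i4,
    intervalIntegral.integral_add i2 i3,
    intervalIntegral.integral_add
      ((by continuity : Continuous fun s : ℝ => (4 * (1 - G) - 2) * s).intervalIntegrable 0 τ)
      intervalIntegrable_const,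
    integral_const_mul, integral_const_mul, integral_const_mul, integral_const_mul,
    integral_id, integral_const, integral_const_mul]
  simp only [smul_eq_mul]
  ring

lemma alpha_eq (a τ : ℝ) (hτ : 0 ≤ τ) :
    alphaFn (fun t => a * (1 + t) ^ (-(a + 1))) τ
      = 1/2 * ((∫ s in (0:ℝ)..τ, s * (a * (1+s) ^ (-(a+1))))^2
          + (∫ s in (0:ℝ)..τ, (1+s) ^ (-a))^2)
        - 1/2 * (τ^2 * ((1+τ) ^ (-a))^2)
        - (1+τ) ^ (-a) * τ * (∫ s in (0:ℝ)..τ, (1+s) ^ (-a))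
        + 4 * ((1+τ) ^ (-a) * (∫ s in (0:ℝ)..τ, s * (1+s) ^ (-a)))
        - 2 * (∫ s in (0:ℝ)..τ, s * ((1+s) ^ (-a))^2) := by
  have hsub : (∫ s in (0:ℝ)..τ, ((4 * s - τ) * cumul (fun t => a * (1 + t) ^ (-(a + 1))) τ
        - 2 * s * cumul (fun t => a * (1 + t) ^ (-(a + 1))) s)
        * cumul (fun t => a * (1 + t) ^ (-(a + 1))) s)
      = ∫ s in (0:ℝ)..τ, ((4 * s + (-τ)) * cumul (fun t => a * (1 + t) ^ (-(a + 1))) τ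
        - 2 * s * cumul (fun t => a * (1 + t) ^ (-(a + 1))) s)
        * cumul (fun t => a * (1 + t) ^ (-(a + 1))) s :=
    intervalIntegral.integral_congr (fun s _ => by ring)
  simp only [alphaFn]
  rw [hsub, big_eq a τ (-τ) hτ, Q_eq a τ hτ, cumul_lomax a τ hτ]
  ring

lemma beta_eq (a τ : ℝ) (hτ : 0 ≤ τ) :
    betaFn (fun t => a * (1 + t) ^ (-(a + 1))) τ
      = 2 * ((∫ s in (0:ℝ)..τ, s * (a * (1+s) ^ (-(a+1))))^2
          + (∫ s in (0:ℝ)..τ, (1+s) ^ (-a))^2)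
        + 6 * (τ^2 * ((1+τ) ^ (-a))^2)
        - 4 * ((1+τ) ^ (-a) * τ * (∫ s in (0:ℝ)..τ, (1+s) ^ (-a)))
        - 16 * ((1+τ) ^ (-a) * (∫ s in (0:ℝ)..τ, s * (1+s) ^ (-a)))
        + 8 * (∫ s in (0:ℝ)..τ, s * ((1+s) ^ (-a))^2) := by
  simp only [betaFn]
  rw [big_eq a τ τ hτ, Q_eq a τ hτ, cumul_lomax a τ hτ]
  ring

lemma rpow_tendsto (c : ℝ) (hc : c < 0) :
    Tendsto (fun τ : ℝ => (1+τ) ^ c) atTop (nhds 0) := by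
  have h := tendsto_rpow_neg_atTop (show (0:ℝ) < -c by linarith)
  have h2 : Tendsto (fun τ : ℝ => 1 + τ) atTop atTop :=
    tendsto_atTop_add_const_left atTop 1 tendsto_id
  have h3 := h.comp h2
  simpa [neg_neg, Function.comp_def] using h3

theorem asphericity_lomax_kernel (a : ℝ) (ha : 1 < a) :
    Tendsto (alphaFn (fun t => a * (1 + t) ^ (-(a + 1)))) atTop
      (nhds (a / ((a - 1) ^ 2 * (2 * a - 1)))) ∧
    Tendsto (betaFn (fun t => a * (1 + t) ^ (-(a + 1)))) atTop
      (nhds (4 * (3 * a - 2) / ((a - 1) ^ 2 * (2 * a - 1)))) ∧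
    Tendsto (fun τ : ℝ =>
        1 - 4 * (alphaFn (fun t => a * (1 + t) ^ (-(a + 1))) τ /
          betaFn (fun t => a * (1 + t) ^ (-(a + 1))) τ))
      atTop (nhds (2 * (a - 1) / (3 * a - 2))) ∧
    Tendsto (fun a : ℝ => 2 * (a - 1) / (3 * a - 2))
      (nhdsWithin 1 (Set.Ioi 1)) (nhds 0) := by
  have ha1 : a - 1 ≠ 0 := by intro h; linarith
  have ha2 : 2*a - 1 ≠ 0 := by intro h; linarith
  have ha3 : 3*a - 2 ≠ 0 := by intro h; linarith
  have ha0 : (1:ℝ) - a ≠ 0 := by intro h; linarith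
  have ha4 : 2*a - 2 ≠ 0 := by intro h; linarith
  -- limit of g1
  have hg1 : Tendsto (fun τ : ℝ => ∫ s in (0:ℝ)..τ, (1+s) ^ (-a)) atTop
      (nhds (1/(a-1))) := by
    have hb : Tendsto (fun τ : ℝ => (1 - (1+τ) ^ (1-a)) / (a-1)) atTop
        (nhds ((1 - 0) / (a-1))) :=
      (tendsto_const_nhds.sub (rpow_tendsto (1-a) (by linarith))).div_const (a-1)
    rw [show ((1:ℝ) - 0) / (a-1) = 1/(a-1) by norm_num] at hb
    exact hb.congr' (by
      filter_upwards [eventually_ge_atTop (0:ℝ)] with τ hτ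
      exact (g1_eq a ha τ hτ).symm)
  -- limit of I
  have hI : Tendsto (fun τ : ℝ => ∫ s in (0:ℝ)..τ, s * (a * (1+s) ^ (-(a+1)))) atTop
      (nhds (1/(a-1))) := by
    have hb : Tendsto (fun τ : ℝ => a / (1-a) * ((1+τ) ^ (1-a) - 1) + ((1+τ) ^ (-a) - 1))
        atTop (nhds (a / (1-a) * (0 - 1) + (0 - 1))) :=
      (((rpow_tendsto (1-a) (by linarith)).sub tendsto_const_nhds).const_mul (a/(1-a))).add
        ((rpow_tendsto (-a) (by linarith)).sub tendsto_const_nhds)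
    rw [show a / (1-a) * ((0:ℝ) - 1) + ((0:ℝ) - 1) = 1/(a-1) by field_simp; ring] at hb
    exact hb.congr' (by
      filter_upwards [eventually_ge_atTop (0:ℝ)] with τ hτ
      exact (I_eq a ha τ hτ).symm)
  -- limit of g3
  have hg3 : Tendsto (fun τ : ℝ => ∫ s in (0:ℝ)..τ, s * ((1+s) ^ (-a))^2) atTop
      (nhds (1/((2*a-2)*(2*a-1)))) := by
    have h2 : (2:ℝ) - 2*a ≠ 0 := by intro h; linarith
    have h3 : (1:ℝ) - 2*a ≠ 0 := by intro h; linarith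
    have hb : Tendsto (fun τ : ℝ => ((1+τ) ^ (2-2*a) - 1) / (2-2*a) - ((1+τ) ^ (1-2*a) - 1) / (1-2*a))
        atTop (nhds ((0 - 1) / (2-2*a) - (0 - 1) / (1-2*a))) :=
      (((rpow_tendsto (2-2*a) (by linarith)).sub tendsto_const_nhds).div_const (2-2*a)).sub
        (((rpow_tendsto (1-2*a) (by linarith)).sub tendsto_const_nhds).div_const (1-2*a))
    rw [show ((0:ℝ) - 1) / (2-2*a) - ((0:ℝ) - 1) / (1-2*a) = 1/((2*a-2)*(2*a-1)) by
      field_simp; ring] at hb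
    exact hb.congr' (by
      filter_upwards [eventually_ge_atTop (0:ℝ)] with τ hτ
      exact (g3_eq a ha τ hτ).symm)
  -- τ * G → 0
  have hτG : Tendsto (fun τ : ℝ => τ * (1+τ) ^ (-a)) atTop (nhds 0) := by
    have hs := (rpow_tendsto (1-a) (by linarith)).sub (rpow_tendsto (-a) (by linarith))
    rw [sub_zero] at hs
    refine hs.congr' ?_
    filter_upwards [eventually_ge_atTop (0:ℝ)] with τ hτ
    have h1 : (0:ℝ) < 1 + τ := by linarith
    have e : (1+τ) ^ (1-a) = (1+τ) ^ (-a) * (1+τ) := by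
      rw [← Real.rpow_add_one (ne_of_gt h1)]; congr 1; ring
    rw [e]; ring
  -- τ² G² → 0
  have hτ2G2 : Tendsto (fun τ : ℝ => τ^2 * ((1+τ) ^ (-a))^2) atTop (nhds 0) := by
    have h := hτG.pow 2
    rw [show ((0:ℝ))^2 = 0 by norm_num] at h
    exact h.congr fun τ => by ring
  -- G * τ * g1 → 0
  have hGτg1 : Tendsto (fun τ : ℝ => (1+τ) ^ (-a) * τ * (∫ s in (0:ℝ)..τ, (1+s) ^ (-a)))
      atTop (nhds 0) := by
    have h := hτG.mul hg1
    rw [zero_mul] at h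
    exact h.congr fun τ => by ring
  -- G * g2 → 0 (squeeze)
  have hGg2 : Tendsto (fun τ : ℝ => (1+τ) ^ (-a) * (∫ s in (0:ℝ)..τ, s * (1+s) ^ (-a)))
      atTop (nhds 0) := by
    apply tendsto_of_tendsto_of_tendsto_of_le_of_le' tendsto_const_nhds hτG
    · filter_upwards [eventually_ge_atTop (0:ℝ)] with τ hτ
      have hg2nn : 0 ≤ ∫ s in (0:ℝ)..τ, s * (1+s) ^ (-a) :=
        intervalIntegral.integral_nonneg hτ fun s hs =>
          mul_nonneg hs.1 (Real.rpow_nonneg (by linarith [hs.1]) _)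
      exact mul_nonneg (Real.rpow_nonneg (by linarith) _) hg2nn
    · filter_upwards [eventually_ge_atTop (0:ℝ)] with τ hτ
      have hG0 : (0:ℝ) ≤ (1+τ) ^ (-a) := Real.rpow_nonneg (by linarith) _
      have hg2le : (∫ s in (0:ℝ)..τ, s * (1+s) ^ (-a)) ≤ τ := by
        have hb : ∀ s ∈ Set.Icc (0:ℝ) τ, s * (1+s) ^ (-a) ≤ 1 := by
          intro s hs
          have h1 : (0:ℝ) < 1 + s := by linarith [hs.1]
          calc s * (1+s) ^ (-a) ≤ (1+s) * (1+s) ^ (-a) :=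
                mul_le_mul_of_nonneg_right (by linarith [hs.1])
                  (Real.rpow_nonneg (le_of_lt h1) _)
            _ = (1+s) ^ (-a) * (1+s) := mul_comm _ _
            _ = (1+s) ^ (-a+1) := (Real.rpow_add_one (ne_of_gt h1) (-a)).symm
            _ ≤ 1 := Real.rpow_le_one_of_one_le_of_nonpos (by linarith [hs.1]) (by linarith)
        have := intervalIntegral.integral_mono_on hτ (sG_intble a τ hτ)
          (_root_.intervalIntegrable_const (c := (1:ℝ))) hb
        simpa using this
      calc (1+τ) ^ (-a) * (∫ s in (0:ℝ)..τ, s * (1+s) ^ (-a))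
          ≤ (1+τ) ^ (-a) * τ := mul_le_mul_of_nonneg_left hg2le hG0
        _ = τ * (1+τ) ^ (-a) := mul_comm _ _
  -- the alpha limit
  have halpha : Tendsto (alphaFn (fun t => a * (1 + t) ^ (-(a + 1)))) atTop
      (nhds (a / ((a - 1) ^ 2 * (2 * a - 1)))) := by
    have comb := ((((((hI.pow 2).add (hg1.pow 2)).const_mul (1/2)).sub
        (hτ2G2.const_mul (1/2))).sub hGτg1).add (hGg2.const_mul 4)).sub
        (hg3.const_mul 2)
    rw [show 1/2 * ((1/(a-1))^2 + (1/(a-1))^2) - 1/2 * 0 - 0 + 4 * 0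
        - 2 * (1/((2*a-2)*(2*a-1))) = a / ((a - 1) ^ 2 * (2 * a - 1)) by
      field_simp; ring] at comb
    exact comb.congr' (by
      filter_upwards [eventually_ge_atTop (0:ℝ)] with τ hτ
      exact (alpha_eq a τ hτ).symm)
  -- the beta limit
  have hbeta : Tendsto (betaFn (fun t => a * (1 + t) ^ (-(a + 1)))) atTop
      (nhds (4 * (3 * a - 2) / ((a - 1) ^ 2 * (2 * a - 1)))) := by
    have comb := ((((((hI.pow 2).add (hg1.pow 2)).const_mul 2).add
        (hτ2G2.const_mul 6)).sub (hGτg1.const_mul 4)).sub (hGg2.const_mul 16)).add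
        (hg3.const_mul 8)
    rw [show 2 * ((1/(a-1))^2 + (1/(a-1))^2) + 6 * 0 - 4 * 0 - 16 * 0
        + 8 * (1/((2*a-2)*(2*a-1))) = 4 * (3 * a - 2) / ((a - 1) ^ 2 * (2 * a - 1)) by
      field_simp; ring] at comb
    exact comb.congr' (by
      filter_upwards [eventually_ge_atTop (0:ℝ)] with τ hτ
      exact (beta_eq a τ hτ).symm)
  refine ⟨halpha, hbeta, ?_, ?_⟩
  · -- the asphericity limit
    have hbne : 4 * (3 * a - 2) / ((a - 1) ^ 2 * (2 * a - 1)) ≠ 0 := by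
      apply ne_of_gt
      apply div_pos (by nlinarith) (by nlinarith)
    have hdiv : Tendsto (fun τ : ℝ => alphaFn (fun t => a * (1 + t) ^ (-(a + 1))) τ /
        betaFn (fun t => a * (1 + t) ^ (-(a + 1))) τ) atTop
        (nhds (a / ((a - 1) ^ 2 * (2 * a - 1)) /
          (4 * (3 * a - 2) / ((a - 1) ^ 2 * (2 * a - 1))))) := halpha.div hbeta hbne
    have h : Tendsto (fun τ : ℝ =>
        1 - 4 * (alphaFn (fun t => a * (1 + t) ^ (-(a + 1))) τ /
          betaFn (fun t => a * (1 + t) ^ (-(a + 1))) τ)) atTop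
        (nhds (1 - 4 * (a / ((a - 1) ^ 2 * (2 * a - 1)) /
          (4 * (3 * a - 2) / ((a - 1) ^ 2 * (2 * a - 1)))))) :=
      tendsto_const_nhds.sub (hdiv.const_mul 4)
    rw [show (1:ℝ) - 4 * (a / ((a - 1) ^ 2 * (2 * a - 1)) /
        (4 * (3 * a - 2) / ((a - 1) ^ 2 * (2 * a - 1)))) = 2 * (a - 1) / (3 * a - 2) by
      rw [div_div_div_cancel_right₀]
      · rw [mul_div_assoc', mul_div_mul_left _ _ (four_ne_zero), eq_div_iff ha3, sub_mul,
          div_mul_cancel₀ _ ha3]; ring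
      · exact mul_ne_zero (pow_ne_zero 2 ha1) ha2] at h
    exact h
  · -- continuity at a = 1
    have hc : ContinuousAt (fun a : ℝ => 2 * (a - 1) / (3 * a - 2)) 1 := by
      apply ContinuousAt.div (by fun_prop) (by fun_prop)
      norm_num
    have h2 := hc.tendsto.mono_left (nhdsWithin_le_nhds (s := Set.Ioi (1:ℝ)))
    simpa using h2
end

section
/- For the stretched exponential kernel μ(t) = (1/2)e^{-√t}, the asphericity A₂ = 1 - 4·(21/204) = 10/17, where lim_{τ→∞} α(τ) = 21 and lim_{τ→∞} β(τ) = 204. -/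
open Filter intervalIntegral

namespace AsphAux

/-- exp(-x) -/
noncomputable def Ee (x : ℝ) : ℝ := Real.exp (-x)

/-- generic degree-5 polynomial -/
noncomputable def poly5 (a b c d e f x : ℝ) : ℝ :=
  a + b*x + c*x^2 + d*x^3 + e*x^4 + f*x^5

lemma hEe (x : ℝ) : HasDerivAt Ee (-Ee x) x := by
  have h := (hasDerivAt_neg' x).exp
  exact h.congr_deriv (by simp [Ee])

lemma hPoly (a b c d e f x : ℝ) :
    HasDerivAt (poly5 a b c d e f)
      (b + 2*c*x + 3*d*x^2 + 4*e*x^3 + 5*f*x^4) x := by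
  have h : HasDerivAt (fun x : ℝ => a + b*x + c*x^2 + d*x^3 + e*x^4 + f*x^5)
      (0 + b*1 + c*(2*x^1) + d*(3*x^2) + e*(4*x^3) + f*(5*x^4)) x := by
    exact ((((((hasDerivAt_const x a).add ((hasDerivAt_id' (x := x)).const_mul b)).add
      ((hasDerivAt_pow 2 x).const_mul c)).add
      ((hasDerivAt_pow 3 x).const_mul d)).add
      ((hasDerivAt_pow 4 x).const_mul e)).add
      ((hasDerivAt_pow 5 x).const_mul f)).congr_deriv (by push_cast; ring)
  exact h.congr_deriv (by ring)

/-- closed form of `M` as a function of `x = √t` -/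
noncomputable def McX (x : ℝ) : ℝ := 1 - poly5 1 1 0 0 0 0 x * Ee x

noncomputable def F1 (x : ℝ) : ℝ := 6 - poly5 6 6 3 1 0 0 x * Ee x

noncomputable def F2 (x : ℝ) : ℝ := x^2 - 6 + poly5 6 6 2 0 0 0 x * Ee x

noncomputable def F3 (x : ℝ) : ℝ := x^4/2 - 60 + poly5 60 60 30 10 2 0 x * Ee x

noncomputable def F5 (x : ℝ) : ℝ := x^4/2 - 225/2 + poly5 120 120 60 20 4 0 x * Ee x
  - poly5 (15/2) 15 15 10 (9/2) 1 x * (Ee x)^2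

lemma hMcX (x : ℝ) : HasDerivAt McX (x * Ee x) x := by
  have h := (hasDerivAt_const x (1:ℝ)).sub ((hPoly 1 1 0 0 0 0 x).mul (hEe x))
  refine h.congr_deriv ?_
  simp only [poly5]; ring

lemma hF1 (x : ℝ) : HasDerivAt F1 (x^3 * Ee x) x := by
  have h := (hasDerivAt_const x (6:ℝ)).sub ((hPoly 6 6 3 1 0 0 x).mul (hEe x))
  refine h.congr_deriv ?_
  simp only [poly5]; ring

lemma hF2 (x : ℝ) : HasDerivAt F2 (2*x*McX x) x := by
  have h := (((hasDerivAt_pow 2 x).sub_const 6).add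
    ((hPoly 6 6 2 0 0 0 x).mul (hEe x)))
  refine h.congr_deriv ?_
  simp only [poly5, McX]; push_cast; ring

lemma hF3 (x : ℝ) : HasDerivAt F3 (2*x^3*McX x) x := by
  have h := ((((hasDerivAt_pow 4 x).div_const 2).sub_const 60).add
    ((hPoly 60 60 30 10 2 0 x).mul (hEe x)))
  refine h.congr_deriv ?_
  simp only [poly5, McX]; push_cast; ring

lemma hF5 (x : ℝ) : HasDerivAt F5 (2*x^3*(McX x)^2) x := by
  have h := (((((hasDerivAt_pow 4 x).div_const 2).sub_const (225/2)).add
    ((hPoly 120 120 60 20 4 0 x).mul (hEe x))).sub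
    ((hPoly (15/2) 15 15 10 (9/2) 1 x).mul ((hEe x).pow 2)))
  refine h.congr_deriv ?_
  simp only [poly5, McX, Pi.pow_apply]; push_cast; ring

lemma contEe : Continuous Ee := by unfold Ee; fun_prop

lemma contPoly (a b c d e f : ℝ) : Continuous (poly5 a b c d e f) := by
  unfold poly5; fun_prop

lemma contMcX : Continuous McX := by
  unfold McX; exact (continuous_const.sub ((contPoly _ _ _ _ _ _).mul contEe))

lemma contF1 : Continuous F1 := by
  unfold F1; exact (continuous_const.sub ((contPoly _ _ _ _ _ _).mul contEe))

lemma contF2 : Continuous F2 := by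
  unfold F2
  exact (((continuous_pow 2).sub continuous_const).add ((contPoly _ _ _ _ _ _).mul contEe))

lemma contF3 : Continuous F3 := by
  unfold F3
  exact ((((continuous_pow 4).div_const 2).sub continuous_const).add
    ((contPoly _ _ _ _ _ _).mul contEe))

lemma contF5 : Continuous F5 := by
  unfold F5
  exact (((((continuous_pow 4).div_const 2).sub continuous_const).add
    ((contPoly _ _ _ _ _ _).mul contEe)).sub
    ((contPoly _ _ _ _ _ _).mul (contEe.pow 2)))

/-- generic FTC for integrands of the form `g t = D(√t)/(2√t)`. -/
lemma integral_comp_sqrt {τ : ℝ} (hτ : 0 ≤ τ) {g F D : ℝ → ℝ}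
    (hF : ∀ x, HasDerivAt F (D x) x) (hFc : Continuous F) (hg : Continuous g)
    (key : ∀ t : ℝ, 0 < t → D (Real.sqrt t) * (1 / (2 * Real.sqrt t)) = g t) :
    ∫ s in (0:ℝ)..τ, g s = F (Real.sqrt τ) - F 0 := by
  have hderiv : ∀ t ∈ Set.Ioo (0:ℝ) τ, HasDerivAt (fun t => F (Real.sqrt t)) (g t) t := by
    intro t ht
    have hcomp : HasDerivAt (fun t => F (Real.sqrt t))
        (D (Real.sqrt t) * (1 / (2 * Real.sqrt t))) t := by
      have := (hF (Real.sqrt t)).comp t (Real.hasDerivAt_sqrt ht.1.ne')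
      exact this
    rw [← key t ht.1]; exact hcomp
  have h := intervalIntegral.integral_eq_sub_of_hasDerivAt_of_le hτ
    ((hFc.comp Real.continuous_sqrt).continuousOn)
    hderiv (hg.intervalIntegrable 0 τ)
  simpa [Real.sqrt_zero] using h

lemma contMu : Continuous (fun t : ℝ => (1/2) * Real.exp (-Real.sqrt t)) := by fun_prop

lemma cumul_eq {t : ℝ} (ht : 0 ≤ t) :
    cumul (fun t => (1/2) * Real.exp (-Real.sqrt t)) t = McX (Real.sqrt t) := by
  have h := integral_comp_sqrt ht (g := fun t : ℝ => (1/2) * Real.exp (-Real.sqrt t))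
    hMcX contMcX contMu ?_
  · rw [cumul, h]
    simp [McX, poly5, Ee]
  · intro t ht
    have hx : Real.sqrt t ≠ 0 := (Real.sqrt_pos.2 ht).ne'
    simp only [McX, poly5, Ee]
    field_simp

lemma int1 {τ : ℝ} (hτ : 0 ≤ τ) :
    (∫ s in (0:ℝ)..τ, s * ((1/2) * Real.exp (-Real.sqrt s))) = F1 (Real.sqrt τ) := by
  have h := integral_comp_sqrt hτ (g := fun s : ℝ => s * ((1/2) * Real.exp (-Real.sqrt s)))
    hF1 contF1 (by fun_prop) ?_
  · rw [h]; simp [F1, poly5, Ee]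
  · intro t ht
    have hx : Real.sqrt t ≠ 0 := (Real.sqrt_pos.2 ht).ne'
    set x := Real.sqrt t with hxd
    have hsq : x ^ 2 = t := Real.sq_sqrt ht.le
    rw [← hsq]
    simp only [Ee]
    field_simp

lemma int2 {τ : ℝ} (hτ : 0 ≤ τ) :
    (∫ s in (0:ℝ)..τ, cumul (fun t => (1/2) * Real.exp (-Real.sqrt t)) s)
      = F2 (Real.sqrt τ) := by
  rw [intervalIntegral.integral_congr (g := fun s => McX (Real.sqrt s))
    (fun s hs => by
      rw [Set.uIcc_of_le hτ] at hs
      exact cumul_eq hs.1)]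
  have h := integral_comp_sqrt hτ (g := fun s : ℝ => McX (Real.sqrt s))
    hF2 contF2 (contMcX.comp Real.continuous_sqrt) ?_
  · rw [h]; simp [F2, poly5, Ee]
  · intro t ht
    have hx : Real.sqrt t ≠ 0 := (Real.sqrt_pos.2 ht).ne'
    simp only [McX, poly5, Ee]
    field_simp

lemma int_inner {τ : ℝ} (hτ : 0 ≤ τ) (σ : ℝ) :
    (∫ s in (0:ℝ)..τ, ((4 * s + σ * τ) * cumul (fun t => (1/2) * Real.exp (-Real.sqrt t)) τ
        - 2 * s * cumul (fun t => (1/2) * Real.exp (-Real.sqrt t)) s)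
        * cumul (fun t => (1/2) * Real.exp (-Real.sqrt t)) s)
      = 4 * McX (Real.sqrt τ) * F3 (Real.sqrt τ)
        + σ * τ * McX (Real.sqrt τ) * F2 (Real.sqrt τ) - 2 * F5 (Real.sqrt τ) := by
  set c := McX (Real.sqrt τ) with hc
  rw [intervalIntegral.integral_congr
    (g := fun s => ((4 * s + σ * τ) * c - 2 * s * McX (Real.sqrt s)) * McX (Real.sqrt s))
    (fun s hs => by
      rw [Set.uIcc_of_le hτ] at hs
      rw [cumul_eq hs.1, cumul_eq hτ])]
  have hF : ∀ x, HasDerivAt (fun x => 4*c*F3 x + σ*τ*c*F2 x - 2*F5 x)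
      (4*c*(2*x^3*McX x) + σ*τ*c*(2*x*McX x) - 2*(2*x^3*(McX x)^2)) x := fun x =>
    (((hF3 x).const_mul (4*c)).add ((hF2 x).const_mul (σ*τ*c))).sub ((hF5 x).const_mul 2)
  have hFc : Continuous (fun x => 4*c*F3 x + σ*τ*c*F2 x - 2*F5 x) :=
    ((continuous_const.mul contF3).add (continuous_const.mul contF2)).sub
      (continuous_const.mul contF5)
  have hg : Continuous (fun s : ℝ =>
      ((4 * s + σ * τ) * c - 2 * s * McX (Real.sqrt s)) * McX (Real.sqrt s)) := by
    have := contMcX.comp Real.continuous_sqrt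
    fun_prop
  have h := integral_comp_sqrt hτ hF hFc hg ?_
  · rw [h]
    simp only [F2, F3, F5, poly5, Ee]
    norm_num [Real.exp_zero]
  · intro t ht
    have hx : Real.sqrt t ≠ 0 := (Real.sqrt_pos.2 ht).ne'
    set x := Real.sqrt t with hxd
    have hsq : x ^ 2 = t := Real.sq_sqrt ht.le
    rw [← hsq]
    field_simp

lemma alpha_closed {τ : ℝ} (hτ : 0 ≤ τ) :
    alphaFn (fun t => (1/2) * Real.exp (-Real.sqrt t)) τ
      = 21 + (168 + 168*Real.sqrt τ - 36*(Real.sqrt τ)^2 - 12*(Real.sqrt τ)^3) * Ee (Real.sqrt τ)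
        + (-189 - 378*Real.sqrt τ - 258*(Real.sqrt τ)^2 - 92*(Real.sqrt τ)^3
            - 19*(Real.sqrt τ)^4 - 2*(Real.sqrt τ)^5) * (Ee (Real.sqrt τ))^2 := by
  have hinner := int_inner hτ (-1)
  have hrw : ∀ s : ℝ, (4 * s + (-1:ℝ) * τ) = (4 * s - τ) := fun s => by ring
  rw [alphaFn]
  rw [show (∫ s in (0:ℝ)..τ, ((4 * s - τ) * cumul (fun t => (1/2) * Real.exp (-Real.sqrt t)) τ
        - 2 * s * cumul (fun t => (1/2) * Real.exp (-Real.sqrt t)) s)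
        * cumul (fun t => (1/2) * Real.exp (-Real.sqrt t)) s)
      = 4 * McX (Real.sqrt τ) * F3 (Real.sqrt τ)
        + (-1) * τ * McX (Real.sqrt τ) * F2 (Real.sqrt τ) - 2 * F5 (Real.sqrt τ) from by
    rw [← hinner]
    apply intervalIntegral.integral_congr
    intro s _
    simp only [hrw]]
  rw [int1 hτ, int2 hτ, cumul_eq hτ]
  set x := Real.sqrt τ with hxd
  have hsq : x ^ 2 = τ := Real.sq_sqrt hτ
  rw [← hsq]
  simp only [F1, F2, F3, F5, McX, poly5]
  ring

lemma beta_closed {τ : ℝ} (hτ : 0 ≤ τ) :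
    betaFn (fun t => (1/2) * Real.exp (-Real.sqrt t)) τ
      = 204 + (-1248 - 1248*Real.sqrt τ - 144*(Real.sqrt τ)^2 - 48*(Real.sqrt τ)^3)
            * Ee (Real.sqrt τ)
        + (1044 + 2088*Real.sqrt τ + 1608*(Real.sqrt τ)^2 + 752*(Real.sqrt τ)^3
            + 244*(Real.sqrt τ)^4 + 56*(Real.sqrt τ)^5 + 8*(Real.sqrt τ)^6)
            * (Ee (Real.sqrt τ))^2 := by
  have hinner := int_inner hτ 1
  have hrw : ∀ s : ℝ, (4 * s + (1:ℝ) * τ) = (4 * s + τ) := fun s => by ring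
  rw [betaFn]
  rw [show (∫ s in (0:ℝ)..τ, ((4 * s + τ) * cumul (fun t => (1/2) * Real.exp (-Real.sqrt t)) τ
        - 2 * s * cumul (fun t => (1/2) * Real.exp (-Real.sqrt t)) s)
        * cumul (fun t => (1/2) * Real.exp (-Real.sqrt t)) s)
      = 4 * McX (Real.sqrt τ) * F3 (Real.sqrt τ)
        + 1 * τ * McX (Real.sqrt τ) * F2 (Real.sqrt τ) - 2 * F5 (Real.sqrt τ) from by
    rw [← hinner]
    apply intervalIntegral.integral_congr
    intro s _
    simp only [hrw]]
  rw [int1 hτ, int2 hτ, cumul_eq hτ]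
  set x := Real.sqrt τ with hxd
  have hsq : x ^ 2 = τ := Real.sq_sqrt hτ
  rw [← hsq]
  simp only [F1, F2, F3, F5, McX, poly5]
  ring

lemma tendsto_sqrt_atTop : Tendsto Real.sqrt atTop atTop :=
  tendsto_atTop_atTop.2 fun b => ⟨b^2, fun _ hx => Real.le_sqrt_of_sq_le hx⟩

lemma base (n : ℕ) : Tendsto (fun x : ℝ => x^n * Ee x) atTop (nhds 0) := by
  simpa [Ee] using Real.tendsto_pow_mul_exp_neg_atTop_nhds_zero n

lemma e0 : Tendsto Ee atTop (nhds 0) := by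
  unfold Ee
  exact Real.tendsto_exp_neg_atTop_nhds_zero

lemma poly_exp_zero (a b c d e f g : ℝ) :
    Tendsto (fun x : ℝ => (a + b*x + c*x^2 + d*x^3 + e*x^4 + f*x^5 + g*x^6) * Ee x)
      atTop (nhds 0) := by
  have h : Tendsto (fun x : ℝ => a*(x^0*Ee x) + b*(x^1*Ee x) + c*(x^2*Ee x)
      + d*(x^3*Ee x) + e*(x^4*Ee x) + f*(x^5*Ee x) + g*(x^6*Ee x)) atTop
      (nhds (a*0 + b*0 + c*0 + d*0 + e*0 + f*0 + g*0)) :=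
    (((((((base 0).const_mul a).add ((base 1).const_mul b)).add
      ((base 2).const_mul c)).add ((base 3).const_mul d)).add
      ((base 4).const_mul e)).add ((base 5).const_mul f)).add ((base 6).const_mul g)
  have hval : (a*0 + b*0 + c*0 + d*0 + e*0 + f*0 + g*0 : ℝ) = 0 := by ring
  rw [hval] at h
  exact h.congr (fun x => by ring)

lemma tendstoA : Tendsto (fun x : ℝ =>
    21 + (168 + 168*x - 36*x^2 - 12*x^3) * Ee x
      + (-189 - 378*x - 258*x^2 - 92*x^3 - 19*x^4 - 2*x^5) * (Ee x)^2)
    atTop (nhds 21) := by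
  have h1 := poly_exp_zero 168 168 (-36) (-12) 0 0 0
  have h2 := (poly_exp_zero (-189) (-378) (-258) (-92) (-19) (-2) 0).mul e0
  have h := (tendsto_const_nhds (x := (21:ℝ))).add (h1.add h2)
  have hval : (21:ℝ) + (0 + 0*0) = 21 := by norm_num
  rw [hval] at h
  exact h.congr (fun x => by ring)

lemma tendstoB : Tendsto (fun x : ℝ =>
    204 + (-1248 - 1248*x - 144*x^2 - 48*x^3) * Ee x
      + (1044 + 2088*x + 1608*x^2 + 752*x^3 + 244*x^4 + 56*x^5 + 8*x^6) * (Ee x)^2)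
    atTop (nhds 204) := by
  have h1 := poly_exp_zero (-1248) (-1248) (-144) (-48) 0 0 0
  have h2 := (poly_exp_zero 1044 2088 1608 752 244 56 8).mul e0
  have h := (tendsto_const_nhds (x := (204:ℝ))).add (h1.add h2)
  have hval : (204:ℝ) + (0 + 0*0) = 204 := by norm_num
  rw [hval] at h
  exact h.congr (fun x => by ring)

lemma tendsto_alpha :
    Tendsto (alphaFn (fun t => (1/2) * Real.exp (-Real.sqrt t))) atTop (nhds 21) := by
  have h := tendstoA.comp tendsto_sqrt_atTop
  refine h.congr' ?_
  filter_upwards [eventually_ge_atTop (0:ℝ)] with τ hτ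
  rw [Function.comp_apply, ← alpha_closed hτ]

lemma tendsto_beta :
    Tendsto (betaFn (fun t => (1/2) * Real.exp (-Real.sqrt t))) atTop (nhds 204) := by
  have h := tendstoB.comp tendsto_sqrt_atTop
  refine h.congr' ?_
  filter_upwards [eventually_ge_atTop (0:ℝ)] with τ hτ
  rw [Function.comp_apply, ← beta_closed hτ]

end AsphAux

theorem asphericity_stretched_exponential_half :
    Tendsto (alphaFn (fun t => (1/2) * Real.exp (-Real.sqrt t))) atTop (nhds 21) ∧
    Tendsto (betaFn (fun t => (1/2) * Real.exp (-Real.sqrt t))) atTop (nhds 204) ∧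
    Tendsto (fun τ : ℝ =>
        1 - 4 * (alphaFn (fun t => (1/2) * Real.exp (-Real.sqrt t)) τ /
          betaFn (fun t => (1/2) * Real.exp (-Real.sqrt t)) τ))
      atTop (nhds (10 / 17)) := by
  refine ⟨AsphAux.tendsto_alpha, AsphAux.tendsto_beta, ?_⟩
  have h := (tendsto_const_nhds (x := (1:ℝ))).sub
    (((AsphAux.tendsto_alpha.div AsphAux.tendsto_beta (by norm_num)).const_mul 4))
  have : (1:ℝ) - 4 * (21/204) = 10/17 := by norm_num
  rw [this] at h
  exact h
end
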